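/- arXiv:1501.07459 — 8 statements merged into one kernel-verified Lean document; each statement's English description precedes it below -/
import Mathlib

section
/- For any x = (x_1, x') in ℝ^n with |x'| ≥ 1, the periodic kernel K(x) = Σ_{k∈ℤ} |x + k e_1|^{-(n+s)} satisfies K(x) ≤ C |x'|^{1-n-s} for some constant C > 0 depending only on n and s. -/
open MeasureTheory Set
open scoped ENNReal Classical

noncomputable section

abbrev V (d : ℕ) := ℝ × EuclideanSpace ℝ (Fin d)

/-- Euclidean norm on `ℝ × ℝ^{d}`. -/
def eNorm {d : ℕ} (x : V d) : ℝ := Real.sqrt (x.1 ^ 2 + ‖x.2‖ ^ 2)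

/-- The kernel `|x|^{-(n+s)}` (with value `∞` at the origin). -/
def ker (n : ℕ) (s : ℝ) {d : ℕ} (x : V d) : ℝ≥0∞ :=
  (ENNReal.ofReal (eNorm x)) ^ (-((n : ℝ) + s))

/-- The periodic kernel `K(x) = ∑_{k ∈ ℤ} |x + k e₁|^{-(n+s)}`. -/
def Kper (n : ℕ) (s : ℝ) {d : ℕ} (x : V d) : ℝ≥0∞ :=
  ∑' k : ℤ, ker n s (x.1 + (k : ℝ), x.2)

/-- The slab `S = [-1/2,1/2] × ℝ^{n-1}`. -/
def slab (d : ℕ) : Set (V d) := {x | x.1 ∈ Icc (-(1:ℝ)/2) (1/2)}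

/-- The periodic nonlocal perimeter `P_S`. -/
def PS (n : ℕ) (s : ℝ) {d : ℕ} (F : Set (V d)) : ℝ≥0∞ :=
  ∫⁻ x in F ∩ slab d, ∫⁻ y in slab d \ F, Kper n s (x - y)

/-- The fractional perimeter `Per_s`. -/
def Pers (n : ℕ) (s : ℝ) {d : ℕ} (F : Set (V d)) : ℝ≥0∞ :=
  ∫⁻ x in F, ∫⁻ y in Fᶜ, ker n s (x - y)

/-- Horizontal translation `E + τ e₁`. -/
def htrans {d : ℕ} (τ : ℝ) (E : Set (V d)) : Set (V d) :=
  (fun p : V d => (p.1 + τ, p.2)) '' E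

/-- Periodic extension `F_per = ⋃_{k ∈ ℤ} (F + k e₁)`. -/
def perext {d : ℕ} (F : Set (V d)) : Set (V d) := ⋃ k : ℤ, htrans (k : ℝ) F

/-- The boundary cross term `Π_S(F)`. -/
def PiS (n : ℕ) (s : ℝ) {d : ℕ} (F : Set (V d)) : ℝ≥0∞ :=
  ∫⁻ x in F ∩ {x : V d | x.1 ∈ Icc (1/4 : ℝ) (1/2)},
    ∫⁻ y in htrans (1:ℝ) F ∩ {y : V d | y.1 ∈ Icc (1/2 : ℝ) (3/4)}, ker n s (x - y)

/-- The class `𝒦` of cylindrically symmetric, horizontally even and decreasing subsets of `S`. -/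
def inK (n : ℕ) (F : Set (V (n-1))) : Prop :=
  ∃ f : ℝ → ℝ≥0∞, (∀ x : ℝ, f (-x) = f x) ∧ AntitoneOn f (Icc 0 (1/2)) ∧
    F = {x : V (n-1) | x.1 ∈ Icc (-(1:ℝ)/2) (1/2) ∧ ENNReal.ofReal ‖x.2‖ ≤ f x.1}

/-- Euclidean ball in `ℝ × ℝ^{d}`. -/
def eball {d : ℕ} (c : V d) (r : ℝ) : Set (V d) := {x | eNorm (x - c) ≤ r}

/-- Fraenkel asymmetry. -/
def fDef {d : ℕ} (E : Set (V d)) : ℝ :=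
  sInf {t : ℝ | ∃ (c : V d) (r : ℝ), 0 < r ∧ volume (eball c r) = volume E ∧
    t = (volume (symmDiff E (eball c r))).toReal / (volume E).toReal}

lemma tail_summable {β R : ℝ} (hβ : 1 < β) (hR : 1 ≤ R) :
    Summable (fun j : ℕ => (R + j) ^ (-β)) := by
  have h1 : Summable (fun j : ℕ => ((j : ℝ) + 1) ^ (-β)) := by
    have := (summable_nat_add_iff (f := fun j : ℕ => (j : ℝ) ^ (-β)) 1).mpr
      (Real.summable_nat_rpow.mpr (by linarith))
    simpa [Nat.cast_add] using this
  refine Summable.of_nonneg_of_le (fun j => Real.rpow_nonneg (by positivity) _) (fun j => ?_) h1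
  exact Real.rpow_le_rpow_of_nonpos (by positivity) (by linarith) (by linarith)

lemma tail_bound {β R : ℝ} (hβ : 1 < β) (hR : 1 ≤ R) :
    ∑' j : ℕ, (R + j) ^ (-β) ≤ (1 + (β - 1)⁻¹) * R ^ (1 - β) := by
  have hR0 : (0:ℝ) < R := by linarith
  have hsum := tail_summable hβ hR
  rw [Summable.tsum_eq_zero_add hsum]
  have h0 : (R + (0:ℕ)) ^ (-β) ≤ R ^ (1 - β) := by
    simp only [Nat.cast_zero, add_zero]
    exact Real.rpow_le_rpow_of_exponent_le hR (by linarith)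
  have htail : (∑' j : ℕ, (R + (j + 1 : ℕ)) ^ (-β)) ≤ (β - 1)⁻¹ * R ^ (1 - β) := by
    apply Real.tsum_le_of_sum_range_le (fun j => Real.rpow_nonneg (by positivity) _)
    intro N
    have hanti : AntitoneOn (fun x : ℝ => x ^ (-β)) (Icc R (R + N)) :=
      (Real.antitoneOn_rpow_Ioi_of_exponent_nonpos (by linarith)).mono
        (fun y hy => lt_of_lt_of_le hR0 hy.1)
    have hsl := hanti.sum_le_integral
    have hint : ∫ x in R..(R + N), x ^ (-β)
        = ((R + N) ^ (-β + 1) - R ^ (-β + 1)) / (-β + 1) := by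
      apply integral_rpow
      right
      constructor
      · intro h; linarith
      · rw [Set.uIcc_of_le (le_add_of_nonneg_right (Nat.cast_nonneg N))]
        intro h
        exact absurd h.1 (by linarith)
    calc ∑ i ∈ Finset.range N, (R + (i + 1 : ℕ)) ^ (-β)
        ≤ ∫ x in R..(R + N), x ^ (-β) := hsl
      _ = ((R + N) ^ (-β + 1) - R ^ (-β + 1)) / (-β + 1) := hint
      _ = (R ^ (1 - β) - (R + N) ^ (1 - β)) / (β - 1) := by
          rw [show (-β + 1 : ℝ) = 1 - β by ring]
          rw [div_eq_div_iff (by linarith) (by linarith)]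
          ring
      _ ≤ R ^ (1 - β) / (β - 1) := by
          have hnn := Real.rpow_nonneg (show (0:ℝ) ≤ R + N by positivity) (1 - β)
          gcongr <;> linarith
      _ = (β - 1)⁻¹ * R ^ (1 - β) := by rw [div_eq_inv_mul]
  calc (R + (0:ℕ)) ^ (-β) + ∑' j : ℕ, (R + (j + 1 : ℕ)) ^ (-β)
      ≤ R ^ (1 - β) + (β - 1)⁻¹ * R ^ (1 - β) := add_le_add h0 htail
    _ = (1 + (β - 1)⁻¹) * R ^ (1 - β) := by ring

lemma ker_le_of_abs {n : ℕ} {s : ℝ} {d : ℕ} (hns : 0 < (n : ℝ) + s)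
    (x2 : EuclideanSpace ℝ (Fin d)) (hR : 1 ≤ ‖x2‖)
    {u a : ℝ} (ha : 0 ≤ a) (hu : a ≤ |u|) :
    ker n s (u, x2) ≤ ENNReal.ofReal (((‖x2‖ + a) / 2) ^ (-((n:ℝ) + s))) := by
  set R := ‖x2‖ with hRdef
  have hR0 : (0:ℝ) < R := by linarith
  have hpos : (0:ℝ) < u ^ 2 + R ^ 2 := by positivity
  have hEN : eNorm (u, x2) = Real.sqrt (u ^ 2 + R ^ 2) := rfl
  have hENpos : 0 < eNorm (u, x2) := by rw [hEN]; exact Real.sqrt_pos.mpr hpos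
  have h1 : R ≤ eNorm (u, x2) := by
    rw [hEN, show R = ‖x2‖ from rfl]
    exact (Real.le_sqrt (by linarith) hpos.le).mpr (by nlinarith [sq_nonneg u])
  have h2 : a ≤ eNorm (u, x2) := by
    rw [hEN]
    refine le_trans hu ?_
    exact (Real.le_sqrt (abs_nonneg u) hpos.le).mpr (by nlinarith [sq_abs u])
  have hkey : (R + a) / 2 ≤ eNorm (u, x2) := by linarith
  have : ker n s (u, x2) = ENNReal.ofReal ((eNorm (u, x2)) ^ (-((n:ℝ) + s))) := by
    rw [ker, ENNReal.ofReal_rpow_of_pos hENpos]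
  rw [this]
  apply ENNReal.ofReal_le_ofReal
  exact Real.rpow_le_rpow_of_nonpos (by positivity) hkey (by linarith)

theorem kernel_decay (n : ℕ) (hn : 2 ≤ n) (s : ℝ) (hs : s ∈ Set.Ioo (0:ℝ) 1) :
    ∃ C > (0:ℝ), ∀ x : V (n-1), 1 ≤ ‖x.2‖ →
      Kper n s x ≤ ENNReal.ofReal (C * ‖x.2‖ ^ (1 - (n:ℝ) - s)) := by
  set β : ℝ := (n : ℝ) + s with hβdef
  have hn2 : (2:ℝ) ≤ (n:ℝ) := by exact_mod_cast hn
  have hβ : 1 < β := by simp only [hβdef]; linarith [hs.1]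
  have hβ0 : 0 < β := by linarith
  refine ⟨2 ^ (β + 1) * (1 + (β - 1)⁻¹), mul_pos (Real.rpow_pos_of_pos (by norm_num) _)
    (by have : (0:ℝ) ≤ (β - 1)⁻¹ := inv_nonneg.mpr (by linarith); linarith), ?_⟩
  intro x hR
  set R : ℝ := ‖x.2‖ with hRdef
  have hR0 : (0:ℝ) < R := by linarith
  set t : ℝ := Int.fract x.1 with htdef
  have ht0 : 0 ≤ t := Int.fract_nonneg x.1
  have ht1 : t < 1 := Int.fract_lt_one x.1
  -- Step 1: periodize
  have hshift : Kper n s x = ∑' k : ℤ, ker n s (t + (k : ℝ), x.2) := by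
    rw [Kper]
    rw [← (Equiv.addRight (⌊x.1⌋ : ℤ)).tsum_eq (fun k : ℤ => ker n s (t + (k : ℝ), x.2))]
    apply tsum_congr
    intro k
    congr 2
    simp only [Equiv.coe_addRight, Int.cast_add]
    rw [htdef, Int.fract]
    ring
  rw [hshift]
  -- Step 2: split into nonnegative and negative indices
  rw [tsum_of_nat_of_neg_add_one ENNReal.summable ENNReal.summable]
  -- per-term bounds
  have hb1 : ∀ j : ℕ, ker n s (t + ((j : ℤ) : ℝ), x.2)
      ≤ ENNReal.ofReal (((R + j) / 2) ^ (-β)) := by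
    intro j
    push_cast
    exact ker_le_of_abs (by linarith) x.2 hR (Nat.cast_nonneg j)
      (by rw [abs_of_nonneg (by linarith [(Nat.cast_nonneg j : (0:ℝ) ≤ j)])]; linarith)
  have hb2 : ∀ j : ℕ, ker n s (t + ((-(j + 1) : ℤ) : ℝ), x.2)
      ≤ ENNReal.ofReal (((R + j) / 2) ^ (-β)) := by
    intro j
    push_cast
    refine ker_le_of_abs (by linarith) x.2 hR (Nat.cast_nonneg j) ?_
    rw [abs_of_nonpos (by push_cast; linarith)]
    push_cast
    linarith
  have hhalf : ∀ j : ℕ, ((R + j) / 2) ^ (-β) = 2 ^ β * (R + j) ^ (-β) := by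
    intro j
    rw [Real.div_rpow (by positivity) (by norm_num),
      Real.rpow_neg (by norm_num : (0:ℝ) ≤ 2), div_eq_mul_inv, inv_inv]
    ring
  have hsum2 : Summable (fun j : ℕ => ((R + j) / 2) ^ (-β)) := by
    simp only [hhalf]
    exact (tail_summable hβ hR).mul_left _
  have hS : (∑' j : ℕ, ENNReal.ofReal (((R + j) / 2) ^ (-β)))
      ≤ ENNReal.ofReal (2 ^ β * ((1 + (β - 1)⁻¹) * R ^ (1 - β))) := by
    rw [← ENNReal.ofReal_tsum_of_nonneg (fun j => Real.rpow_nonneg (by positivity) _) hsum2]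
    apply ENNReal.ofReal_le_ofReal
    calc ∑' j : ℕ, ((R + j) / 2) ^ (-β)
        = 2 ^ β * ∑' j : ℕ, (R + j) ^ (-β) := by
          simp only [hhalf]; rw [tsum_mul_left]
      _ ≤ 2 ^ β * ((1 + (β - 1)⁻¹) * R ^ (1 - β)) := by
          have := tail_bound hβ hR
          have h2 : (0:ℝ) ≤ (2:ℝ) ^ β := Real.rpow_nonneg (by norm_num) _
          exact mul_le_mul_of_nonneg_left this h2
  calc (∑' j : ℕ, ker n s (t + ((j : ℤ) : ℝ), x.2))
        + ∑' j : ℕ, ker n s (t + ((-(j + 1) : ℤ) : ℝ), x.2)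
      ≤ (∑' j : ℕ, ENNReal.ofReal (((R + j) / 2) ^ (-β)))
        + ∑' j : ℕ, ENNReal.ofReal (((R + j) / 2) ^ (-β)) :=
        add_le_add (ENNReal.tsum_le_tsum hb1) (ENNReal.tsum_le_tsum hb2)
    _ ≤ ENNReal.ofReal (2 ^ β * ((1 + (β - 1)⁻¹) * R ^ (1 - β)))
        + ENNReal.ofReal (2 ^ β * ((1 + (β - 1)⁻¹) * R ^ (1 - β))) := add_le_add hS hS
    _ = ENNReal.ofReal (2 ^ (β + 1) * (1 + (β - 1)⁻¹) * R ^ (1 - (n:ℝ) - s)) := by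
        have hA : (0:ℝ) ≤ 2 ^ β * ((1 + (β - 1)⁻¹) * R ^ (1 - β)) :=
          mul_nonneg (Real.rpow_nonneg (by norm_num) _)
            (mul_nonneg (by have : (0:ℝ) ≤ (β - 1)⁻¹ := inv_nonneg.mpr (by linarith); linarith)
              (Real.rpow_nonneg hR0.le _))
        rw [← ENNReal.ofReal_add hA hA]
        congr 1
        have h2 : (2:ℝ) ^ (β + 1) = 2 * 2 ^ β := by
          rw [Real.rpow_add (by norm_num : (0:ℝ) < 2), Real.rpow_one]; ring
        have he : R ^ (1 - (n:ℝ) - s) = R ^ (1 - β) := by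
          rw [hβdef]; ring_nf
        rw [he, h2]; ring
end
end

section
/- For any x_1 ∈ ℝ with |x'| ≥ 1, the sum over integers k with k ∉ (-3|x'| - x_1, 3|x'| - x_1) of |x_1 + k|^{-(n+s)} is bounded by C |x'|^{1-n-s}, for a constant C depending only on n and s. -/
open MeasureTheory Set
open scoped ENNReal Classical

noncomputable section

lemma tsum_int_right (h : ℤ → ℝ≥0∞) (a : ℤ) (hsupp : ∀ k, h k ≠ 0 → a ≤ k) :
    ∑' k : ℤ, h k = ∑' j : ℕ, h (a + j) := by
  refine tsum_eq_tsum_of_ne_zero_bij (fun j => a + ((j : ℕ) : ℤ)) ?_ ?_ ?_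
  · intro j j' hh
    ext
    exact_mod_cast add_left_cancel hh
  · intro k hk
    have hk' : a + (((k - a).toNat : ℕ) : ℤ) = k := by
      rw [Int.toNat_of_nonneg (sub_nonneg.2 (hsupp k hk))]; ring
    exact ⟨⟨(k - a).toNat, Function.mem_support.mpr (by rw [hk']; exact hk)⟩, hk'⟩
  · intro x; rfl

lemma tsum_int_left (h : ℤ → ℝ≥0∞) (a : ℤ) (hsupp : ∀ k, h k ≠ 0 → k ≤ a) :
    ∑' k : ℤ, h k = ∑' j : ℕ, h (a - j) := by
  refine tsum_eq_tsum_of_ne_zero_bij (fun j => a - ((j : ℕ) : ℤ)) ?_ ?_ ?_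
  · intro j j' hh
    ext
    exact_mod_cast sub_right_injective hh
  · intro k hk
    have hk' : a - (((a - k).toNat : ℕ) : ℤ) = k := by
      rw [Int.toNat_of_nonneg (sub_nonneg.2 (hsupp k hk))]; ring
    exact ⟨⟨(a - k).toNat, Function.mem_support.mpr (by rw [hk']; exact hk)⟩, hk'⟩
  · intro x; rfl

lemma tsum_tail_rpow (R p : ℝ) (hR : 2 ≤ R) (hp : 2 ≤ p) :
    ∑' j : ℕ, ENNReal.ofReal ((R + j) ^ (-p)) ≤ ENNReal.ofReal (2 * R ^ (1 - p)) := by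
  have hR0 : (0:ℝ) < R := lt_of_lt_of_le two_pos hR
  have hR1 : (1:ℝ) ≤ R - 1 := by linarith
  set f : ℕ → ℝ := fun j => (R - 1 + j)⁻¹ with hf
  have hfnn : ∀ j : ℕ, 0 ≤ f j := by
    intro j
    apply inv_nonneg.2
    have := Nat.cast_nonneg (α := ℝ) j
    linarith
  have hfmono : ∀ j : ℕ, f (j + 1) ≤ f j := by
    intro j
    have hjn : (0:ℝ) ≤ j := Nat.cast_nonneg j
    apply inv_anti₀ (by linarith)
    push_cast; linarith
  have key : ∀ j : ℕ, (R + j) ^ (-p) ≤ R ^ (2 - p) * (f j - f (j + 1)) := by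
    intro j
    have hjn : (0:ℝ) ≤ j := Nat.cast_nonneg j
    have hj0 : (0:ℝ) < R - 1 + j := by linarith
    have hb : (0:ℝ) < R + j := by linarith
    have e1 : (R + j) ^ (-p) = (R + j) ^ (2 - p) * (R + j) ^ (-(2:ℝ)) := by
      rw [← Real.rpow_add hb]; ring_nf
    have e2 : (R + j) ^ (2 - p : ℝ) ≤ R ^ (2 - p) :=
      Real.rpow_le_rpow_of_nonpos hR0 (by linarith) (by linarith)
    have e4 : f j - f (j + 1) = ((R - 1 + j) * (R + j))⁻¹ := by
      rw [hf]
      simp only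
      push_cast
      field_simp
      ring
    have e3 : (R + j) ^ (-(2:ℝ)) ≤ f j - f (j + 1) := by
      rw [e4, show (-(2:ℝ)) = -((2:ℕ):ℝ) by norm_num, Real.rpow_neg hb.le,
        Real.rpow_natCast]
      apply inv_anti₀ (mul_pos hj0 hb)
      nlinarith
    calc (R + j) ^ (-p) = (R + j) ^ (2 - p) * (R + j) ^ (-(2:ℝ)) := e1
      _ ≤ R ^ (2 - p) * (f j - f (j + 1)) := by
          apply mul_le_mul e2 e3 (Real.rpow_nonneg hb.le _) (Real.rpow_nonneg hR0.le _)
  have htele : ∑' j : ℕ, ENNReal.ofReal (f j - f (j + 1)) ≤ ENNReal.ofReal (f 0) := by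
    rw [ENNReal.tsum_eq_iSup_sum]
    apply iSup_le
    intro t
    obtain ⟨N, hN⟩ := t.exists_nat_subset_range
    calc ∑ j ∈ t, ENNReal.ofReal (f j - f (j + 1))
        ≤ ∑ j ∈ Finset.range N, ENNReal.ofReal (f j - f (j + 1)) :=
          Finset.sum_le_sum_of_subset hN
      _ = ENNReal.ofReal (∑ j ∈ Finset.range N, (f j - f (j + 1))) := by
          rw [ENNReal.ofReal_sum_of_nonneg]
          intro j _
          linarith [hfmono j]
      _ = ENNReal.ofReal (f 0 - f N) := by rw [Finset.sum_range_sub' f N]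
      _ ≤ ENNReal.ofReal (f 0) := ENNReal.ofReal_le_ofReal (by linarith [hfnn N])
  calc ∑' j : ℕ, ENNReal.ofReal ((R + j) ^ (-p))
      ≤ ∑' j : ℕ, ENNReal.ofReal (R ^ (2 - p) * (f j - f (j + 1))) :=
        ENNReal.tsum_le_tsum fun j => ENNReal.ofReal_le_ofReal (key j)
    _ = ENNReal.ofReal (R ^ (2 - p)) * ∑' j : ℕ, ENNReal.ofReal (f j - f (j + 1)) := by
        simp_rw [ENNReal.ofReal_mul (Real.rpow_nonneg hR0.le _)]
        exact ENNReal.tsum_mul_left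
    _ ≤ ENNReal.ofReal (R ^ (2 - p)) * ENNReal.ofReal (f 0) :=
        mul_le_mul_right htele _
    _ = ENNReal.ofReal (R ^ (2 - p) * (R - 1)⁻¹) := by
        rw [← ENNReal.ofReal_mul (Real.rpow_nonneg hR0.le _)]
        simp [hf]
    _ ≤ ENNReal.ofReal (2 * R ^ (1 - p)) := by
        apply ENNReal.ofReal_le_ofReal
        have h1 : (R - 1)⁻¹ ≤ 2 / R := by
          rw [inv_le_iff_one_le_mul₀ (by linarith)]
          rw [div_mul_eq_mul_div, le_div_iff₀ hR0]
          nlinarith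
        have h2 : R ^ (2 - p) * (2 / R) = 2 * R ^ (1 - p) := by
          rw [show (1 - p) = (2 - p) + (-1) by ring, Real.rpow_add hR0,
            Real.rpow_neg_one]
          field_simp
        calc R ^ (2 - p) * (R - 1)⁻¹ ≤ R ^ (2 - p) * (2 / R) := by
              apply mul_le_mul_of_nonneg_left h1 (Real.rpow_nonneg hR0.le _)
          _ = 2 * R ^ (1 - p) := h2


theorem tail_sum_bound (n : ℕ) (hn : 2 ≤ n) (s : ℝ) (hs : s ∈ Set.Ioo (0:ℝ) 1) :
    ∃ C > (0:ℝ), ∀ (x₁ : ℝ) (x' : EuclideanSpace ℝ (Fin (n-1))), 1 ≤ ‖x'‖ →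
      (∑' k : ℤ, if (k : ℝ) ∈ Set.Ioo (-3 * ‖x'‖ - x₁) (3 * ‖x'‖ - x₁) then 0
          else (ENNReal.ofReal |x₁ + (k : ℝ)|) ^ (-((n : ℝ) + s)))
        ≤ ENNReal.ofReal (C * ‖x'‖ ^ (1 - (n:ℝ) - s)) := by
  obtain ⟨hs0, hs1⟩ := hs
  refine ⟨4, by norm_num, ?_⟩
  intro x₁ x' hx'
  have hx0 : (0:ℝ) < ‖x'‖ := lt_of_lt_of_le one_pos hx'
  set R : ℝ := 3 * ‖x'‖ with hRdef
  have hR3 : (3:ℝ) ≤ R := by rw [hRdef]; nlinarith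
  have hn2 : (2:ℝ) ≤ (n:ℝ) := by exact_mod_cast hn
  set p : ℝ := (n:ℝ) + s with hpdef
  have hp2 : (2:ℝ) ≤ p := by rw [hpdef]; linarith
  set g : ℤ → ℝ≥0∞ := fun k => if (k : ℝ) ∈ Set.Ioo (-3 * ‖x'‖ - x₁) (3 * ‖x'‖ - x₁) then 0
      else (ENNReal.ofReal |x₁ + (k : ℝ)|) ^ (-((n : ℝ) + s)) with hg
  set m : ℤ := ⌈R - x₁⌉ with hm
  set m' : ℤ := ⌊-R - x₁⌋ with hm'
  have hmR : R - x₁ ≤ (m:ℝ) := Int.le_ceil _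
  have hm'R : (m':ℝ) ≤ -R - x₁ := Int.floor_le _
  have hmm : ¬ (m ≤ m') := by
    intro hcon
    have : (m:ℝ) ≤ (m':ℝ) := by exact_mod_cast hcon
    linarith
  set h₁ : ℤ → ℝ≥0∞ := fun k => if m ≤ k then g k else 0 with hh₁
  set h₂ : ℤ → ℝ≥0∞ := fun k => if k ≤ m' then g k else 0 with hh₂
  have hsplit : ∀ k, g k ≤ h₁ k + h₂ k := by
    intro k
    by_cases hk : (k : ℝ) ∈ Set.Ioo (-3 * ‖x'‖ - x₁) (3 * ‖x'‖ - x₁)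
    · have hgk : g k = 0 := by
        show (if (k : ℝ) ∈ Set.Ioo (-3 * ‖x'‖ - x₁) (3 * ‖x'‖ - x₁) then 0
          else (ENNReal.ofReal |x₁ + (k : ℝ)|) ^ (-((n : ℝ) + s))) = 0
        rw [if_pos hk]
      rw [hgk]
      exact zero_le
    · rw [Set.mem_Ioo, not_and_or] at hk
      rcases hk with hk | hk
      · push_neg at hk
        have hk' : k ≤ m' := Int.le_floor.2 (by rw [hRdef]; linarith)
        have : h₂ k = g k := by rw [hh₂]; simp [hk']
        rw [← this]; exact le_add_self
      · push_neg at hk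
        have hk' : m ≤ k := Int.ceil_le.2 (by linarith)
        have : h₁ k = g k := by rw [hh₁]; simp [hk']
        rw [← this]; exact le_self_add
  -- right tail bound
  have hbd1 : ∀ j : ℕ, h₁ (m + j) ≤ ENNReal.ofReal ((R + j) ^ (-p)) := by
    intro j
    have hjn : (0:ℝ) ≤ j := Nat.cast_nonneg j
    have hv : R + j ≤ x₁ + ((m + j : ℤ) : ℝ) := by push_cast; linarith
    have hv0 : (0:ℝ) < x₁ + ((m + j : ℤ) : ℝ) := by linarith
    have hnot : ¬ (((m + j : ℤ) : ℝ) ∈ Set.Ioo (-3 * ‖x'‖ - x₁) (3 * ‖x'‖ - x₁)) := by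
      rw [Set.mem_Ioo]
      push_neg
      intro _
      push_cast
      push_cast at hv
      linarith
    have : h₁ (m + j) = (ENNReal.ofReal |x₁ + ((m + j : ℤ) : ℝ)|) ^ (-((n : ℝ) + s)) := by
      show (if m ≤ m + (j : ℤ) then g (m + j) else 0) = _
      rw [if_pos (by omega : m ≤ m + (j : ℤ))]
      simp only [hg]
      rw [if_neg hnot]
    rw [this, abs_of_pos hv0, ENNReal.ofReal_rpow_of_pos hv0]
    apply ENNReal.ofReal_le_ofReal
    have : -((n:ℝ) + s) = -p := by rw [hpdef]
    rw [this]
    exact Real.rpow_le_rpow_of_nonpos (by linarith) hv (by linarith)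
  have hbd2 : ∀ j : ℕ, h₂ (m' - j) ≤ ENNReal.ofReal ((R + j) ^ (-p)) := by
    intro j
    have hjn : (0:ℝ) ≤ j := Nat.cast_nonneg j
    have hv : x₁ + ((m' - j : ℤ) : ℝ) ≤ -(R + j) := by push_cast; linarith
    have hv0 : x₁ + ((m' - j : ℤ) : ℝ) < 0 := by linarith
    have habs : R + j ≤ |x₁ + ((m' - j : ℤ) : ℝ)| := by
      rw [abs_of_neg hv0]; linarith
    have habs0 : (0:ℝ) < |x₁ + ((m' - j : ℤ) : ℝ)| := by linarith
    have hnot : ¬ (((m' - j : ℤ) : ℝ) ∈ Set.Ioo (-3 * ‖x'‖ - x₁) (3 * ‖x'‖ - x₁)) := by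
      rw [Set.mem_Ioo]
      push_neg
      intro hcon
      exfalso
      push_cast at hcon hv
      linarith
    have : h₂ (m' - j) = (ENNReal.ofReal |x₁ + ((m' - j : ℤ) : ℝ)|) ^ (-((n : ℝ) + s)) := by
      show (if m' - (j : ℤ) ≤ m' then g (m' - j) else 0) = _
      rw [if_pos (by omega : m' - (j:ℤ) ≤ m')]
      simp only [hg]
      rw [if_neg hnot]
    rw [this, ENNReal.ofReal_rpow_of_pos habs0]
    apply ENNReal.ofReal_le_ofReal
    have : -((n:ℝ) + s) = -p := by rw [hpdef]
    rw [this]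
    exact Real.rpow_le_rpow_of_nonpos (by linarith) habs (by linarith)
  have hsum1 : ∑' k : ℤ, h₁ k ≤ ENNReal.ofReal (2 * R ^ (1 - p)) := by
    rw [tsum_int_right h₁ m (fun k hk => by by_contra hc; exact hk (by rw [hh₁]; simp [hc]))]
    exact le_trans (ENNReal.tsum_le_tsum hbd1) (tsum_tail_rpow R p (by linarith) hp2)
  have hsum2 : ∑' k : ℤ, h₂ k ≤ ENNReal.ofReal (2 * R ^ (1 - p)) := by
    rw [tsum_int_left h₂ m' (fun k hk => by by_contra hc; exact hk (by rw [hh₂]; simp [hc]))]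
    exact le_trans (ENNReal.tsum_le_tsum hbd2) (tsum_tail_rpow R p (by linarith) hp2)
  calc ∑' k : ℤ, g k ≤ ∑' k : ℤ, (h₁ k + h₂ k) := ENNReal.tsum_le_tsum hsplit
    _ = ∑' k : ℤ, h₁ k + ∑' k : ℤ, h₂ k := ENNReal.tsum_add
    _ ≤ ENNReal.ofReal (2 * R ^ (1 - p)) + ENNReal.ofReal (2 * R ^ (1 - p)) :=
        add_le_add hsum1 hsum2
    _ = ENNReal.ofReal (4 * R ^ (1 - p)) := by
        rw [← ENNReal.ofReal_add (by positivity) (by positivity)]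
        ring_nf
    _ ≤ ENNReal.ofReal (4 * ‖x'‖ ^ (1 - (n:ℝ) - s)) := by
        apply ENNReal.ofReal_le_ofReal
        have h1 : R ^ (1 - p) ≤ ‖x'‖ ^ (1 - p) :=
          Real.rpow_le_rpow_of_nonpos hx0 (by rw [hRdef]; nlinarith) (by linarith)
        have h2 : (1 - p) = 1 - (n:ℝ) - s := by rw [hpdef]; ring
        rw [← h2]
        linarith
end
end

section
/- For any M ∈ ℕ, the truncated kernel h_M(x) := min{M, K(x)} satisfies h_M(x) ≤ C_M min{1, |x'|^{1-n-s}} for all x ∈ ℝ^n, for some constant C_M > 0 possibly depending on M. -/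
open MeasureTheory Set
open scoped ENNReal Classical

noncomputable section

private lemma sqrt_lb (t r : ℝ) (ht0 : 0 ≤ t) (ht1 : t < 1) (hr : 1 ≤ r) (k : ℤ) :
    (|(k : ℝ)| + r) / 3 ≤ Real.sqrt ((t + k) ^ 2 + r ^ 2) := by
  apply Real.le_sqrt_of_sq_le
  rcases eq_or_ne k 0 with rfl | hk
  · simp only [Int.cast_zero, abs_zero, zero_add, add_zero]
    nlinarith [sq_nonneg t, sq_nonneg r]
  · have hb : (1 : ℝ) ≤ |(k : ℝ)| := by
      have : (1 : ℤ) ≤ |k| := Int.one_le_abs hk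
      calc (1:ℝ) ≤ ((|k| : ℤ) : ℝ) := by exact_mod_cast this
        _ = |(k : ℝ)| := by push_cast; ring
    have habs : |(k : ℝ)| - 1 ≤ |t + k| := by
      have h1 : |(k : ℝ)| ≤ |t + k| + |t| := by
        calc |(k : ℝ)| = |(t + k) + -t| := by ring_nf
          _ ≤ |t + k| + |-t| := abs_add_le _ _
          _ = |t + k| + |t| := by rw [abs_neg]
      have h2 : |t| ≤ 1 := by rw [abs_of_nonneg ht0]; linarith
      linarith
    have hsq : (|(k : ℝ)| - 1) ^ 2 ≤ (t + k) ^ 2 := by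
      have h0 : (0:ℝ) ≤ |(k : ℝ)| - 1 := by linarith
      calc (|(k : ℝ)| - 1) ^ 2 ≤ |t + k| ^ 2 := by nlinarith [abs_nonneg (t + k)]
        _ = (t + k) ^ 2 := sq_abs _
    nlinarith [sq_nonneg (|(k : ℝ)| - r), sq_nonneg (7 * |(k : ℝ)| - 9), sq_nonneg (r - 1)]

private lemma tele_step (p r : ℝ) (hp : 2 ≤ p) (hr : 1 ≤ r) (m : ℕ) :
    (((m : ℝ) + 1 + r) / 3) ^ (-p)
      ≤ 3 / (p - 1) * ((((m : ℝ) + r) / 3) ^ (1 - p) - (((m : ℝ) + 1 + r) / 3) ^ (1 - p)) := by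
  set A : ℝ := ((m : ℝ) + r) / 3 with hA
  have hA0 : 0 < A := by positivity
  have hB : ((m : ℝ) + 1 + r) / 3 = A + 1/3 := by rw [hA]; ring
  rw [hB]
  have hB0 : (0:ℝ) < A + 1/3 := by linarith
  set a : ℝ := A ^ p with ha'
  set b : ℝ := (A + 1/3) ^ p with hb'
  have ha : 0 < a := Real.rpow_pos_of_pos hA0 _
  have hb : 0 < b := Real.rpow_pos_of_pos hB0 _
  have key : (A + p/3) * a ≤ A * b := by
    have hx : (0:ℝ) ≤ 1 / (3 * A) := by positivity
    have h1 : 1 + p * (1 / (3 * A)) ≤ (1 + 1 / (3 * A)) ^ p :=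
      one_add_mul_self_le_rpow_one_add (by linarith) (by linarith)
    have h2 : (1 : ℝ) + 1 / (3 * A) = (A + 1/3) / A := by field_simp
    rw [h2, Real.div_rpow hB0.le hA0.le] at h1
    have h3 : (1 + p * (1 / (3 * A))) * a ≤ (b / a) * a :=
      mul_le_mul_of_nonneg_right h1 ha.le
    rw [div_mul_cancel₀ _ ha.ne'] at h3
    have h4 : (1 + p * (1 / (3 * A))) * a = (1 + p / (3 * A)) * a := by ring
    have h5 : A * ((1 + p / (3 * A)) * a) = (A + p/3) * a := by
      field_simp
    nlinarith [mul_le_mul_of_nonneg_left h3 hA0.le]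
  have eA : A ^ (1 - p) = A / a := by
    rw [ha', Real.rpow_sub hA0, Real.rpow_one]
  have eB : (A + 1/3) ^ (1 - p) = (A + 1/3) / b := by
    rw [hb', Real.rpow_sub hB0, Real.rpow_one]
  have eC : (A + 1/3) ^ (-p) = 1 / b := by
    rw [hb', Real.rpow_neg hB0.le]; exact (one_div _).symm
  rw [eA, eB, eC]
  have hnum : (p - 1) / 3 * a ≤ A * b - (A + 1/3) * a := by nlinarith [key]
  have hid : (1:ℝ) / b = 3 / (p - 1) * (((p - 1) / 3 * a) / (a * b)) := by
    have hp1 : p - 1 ≠ 0 := by intro h; linarith [h]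
    field_simp
  rw [hid]
  have hsub : A / a - (A + 1/3) / b = (A * b - (A + 1/3) * a) / (a * b) := by
    field_simp
  rw [hsub]
  have h30 : (0:ℝ) ≤ 3 / (p - 1) := div_nonneg (by norm_num) (by linarith)
  have hab : (0:ℝ) < a * b := by positivity
  exact mul_le_mul_of_nonneg_left (by gcongr) h30

private lemma tail_sum (p r : ℝ) (hp : 2 ≤ p) (hr : 1 ≤ r) :
    ∑' m : ℕ, ENNReal.ofReal ((((m : ℝ) + 1 + r) / 3) ^ (-p))
      ≤ ENNReal.ofReal (3 / (p - 1) * (r / 3) ^ (1 - p)) := by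
  apply ENNReal.tsum_le_of_sum_range_le
  intro N
  set c : ℕ → ℝ := fun m => (((m : ℝ) + r) / 3) ^ (1 - p) with hc
  have hterm : ∀ m : ℕ, (((m : ℝ) + 1 + r) / 3) ^ (-p) ≤ 3 / (p - 1) * (c m - c (m + 1)) := by
    intro m
    have h := tele_step p r hp hr m
    have hcast : ((m + 1 : ℕ) : ℝ) = (m : ℝ) + 1 := by push_cast; ring
    simp only [hc, hcast]
    exact h
  have hnn : ∀ m : ℕ, (0:ℝ) ≤ (((m : ℝ) + 1 + r) / 3) ^ (-p) := fun m =>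
    Real.rpow_nonneg (by positivity) _
  calc ∑ m ∈ Finset.range N, ENNReal.ofReal ((((m : ℝ) + 1 + r) / 3) ^ (-p))
      ≤ ∑ m ∈ Finset.range N, ENNReal.ofReal (3 / (p - 1) * (c m - c (m + 1))) :=
        Finset.sum_le_sum fun m _ => ENNReal.ofReal_le_ofReal (hterm m)
    _ = ENNReal.ofReal (∑ m ∈ Finset.range N, 3 / (p - 1) * (c m - c (m + 1))) := by
        rw [ENNReal.ofReal_sum_of_nonneg]
        intro m _
        exact le_trans (hnn m) (hterm m)
    _ ≤ ENNReal.ofReal (3 / (p - 1) * (r / 3) ^ (1 - p)) := by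
        apply ENNReal.ofReal_le_ofReal
        rw [← Finset.mul_sum, Finset.sum_range_sub' c]
        have hc0 : c 0 = (r / 3) ^ (1 - p) := by simp [hc]
        have hcN : (0:ℝ) ≤ c N := Real.rpow_nonneg (by positivity) _
        calc 3 / (p - 1) * (c 0 - c N) ≤ 3 / (p - 1) * c 0 :=
              mul_le_mul_of_nonneg_left (by linarith) (div_nonneg (by norm_num) (by linarith))
          _ = _ := by rw [hc0]

set_option maxHeartbeats 1000000 in
private lemma Kper_bound (n : ℕ) (s : ℝ) {d : ℕ} (hp : 2 ≤ (n : ℝ) + s) (x : V d)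
    (hr : 1 ≤ ‖x.2‖) :
    Kper n s x ≤ ENNReal.ofReal ((‖x.2‖ / 3) ^ (-((n : ℝ) + s))
      + 2 * (3 / ((n : ℝ) + s - 1) * (‖x.2‖ / 3) ^ (1 - ((n : ℝ) + s)))) := by
  have hr0 : (0:ℝ) < ‖x.2‖ := lt_of_lt_of_le one_pos hr
  have ht0 : (0:ℝ) ≤ Int.fract x.1 := Int.fract_nonneg _
  have ht1 : Int.fract x.1 < 1 := Int.fract_lt_one _
  have hre : Kper n s x = ∑' k : ℤ, ker n s (Int.fract x.1 + (k : ℝ), x.2) := by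
    rw [Kper,
      ← (Equiv.subRight (⌊x.1⌋ : ℤ)).tsum_eq (fun k : ℤ => ker n s (x.1 + (k : ℝ), x.2))]
    apply tsum_congr
    intro k
    have h1 : x.1 + (((Equiv.subRight (⌊x.1⌋ : ℤ)) k : ℤ) : ℝ) = Int.fract x.1 + (k : ℝ) := by
      simp only [Equiv.subRight_apply]
      rw [← Int.self_sub_floor]
      push_cast
      ring
    rw [h1]
  have hterm : ∀ k : ℤ, ker n s (Int.fract x.1 + (k : ℝ), x.2)
      ≤ ENNReal.ofReal (((|(k : ℝ)| + ‖x.2‖) / 3) ^ (-((n : ℝ) + s))) := by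
    intro k
    have hlb := sqrt_lb (Int.fract x.1) ‖x.2‖ ht0 ht1 hr k
    have h0 : (0:ℝ) < (|(k : ℝ)| + ‖x.2‖) / 3 := by positivity
    have heq : eNorm ((Int.fract x.1 + (k : ℝ), x.2) : V d)
        = Real.sqrt ((Int.fract x.1 + (k : ℝ)) ^ 2 + ‖x.2‖ ^ 2) := rfl
    have hpos : 0 < eNorm ((Int.fract x.1 + (k : ℝ), x.2) : V d) := by
      rw [heq]; exact lt_of_lt_of_le h0 hlb
    rw [ker, ENNReal.ofReal_rpow_of_pos hpos]
    apply ENNReal.ofReal_le_ofReal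
    apply Real.rpow_le_rpow_of_nonpos h0 _ (by linarith : -((n : ℝ) + s) ≤ 0)
    rw [heq]; exact hlb
  set q : ℝ := (n : ℝ) + s with hq
  set F : ℤ → ℝ≥0∞ := fun k : ℤ =>
    ENNReal.ofReal (((|(k : ℝ)| + ‖x.2‖) / 3) ^ (-q)) with hF
  have hb0 : (0:ℝ) ≤ 3 / (q - 1) * (‖x.2‖ / 3) ^ (1 - q) :=
    mul_nonneg (div_nonneg (by norm_num) (by linarith)) (Real.rpow_nonneg (by positivity) _)
  have ha0 : (0:ℝ) ≤ (‖x.2‖ / 3) ^ (-q) := Real.rpow_nonneg (by positivity) _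
  have hsum : ∑' k : ℤ, F k = (∑' m : ℕ, F (m : ℤ)) + ∑' m : ℕ, F (-((m : ℤ) + 1)) :=
    tsum_of_nat_of_neg_add_one ENNReal.summable ENNReal.summable
  have habs1 : ∀ m : ℕ, F (m : ℤ) = ENNReal.ofReal ((((m : ℝ) + ‖x.2‖) / 3) ^ (-q)) := by
    intro m
    have : |((m : ℤ) : ℝ)| = (m : ℝ) := by
      rw [abs_of_nonneg (by positivity)]; norm_num
    rw [hF]; simp only []; rw [this]
  have habs2 : ∀ m : ℕ, F (-((m : ℤ) + 1))
      = ENNReal.ofReal ((((m : ℝ) + 1 + ‖x.2‖) / 3) ^ (-q)) := by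
    intro m
    have : |((-((m : ℤ) + 1) : ℤ) : ℝ)| = (m : ℝ) + 1 := by
      rw [abs_of_nonpos (by push_cast; linarith [Nat.cast_nonneg (α := ℝ) m])]
      push_cast; ring
    rw [hF]; simp only []; rw [this]
  have hT := tail_sum q ‖x.2‖ hp hr
  have h1 : (∑' m : ℕ, F (m : ℤ))
      = ENNReal.ofReal ((‖x.2‖ / 3) ^ (-q))
        + ∑' m : ℕ, ENNReal.ofReal ((((m : ℝ) + 1 + ‖x.2‖) / 3) ^ (-q)) := by
    rw [tsum_eq_zero_add' ENNReal.summable]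
    congr 1
    · rw [habs1 0]; norm_num
    · apply tsum_congr; intro m
      rw [habs1 (m + 1)]
      congr 2
      push_cast; ring
  have h2 : (∑' m : ℕ, F (-((m : ℤ) + 1)))
      = ∑' m : ℕ, ENNReal.ofReal ((((m : ℝ) + 1 + ‖x.2‖) / 3) ^ (-q)) :=
    tsum_congr fun m => habs2 m
  calc Kper n s x ≤ ∑' k : ℤ, F k := by
        rw [hre]; exact ENNReal.tsum_le_tsum hterm
    _ ≤ ENNReal.ofReal ((‖x.2‖ / 3) ^ (-q))
        + (ENNReal.ofReal (3 / (q - 1) * (‖x.2‖ / 3) ^ (1 - q))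
          + ENNReal.ofReal (3 / (q - 1) * (‖x.2‖ / 3) ^ (1 - q))) := by
        rw [hsum, h1, h2, add_assoc]
        gcongr
    _ = ENNReal.ofReal ((‖x.2‖ / 3) ^ (-q)
          + 2 * (3 / (q - 1) * (‖x.2‖ / 3) ^ (1 - q))) := by
        rw [← ENNReal.ofReal_add hb0 hb0, ← ENNReal.ofReal_add ha0 (by linarith)]
        congr 1
        ring

private lemma real_const_bound (q r : ℝ) (hq : 2 ≤ q) (hr : 1 ≤ r) :
    (r / 3) ^ (-q) + 2 * (3 / (q - 1) * (r / 3) ^ (1 - q))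
      ≤ (1 + 6 / (q - 1)) * 3 ^ q * r ^ (1 - q) := by
  have hr0 : (0:ℝ) < r := lt_of_lt_of_le one_pos hr
  have hdiv : ∀ e : ℝ, (r / 3) ^ e = 3 ^ (-e) * r ^ e := by
    intro e
    rw [Real.div_rpow hr0.le (by norm_num : (0:ℝ) ≤ 3), Real.rpow_neg (by norm_num : (0:ℝ) ≤ 3),
      div_eq_mul_inv]
    ring
  rw [hdiv, hdiv, neg_neg, neg_sub]
  have t1 : r ^ (-q) ≤ r ^ (1 - q) := Real.rpow_le_rpow_of_exponent_le hr (by linarith)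
  have t2 : (3:ℝ) ^ (q - 1) ≤ 3 ^ q := Real.rpow_le_rpow_of_exponent_le (by norm_num) (by linarith)
  have h3q : (0:ℝ) < 3 ^ q := Real.rpow_pos_of_pos (by norm_num) _
  have hrq : (0:ℝ) ≤ r ^ (1 - q) := Real.rpow_nonneg hr0.le _
  have hdq : (0:ℝ) ≤ 3 / (q - 1) := div_nonneg (by norm_num) (by linarith)
  have u1 : (3:ℝ) ^ q * r ^ (-q) ≤ 3 ^ q * r ^ (1 - q) :=
    mul_le_mul_of_nonneg_left t1 h3q.le
  have u2 : (3:ℝ) ^ (q - 1) * r ^ (1 - q) ≤ 3 ^ q * r ^ (1 - q) :=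
    mul_le_mul_of_nonneg_right t2 hrq
  have u3 : 3 / (q - 1) * ((3:ℝ) ^ (q - 1) * r ^ (1 - q))
      ≤ 3 / (q - 1) * (3 ^ q * r ^ (1 - q)) := mul_le_mul_of_nonneg_left u2 hdq
  have hexp2 : (1 + 6 / (q - 1)) * 3 ^ q * r ^ (1 - q)
      = 3 ^ q * r ^ (1 - q) + 2 * (3 / (q - 1) * (3 ^ q * r ^ (1 - q))) := by ring
  linarith [u1, u3]

set_option maxHeartbeats 1000000 in
theorem truncated_kernel_decay (n : ℕ) (hn : 2 ≤ n) (s : ℝ) (hs : s ∈ Set.Ioo (0:ℝ) 1)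
    (M : ℕ) :
    ∃ C > (0:ℝ), ∀ x : V (n-1),
      min (M : ℝ≥0∞) (Kper n s x)
        ≤ ENNReal.ofReal C * min 1 ((ENNReal.ofReal ‖x.2‖) ^ (1 - (n:ℝ) - s)) := by
  obtain ⟨hs0, hs1⟩ := hs
  have hn2 : (2:ℝ) ≤ (n : ℝ) := by exact_mod_cast hn
  have hp : 2 ≤ (n : ℝ) + s := by linarith
  have hq1 : (1:ℝ) ≤ (n : ℝ) + s - 1 := by linarith
  have hC1pos : (0:ℝ) < (1 + 6 / ((n : ℝ) + s - 1)) * 3 ^ ((n : ℝ) + s) := by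
    have h6 : (0:ℝ) < 6 / ((n : ℝ) + s - 1) := div_pos (by norm_num) (by linarith)
    have h3q : (0:ℝ) < 3 ^ ((n : ℝ) + s) := Real.rpow_pos_of_pos (by norm_num) _
    nlinarith
  set C₁ : ℝ := (1 + 6 / ((n : ℝ) + s - 1)) * 3 ^ ((n : ℝ) + s) with hC₁
  refine ⟨max (M : ℝ) C₁ + 1, ?_, ?_⟩
  · have := le_max_right (M : ℝ) C₁
    linarith
  intro x
  have hMC : (M : ℝ) ≤ max (M : ℝ) C₁ + 1 := by linarith [le_max_left (M : ℝ) C₁]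
  have hC1C : C₁ ≤ max (M : ℝ) C₁ + 1 := by linarith [le_max_right (M : ℝ) C₁]
  have hexp : 1 - (n : ℝ) - s = -((n : ℝ) + s - 1) := by ring
  by_cases hr : 1 ≤ ‖x.2‖
  · -- large ‖x.2‖
    have hr0 : (0:ℝ) < ‖x.2‖ := lt_of_lt_of_le one_pos hr
    have hXle : (ENNReal.ofReal ‖x.2‖) ^ (1 - (n : ℝ) - s) ≤ 1 := by
      apply ENNReal.rpow_le_one_of_one_le_of_neg (ENNReal.one_le_ofReal.mpr hr)
      linarith
    rw [min_eq_right hXle]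
    calc min (M : ℝ≥0∞) (Kper n s x) ≤ Kper n s x := min_le_right _ _
      _ ≤ ENNReal.ofReal ((‖x.2‖ / 3) ^ (-((n : ℝ) + s))
            + 2 * (3 / ((n : ℝ) + s - 1) * (‖x.2‖ / 3) ^ (1 - ((n : ℝ) + s)))) :=
          Kper_bound n s hp x hr
      _ ≤ ENNReal.ofReal (C₁ * ‖x.2‖ ^ (1 - ((n : ℝ) + s))) := by
          apply ENNReal.ofReal_le_ofReal
          rw [hC₁]
          exact real_const_bound ((n : ℝ) + s) ‖x.2‖ hp hr
      _ = ENNReal.ofReal C₁ * (ENNReal.ofReal ‖x.2‖) ^ (1 - (n : ℝ) - s) := by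
          rw [show 1 - (n : ℝ) - s = 1 - ((n : ℝ) + s) by ring,
            ENNReal.ofReal_mul hC1pos.le, ENNReal.ofReal_rpow_of_pos hr0]
      _ ≤ ENNReal.ofReal (max (M : ℝ) C₁ + 1) * (ENNReal.ofReal ‖x.2‖) ^ (1 - (n : ℝ) - s) := by
          gcongr
          all_goals exact ENNReal.ofReal_le_ofReal hC1C
  · -- small ‖x.2‖
    have hrlt : ‖x.2‖ < 1 := lt_of_not_ge hr
    have hX1 : (1:ℝ≥0∞) ≤ (ENNReal.ofReal ‖x.2‖) ^ (1 - (n : ℝ) - s) := by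
      rw [hexp, ENNReal.rpow_neg]
      rw [ENNReal.one_le_inv]
      exact ENNReal.rpow_le_one (ENNReal.ofReal_le_one.mpr hrlt.le) (by linarith)
    rw [min_eq_left hX1]
    calc min (M : ℝ≥0∞) (Kper n s x) ≤ (M : ℝ≥0∞) := min_le_left _ _
      _ = ENNReal.ofReal (M : ℝ) := (ENNReal.ofReal_natCast M).symm
      _ ≤ ENNReal.ofReal (max (M : ℝ) C₁ + 1) * 1 := by
          rw [mul_one]
          exact ENNReal.ofReal_le_ofReal hMC
end
end

section
/- Per_s(F) ≤ P_S(F) + C(|F|^2 + Π_S(F)), where Π_S(F) := ∫_{F̃} ∫_{F̂} |x-y|^{-(n+s)} dx dy, F̃ := F ∩ {x_1 ∈ [1/4, 1/2]}, F̂ := (F + e_1) ∩ {x_1 ∈ [1/2, 3/4]}, for a constant C depending only on n, s. -/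
open MeasureTheory Set
open scoped ENNReal Classical

noncomputable section

section Helpers

variable {d : ℕ}

/-- The vector `τ e₁`. -/
def cvec (τ : ℝ) : V d := (τ, 0)

lemma continuous_eNorm : Continuous (eNorm (d := d)) := by
  unfold eNorm; fun_prop

lemma abs_fst_le_eNorm (x : V d) : |x.1| ≤ eNorm x := by
  rw [eNorm, ← Real.sqrt_sq_eq_abs]
  exact Real.sqrt_le_sqrt (le_add_of_nonneg_right (by positivity))

lemma eNorm_neg (x : V d) : eNorm (-x) = eNorm x := by
  simp [eNorm]

lemma ker_neg (n : ℕ) (s : ℝ) (x : V d) : ker n s (-x) = ker n s x := by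
  simp [ker, eNorm_neg]

lemma measurable_ker (n : ℕ) (s : ℝ) : Measurable (ker n s : V d → ℝ≥0∞) :=
  (ENNReal.continuous_rpow_const.comp
    (ENNReal.continuous_ofReal.comp continuous_eNorm)).measurable

lemma ker_le (n : ℕ) {s : ℝ} (hs : 0 ≤ s) {x : V d} {r : ℝ} (hr : 0 < r) (h : r ≤ |x.1|) :
    ker n s x ≤ ENNReal.ofReal (r ^ (-((n:ℝ)+s))) := by
  have h1 : r ≤ eNorm x := h.trans (abs_fst_le_eNorm x)
  rw [ker, ENNReal.ofReal_rpow_of_pos (hr.trans_le h1)]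
  exact ENNReal.ofReal_le_ofReal
    (Real.rpow_le_rpow_of_nonpos hr h1 (neg_nonpos.mpr (add_nonneg (Nat.cast_nonneg n) hs)))

lemma mp (τ : ℝ) :
    MeasurePreserving (fun y : V d => y + cvec τ) volume volume := by
  rw [Measure.volume_eq_prod]
  exact measurePreserving_add_right _ _

lemma me (τ : ℝ) : MeasurableEmbedding (fun y : V d => y + cvec τ) :=
  (MeasurableEquiv.addRight (cvec τ : V d)).measurableEmbedding

lemma vol_image (τ : ℝ) (F : Set (V d)) :
    volume ((fun y : V d => y + cvec τ) '' F) = volume F := by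
  have h : (fun y : V d => y + cvec τ) '' F
      = (fun y : V d => y + cvec (-τ)) ⁻¹' F := by
    ext y
    simp only [Set.mem_image, Set.mem_preimage]
    constructor
    · rintro ⟨z, hz, rfl⟩
      have : z + cvec τ + cvec (-τ) = z := by
        simp only [cvec]; ext <;> simp
      rwa [this]
    · intro h
      refine ⟨y + cvec (-τ), h, ?_⟩
      simp only [cvec]; ext <;> simp
  rw [h]
  exact (mp (τ := -τ)).measure_preimage_emb (me _) F

lemma trans_setLIntegral (τ : ℝ) (A : Set (V d)) (f : V d → ℝ≥0∞) :
    ∫⁻ y in (fun y : V d => y + cvec τ) '' A, f y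
      = ∫⁻ z in A, f (z + cvec τ) :=
  ((mp τ).setLIntegral_comp_emb (me τ) f A).symm

lemma meas_slab : MeasurableSet (slab d) :=
  measurable_fst measurableSet_Icc

lemma htrans_eq (τ : ℝ) (E : Set (V d)) :
    htrans τ E = (fun y : V d => y + cvec τ) '' E := by
  have : (fun p : V d => (p.1 + τ, p.2)) = fun y : V d => y + cvec τ := by
    funext p; ext <;> simp [cvec]
  rw [htrans, this]

lemma union_slabs :
    (⋃ k : ℤ, (fun y : V d => y + cvec (k : ℝ)) '' slab d) = univ := by
  ext y
  simp only [mem_iUnion, mem_univ, iff_true]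
  refine ⟨round y.1, (y.1 - round y.1, y.2), ?_, ?_⟩
  · have h := abs_sub_round y.1
    simp only [slab, mem_setOf_eq, mem_Icc]
    constructor <;>
      [linarith [neg_abs_le (y.1 - round y.1)]; linarith [le_abs_self (y.1 - round y.1)]]
  · ext <;> simp [cvec]

lemma setLIntegral_le_const {T U : Set (V d)} (hU : MeasurableSet U) (hTU : T ⊆ U)
    {f : V d → ℝ≥0∞} {c : ℝ≥0∞} (h : ∀ y ∈ U, f y ≤ c) :
    ∫⁻ y in T, f y ≤ c * volume T := by
  have h0 : (volume.restrict T) {y | ¬ f y ≤ c} = 0 := by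
    refine measure_mono_null (fun y hy => ?_) (?_ : volume.restrict T Uᶜ = 0)
    · intro hyU; exact hy (h y hyU)
    · rw [Measure.restrict_apply hU.compl]
      have : Uᶜ ∩ T = ∅ := by
        ext z; simp only [mem_inter_iff, mem_compl_iff, mem_empty_iff_false, iff_false]
        rintro ⟨hz1, hz2⟩; exact hz1 (hTU hz2)
      rw [this, measure_empty]
  calc ∫⁻ y in T, f y ≤ ∫⁻ _ in T, c := lintegral_mono_ae (ae_iff.mpr h0)
    _ = c * volume T := setLIntegral_const T c

lemma meas_inner (n : ℕ) (s : ℝ) (T : Set (V d)) (c : V d) :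
    Measurable fun x : V d => ∫⁻ y in T, ker n s (x - (y + c)) :=
  Measurable.lintegral_prod_right' (ν := volume.restrict T)
    (f := fun p : V d × V d => ker n s (p.1 - (p.2 + c)))
    ((measurable_ker n s).comp (measurable_fst.sub (measurable_snd.add_const c)))

lemma meas_inner0 (n : ℕ) (s : ℝ) (T : Set (V d)) :
    Measurable fun x : V d => ∫⁻ y in T, ker n s (x - y) := by
  simpa using meas_inner n s T 0

lemma double_bound (n : ℕ) (s : ℝ) {F T U W : Set (V d)} (hW : MeasurableSet W)
    (hU : MeasurableSet U) (hFW : F ⊆ W) (hTU : T ⊆ U) {c : ℝ≥0∞}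
    (h : ∀ x ∈ W, ∀ y ∈ U, ker n s (x - y) ≤ c) :
    ∫⁻ x in F, ∫⁻ y in T, ker n s (x - y) ≤ c * volume T * volume F :=
  setLIntegral_le_const hW hFW fun x hx => setLIntegral_le_const hU hTU (h x hx)

end Helpers

set_option maxHeartbeats 2000000 in
theorem Pers_le_PS_plus (n : ℕ) (hn : 2 ≤ n) (s : ℝ) (hs : s ∈ Set.Ioo (0:ℝ) 1) :
    ∃ C > (0:ℝ), ∀ F : Set (V (n-1)), F ⊆ slab (n-1) → volume F < ⊤ →
      Pers n s F ≤ PS n s F + ENNReal.ofReal C * ((volume F) ^ 2 + PiS n s F) := by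
  classical
  have hs0 : (0:ℝ) ≤ s := hs.1.le
  have hp2 : (2:ℝ) ≤ (n : ℝ) + s := by
    have h2 : (2:ℝ) ≤ (n : ℝ) := by exact_mod_cast hn
    linarith [hs.1]
  -- the auxiliary constants
  set Ξr : ℝ := ∑' k : ℤ, 4 / (k:ℝ)^2 with hΞr
  have hsum : Summable (fun k : ℤ => 4 / (k:ℝ)^2) := by
    have := (Real.summable_one_div_int_pow (p := 2)).mpr one_lt_two
    simpa [mul_one_div, div_eq_mul_inv] using this.mul_left (4:ℝ)
  have hΞnn : 0 ≤ Ξr := tsum_nonneg fun k => by positivity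
  have h4p : (0:ℝ) < 4 ^ ((n:ℝ) + s) := Real.rpow_pos_of_pos (by norm_num) _
  refine ⟨2 + (4 * 4 ^ ((n:ℝ) + s) + Ξr), by linarith, ?_⟩
  set C : ℝ := 2 + (4 * 4 ^ ((n:ℝ) + s) + Ξr) with hC
  intro F hF _hFvol
  set M : ℝ≥0∞ := ENNReal.ofReal ((4:ℝ) ^ ((n:ℝ) + s)) with hM
  set Vv : ℝ≥0∞ := volume F with hVv
  -- kernel bound at distance ≥ 1/4
  have kerM : ∀ x y : V (n-1), (1/4 : ℝ) ≤ |x.1 - y.1| → ker n s (x - y) ≤ M := by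
    intro x y h
    have hb := ker_le n hs0 (x := x - y) (r := 1/4) (by norm_num) h
    refine hb.trans_eq ?_
    rw [hM]
    congr 1
    rw [show ((1:ℝ)/4) = (4:ℝ)⁻¹ by norm_num, Real.inv_rpow (by norm_num),
      ← Real.rpow_neg (by norm_num), neg_neg]
  -- the sets in the splitting
  set P : ℤ → ℝ≥0∞ := fun k =>
    ∫⁻ x in F, ∫⁻ y in (fun y : V (n-1) => y + cvec (k:ℝ)) '' (slab (n-1) \ F),
      ker n s (x - y) with hPdef
  set g : ℤ → ℝ≥0∞ := fun k =>
    ∫⁻ x in F, ∫⁻ y in (if k = 0 then (∅ : Set (V (n-1)))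
      else (fun y : V (n-1) => y + cvec (k:ℝ)) '' F), ker n s (x - y) with hgdef
  -- Step 1: Pers ≤ ∑' k, T k
  have step1 : Pers n s F ≤ ∑' k : ℤ, ∫⁻ x in F,
      ∫⁻ y in Fᶜ ∩ ((fun y : V (n-1) => y + cvec (k:ℝ)) '' slab (n-1)), ker n s (x - y) := by
    have hcover : ∀ x : V (n-1), ∫⁻ y in Fᶜ, ker n s (x - y) ≤
        ∑' k : ℤ, ∫⁻ y in Fᶜ ∩ ((fun y : V (n-1) => y + cvec (k:ℝ)) '' slab (n-1)),
          ker n s (x - y) := by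
      intro x
      have hFc : Fᶜ = ⋃ k : ℤ, (Fᶜ ∩ ((fun y : V (n-1) => y + cvec (k:ℝ)) '' slab (n-1))) := by
        rw [← inter_iUnion, union_slabs, inter_univ]
      conv_lhs => rw [hFc]
      exact lintegral_iUnion_le _ _
    calc Pers n s F ≤ ∫⁻ x in F, ∑' k : ℤ,
        ∫⁻ y in Fᶜ ∩ ((fun y : V (n-1) => y + cvec (k:ℝ)) '' slab (n-1)), ker n s (x - y) :=
          lintegral_mono hcover
      _ = _ := lintegral_tsum fun k => (meas_inner0 n s _).aemeasurable
  -- Step 2: T k ≤ P k + g k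
  have step2 : ∀ k : ℤ, (∫⁻ x in F,
      ∫⁻ y in Fᶜ ∩ ((fun y : V (n-1) => y + cvec (k:ℝ)) '' slab (n-1)), ker n s (x - y))
        ≤ P k + g k := by
    intro k
    have hsub : Fᶜ ∩ ((fun y : V (n-1) => y + cvec (k:ℝ)) '' slab (n-1)) ⊆
        ((fun y : V (n-1) => y + cvec (k:ℝ)) '' (slab (n-1) \ F)) ∪
        (if k = 0 then (∅ : Set (V (n-1)))
          else (fun y : V (n-1) => y + cvec (k:ℝ)) '' F) := by
      rintro y ⟨hyF, z, hz, rfl⟩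
      by_cases hzF : z ∈ F
      · right
        have hk : k ≠ 0 := by
          rintro rfl
          apply hyF
          have hz0 : z + cvec (((0:ℤ):ℝ)) = z := by ext <;> simp [cvec]
          show z + cvec (((0:ℤ):ℝ)) ∈ F
          rwa [hz0]
        rw [if_neg hk]
        exact ⟨z, hzF, rfl⟩
      · left; exact ⟨z, ⟨hz, hzF⟩, rfl⟩
    have hin : ∀ x : V (n-1),
        (∫⁻ y in Fᶜ ∩ ((fun y : V (n-1) => y + cvec (k:ℝ)) '' slab (n-1)), ker n s (x - y)) ≤
        (∫⁻ y in (fun y : V (n-1) => y + cvec (k:ℝ)) '' (slab (n-1) \ F), ker n s (x - y)) +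
        (∫⁻ y in (if k = 0 then (∅ : Set (V (n-1)))
          else (fun y : V (n-1) => y + cvec (k:ℝ)) '' F), ker n s (x - y)) := by
      intro x
      refine le_trans (lintegral_mono' (Measure.restrict_mono hsub le_rfl) le_rfl) ?_
      refine le_trans (lintegral_mono' (Measure.restrict_union_le _ _) le_rfl) ?_
      exact le_of_eq (lintegral_add_measure _ _ _)
    calc (∫⁻ x in F,
        ∫⁻ y in Fᶜ ∩ ((fun y : V (n-1) => y + cvec (k:ℝ)) '' slab (n-1)), ker n s (x - y))
        ≤ ∫⁻ x in F,
          ((∫⁻ y in (fun y : V (n-1) => y + cvec (k:ℝ)) '' (slab (n-1) \ F), ker n s (x - y)) +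
          (∫⁻ y in (if k = 0 then (∅ : Set (V (n-1)))
            else (fun y : V (n-1) => y + cvec (k:ℝ)) '' F), ker n s (x - y))) :=
          lintegral_mono hin
      _ = P k + g k := lintegral_add_left (meas_inner0 n s _) _
  -- Step 3: ∑' k, P k = PS
  have step3 : ∑' k : ℤ, P k = PS n s F := by
    have hPk : ∀ k : ℤ, P k = ∫⁻ x in F, ∫⁻ z in slab (n-1) \ F,
        ker n s (x - (z + cvec (k:ℝ))) := by
      intro k
      rw [hPdef]
      exact lintegral_congr fun x => trans_setLIntegral _ _ _
    have hswap : ∑' k : ℤ, P k = ∫⁻ x in F, ∑' k : ℤ, ∫⁻ z in slab (n-1) \ F,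
        ker n s (x - (z + cvec (k:ℝ))) := by
      simp_rw [hPk]
      exact (lintegral_tsum fun k => (meas_inner n s _ _).aemeasurable).symm
    rw [hswap]
    have hfin : ∀ x : V (n-1), (∑' k : ℤ, ∫⁻ z in slab (n-1) \ F,
        ker n s (x - (z + cvec (k:ℝ)))) = ∫⁻ z in slab (n-1) \ F, Kper n s (x - z) := by
      intro x
      have hmk : ∀ k : ℤ, AEMeasurable (fun z : V (n-1) => ker n s (x - (z + cvec (k:ℝ))))
          (volume.restrict (slab (n-1) \ F)) := fun k =>
        ((measurable_ker n s).comp (by fun_prop)).aemeasurable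
      rw [← lintegral_tsum hmk]
      refine lintegral_congr fun z => ?_
      have hterm : ∀ k : ℤ, x - (z + cvec ((k:ℤ):ℝ)) = ((x - z).1 + ((-k : ℤ):ℝ), (x-z).2) := by
        intro k
        refine Prod.ext ?_ ?_
        · show x.1 - (z.1 + (k:ℝ)) = (x.1 - z.1) + ((-k : ℤ):ℝ)
          push_cast; ring
        · show x.2 - (z.2 + 0) = x.2 - z.2
          simp
      calc ∑' k : ℤ, ker n s (x - (z + cvec (k:ℝ)))
          = ∑' k : ℤ, ker n s ((x - z).1 + (((Equiv.neg ℤ) k : ℤ):ℝ), (x-z).2) := by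
            refine tsum_congr fun k => ?_
            rw [hterm k]; rfl
        _ = ∑' k : ℤ, ker n s ((x - z).1 + (k:ℝ), (x-z).2) :=
            (Equiv.neg ℤ).tsum_eq (fun m : ℤ => ker n s ((x - z).1 + (m:ℝ), (x-z).2))
        _ = Kper n s (x - z) := rfl
    rw [lintegral_congr hfin, PS, inter_eq_self_of_subset_left hF]
  -- Step 4 bounds
  have g0 : g 0 = 0 := by
    rw [hgdef]
    simp
  have g1 : g 1 ≤ PiS n s F + M * Vv * Vv + M * Vv * Vv := by
    set B : Set (V (n-1)) := {y | y.1 ∈ Icc (1/2:ℝ) (3/4)} with hB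
    set A' : Set (V (n-1)) := {x | x.1 ∈ Icc (1/4:ℝ) (1/2)} with hA'
    have hBm : MeasurableSet B := measurable_fst measurableSet_Icc
    have hA'm : MeasurableSet A' := measurable_fst measurableSet_Icc
    set Img : Set (V (n-1)) := (fun y : V (n-1) => y + cvec (1:ℝ)) '' F with hImg
    have hg1 : g 1 = ∫⁻ x in F, ∫⁻ y in Img, ker n s (x - y) := by
      rw [hgdef]
      simp only [if_neg (show (1:ℤ) ≠ 0 by decide), Int.cast_one, hImg]
    have hIs : Img ⊆ (fun y : V (n-1) => y + cvec (1:ℝ)) '' slab (n-1) := image_mono hF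
    have himgS : MeasurableSet ((fun y : V (n-1) => y + cvec (1:ℝ)) '' slab (n-1)) :=
      (me 1).measurableSet_image.2 meas_slab
    have hvolImg : volume Img = Vv := by rw [hImg, vol_image, hVv]
    have hsplit1 : ∀ x : V (n-1), (∫⁻ y in Img, ker n s (x - y)) ≤
        (∫⁻ y in Img ∩ B, ker n s (x - y)) + ∫⁻ y in Img \ B, ker n s (x - y) := by
      intro x
      have hI : Img = (Img ∩ B) ∪ (Img \ B) := (inter_union_diff _ _).symm
      conv_lhs => rw [hI]
      exact le_trans (lintegral_mono' (Measure.restrict_union_le _ _) le_rfl)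
        (le_of_eq (lintegral_add_measure _ _ _))
    have main : g 1 ≤ (∫⁻ x in F, ∫⁻ y in Img ∩ B, ker n s (x - y)) +
        ∫⁻ x in F, ∫⁻ y in Img \ B, ker n s (x - y) := by
      rw [hg1]
      exact le_trans (lintegral_mono hsplit1) (le_of_eq (lintegral_add_left (meas_inner0 n s _) _))
    have far : (∫⁻ x in F, ∫⁻ y in Img \ B, ker n s (x - y)) ≤ M * Vv * Vv := by
      refine (double_bound n s (c := M) meas_slab (himgS.diff hBm) hF (diff_subset_diff_left hIs) ?_).trans ?_
      · rintro x hx y ⟨⟨w, hw, rfl⟩, hyB⟩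
        apply kerM
        have hx2 : x.1 ≤ 1/2 := hx.2
        have hyB' : ¬ ((1/2:ℝ) ≤ w.1 + 1 ∧ w.1 + 1 ≤ 3/4) := by
          simpa [hB, cvec, mem_Icc] using hyB
        have hw1 : -(1:ℝ)/2 ≤ w.1 := hw.1
        have hy1 : (3/4:ℝ) < w.1 + 1 := by
          by_contra hcon; push_neg at hcon; exact hyB' ⟨by linarith, hcon⟩
        show (1/4:ℝ) ≤ |x.1 - (w.1 + 1)|
        rw [abs_sub_comm]
        calc (1/4:ℝ) ≤ (w.1 + 1) - x.1 := by linarith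
          _ ≤ |(w.1 + 1) - x.1| := le_abs_self _
      · have h1 : volume (Img \ B) ≤ Vv := hvolImg ▸ measure_mono diff_subset
        have h3 : volume F ≤ Vv := le_of_eq hVv.symm
        exact mul_le_mul' (mul_le_mul' le_rfl h1) h3
    have near : (∫⁻ x in F, ∫⁻ y in Img ∩ B, ker n s (x - y)) ≤ PiS n s F + M * Vv * Vv := by
      have hsplitF : volume.restrict F ≤ volume.restrict (F ∩ A') + volume.restrict (F \ A') := by
        have hFe : F = (F ∩ A') ∪ (F \ A') := (inter_union_diff _ _).symm
        calc volume.restrict F = volume.restrict ((F ∩ A') ∪ (F \ A')) := by rw [← hFe]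
          _ ≤ _ := Measure.restrict_union_le _ _
      have h1 : (∫⁻ x in F, ∫⁻ y in Img ∩ B, ker n s (x - y)) ≤
          (∫⁻ x in F ∩ A', ∫⁻ y in Img ∩ B, ker n s (x - y)) +
          ∫⁻ x in F \ A', ∫⁻ y in Img ∩ B, ker n s (x - y) :=
        le_trans (lintegral_mono' hsplitF le_rfl) (le_of_eq (lintegral_add_measure _ _ _))
      refine h1.trans (add_le_add ?_ ?_)
      · refine le_of_eq ?_
        unfold PiS
        rw [htrans_eq]
      · refine (double_bound n s (c := M) (meas_slab.diff hA'm) hBm (diff_subset_diff_left hF)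
          inter_subset_right ?_).trans ?_
        · rintro x ⟨hxs, hxA⟩ y hy
          apply kerM
          have hx1 : x.1 ≤ 1/2 := hxs.2
          have hxA' : ¬ ((1/4:ℝ) ≤ x.1 ∧ x.1 ≤ 1/2) := by simpa [hA', mem_Icc] using hxA
          have hxlt : x.1 < 1/4 := by
            by_contra hcon; push_neg at hcon; exact hxA' ⟨hcon, hx1⟩
          have hy1 : (1/2:ℝ) ≤ y.1 := hy.1
          rw [abs_sub_comm]
          calc (1/4:ℝ) ≤ y.1 - x.1 := by linarith
            _ ≤ |y.1 - x.1| := le_abs_self _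
        · have h2 : volume (Img ∩ B) ≤ Vv := hvolImg ▸ measure_mono inter_subset_left
          have h3 : volume (F \ A') ≤ Vv := hVv ▸ measure_mono diff_subset
          exact mul_le_mul' (mul_le_mul' le_rfl h2) h3
    exact main.trans (add_le_add near far)
  have gm1 : g (-1) = g 1 := by
    have e1 : g (-1) = ∫⁻ x in F, ∫⁻ z in F, ker n s (x - (z + cvec ((-1:ℤ):ℝ))) := by
      rw [hgdef]
      simp only [if_neg (show (-1:ℤ) ≠ 0 by decide)]
      exact lintegral_congr fun x => trans_setLIntegral _ _ _
    have e2 : g 1 = ∫⁻ x in F, ∫⁻ z in F, ker n s (x - (z + cvec ((1:ℤ):ℝ))) := by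
      rw [hgdef]
      simp only [if_neg (show (1:ℤ) ≠ 0 by decide)]
      exact lintegral_congr fun x => trans_setLIntegral _ _ _
    rw [e1, e2]
    have hmeas : AEMeasurable
        (Function.uncurry fun (x z : V (n-1)) => ker n s (x - (z + cvec ((-1:ℤ):ℝ))))
        ((volume.restrict F).prod (volume.restrict F)) :=
      ((measurable_ker n s).comp (measurable_fst.sub (measurable_snd.add_const _))).aemeasurable
    rw [lintegral_lintegral_swap hmeas]
    refine lintegral_congr fun z => lintegral_congr fun x => ?_
    have hppt : x - (z + cvec ((-1:ℤ):ℝ)) = -(z - (x + cvec ((1:ℤ):ℝ))) := by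
      refine Prod.ext ?_ ?_
      · show x.1 - (z.1 + ((-1:ℤ):ℝ)) = -(z.1 - (x.1 + ((1:ℤ):ℝ)))
        push_cast; ring
      · show x.2 - (z.2 + 0) = -(z.2 - (x.2 + 0))
        simp
    rw [hppt, ker_neg]
  have gk : ∀ k : ℤ, (2:ℝ) ≤ |(k:ℝ)| → g k ≤ ENNReal.ofReal (4 / (k:ℝ)^2) * Vv * Vv := by
    intro k hk
    have hk0 : k ≠ 0 := by
      rintro rfl; norm_num at hk
    have hg : g k = ∫⁻ x in F, ∫⁻ y in (fun y : V (n-1) => y + cvec (k:ℝ)) '' F,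
        ker n s (x - y) := by
      rw [hgdef]; simp only [if_neg hk0]
    rw [hg]
    have himgS : MeasurableSet ((fun y : V (n-1) => y + cvec (k:ℝ)) '' slab (n-1)) :=
      (me _).measurableSet_image.2 meas_slab
    refine (double_bound n s (c := ENNReal.ofReal (4 / (k:ℝ)^2)) meas_slab himgS hF (image_mono hF) ?_).trans ?_
    · rintro x hx y ⟨w, hw, rfl⟩
      have h1 : |x.1 - w.1| ≤ 1 :=
        abs_le.mpr ⟨by linarith [hx.1, hw.2], by linarith [hx.2, hw.1]⟩
      have hdist : |(k:ℝ)|/2 ≤ |x.1 - (w.1 + (k:ℝ))| := by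
        calc |(k:ℝ)|/2 ≤ |(k:ℝ)| - 1 := by linarith
          _ ≤ |(k:ℝ)| - |x.1 - w.1| := by linarith
          _ ≤ |(k:ℝ) - (x.1 - w.1)| := abs_sub_abs_le_abs_sub _ _
          _ = |x.1 - (w.1 + (k:ℝ))| := by rw [abs_sub_comm]; ring_nf
      have hker := ker_le n hs0 (x := x - (w + cvec (k:ℝ))) (r := |(k:ℝ)|/2)
        (by linarith) hdist
      refine hker.trans (ENNReal.ofReal_le_ofReal ?_)
      have h1k : (1:ℝ) ≤ |(k:ℝ)|/2 := by linarith
      calc (|(k:ℝ)|/2) ^ (-((n:ℝ)+s)) ≤ (|(k:ℝ)|/2) ^ (-(2:ℝ)) :=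
          Real.rpow_le_rpow_of_exponent_le h1k (by linarith)
        _ = 4 / (k:ℝ)^2 := by
          rw [Real.rpow_neg (by positivity), show ((2:ℝ)) = ((2:ℕ):ℝ) by norm_num,
            Real.rpow_natCast, div_pow, sq_abs, inv_div]
          norm_num
    · rw [vol_image, hVv]
  -- Step 5: summation
  have step5 : ∑' k : ℤ, g k ≤ ENNReal.ofReal C * (Vv ^ 2 + PiS n s F) := by
    set X := PiS n s F with hX
    have hgh : ∀ k : ℤ, g k ≤ (if k = 1 ∨ k = -1 then X + M * Vv * Vv + M * Vv * Vv else 0)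
        + ENNReal.ofReal (4 / (k:ℝ)^2) * Vv * Vv := by
      intro k
      by_cases hk0 : k = 0
      · subst hk0; rw [g0]; exact zero_le'
      by_cases hk1 : k = 1
      · subst hk1; rw [if_pos (Or.inl rfl)]; exact g1.trans le_self_add
      by_cases hkm : k = -1
      · subst hkm; rw [if_pos (Or.inr rfl), gm1]; exact g1.trans le_self_add
      · rw [if_neg (by tauto), zero_add]
        refine gk k ?_
        rcases le_or_gt 0 k with hpos|hneg
        · have h2 : (2:ℤ) ≤ k := by omega
          rw [abs_of_nonneg (by exact_mod_cast hpos : (0:ℝ) ≤ (k:ℝ))]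
          exact_mod_cast h2
        · have h2 : (2:ℤ) ≤ -k := by omega
          rw [abs_of_neg (by exact_mod_cast hneg : ((k:ℝ) < 0))]
          exact_mod_cast h2
    refine (ENNReal.tsum_le_tsum hgh).trans ?_
    rw [ENNReal.tsum_add]
    have hA : (∑' k : ℤ, (if k = 1 ∨ k = -1 then X + M * Vv * Vv + M * Vv * Vv else 0))
        = (X + M * Vv * Vv + M * Vv * Vv) + (X + M * Vv * Vv + M * Vv * Vv) := by
      rw [tsum_eq_sum (s := ({1, -1} : Finset ℤ)) (f := fun k : ℤ =>
          if k = 1 ∨ k = -1 then X + M * Vv * Vv + M * Vv * Vv else 0) ?_]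
      · rw [Finset.sum_pair (by decide : (1:ℤ) ≠ -1)]
        rw [if_pos (Or.inl rfl), if_pos (Or.inr rfl)]
      · intro k hk
        simp only [Finset.mem_insert, Finset.mem_singleton] at hk
        simp only [if_neg (show ¬(k = 1 ∨ k = -1) by tauto)]
    have hB2 : (∑' k : ℤ, ENNReal.ofReal (4 / (k:ℝ)^2) * Vv * Vv)
        = ENNReal.ofReal Ξr * Vv * Vv := by
      simp_rw [mul_assoc]
      rw [ENNReal.tsum_mul_right,
        ← ENNReal.ofReal_tsum_of_nonneg (fun k => by positivity) hsum, ← hΞr]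
    rw [hA, hB2]
    have hq : (X + M*Vv*Vv + M*Vv*Vv) + (X + M*Vv*Vv + M*Vv*Vv) + ENNReal.ofReal Ξr * Vv * Vv
        = 2 * X + (4 * M + ENNReal.ofReal Ξr) * Vv^2 := by
      rw [pow_two]; ring
    rw [hq]
    have c1 : (2:ℝ≥0∞) ≤ ENNReal.ofReal C := by
      rw [show (2:ℝ≥0∞) = ENNReal.ofReal 2 by norm_num]
      exact ENNReal.ofReal_le_ofReal (by rw [hC]; nlinarith)
    have c2 : 4 * M + ENNReal.ofReal Ξr ≤ ENNReal.ofReal C := by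
      rw [hM, show (4:ℝ≥0∞) = ENNReal.ofReal 4 by norm_num,
        ← ENNReal.ofReal_mul (by norm_num), ← ENNReal.ofReal_add (by positivity) hΞnn]
      exact ENNReal.ofReal_le_ofReal (by rw [hC]; linarith)
    calc 2 * X + (4 * M + ENNReal.ofReal Ξr) * Vv^2
        ≤ ENNReal.ofReal C * X + ENNReal.ofReal C * Vv^2 :=
          add_le_add (mul_le_mul' c1 le_rfl) (mul_le_mul' c2 le_rfl)
      _ = ENNReal.ofReal C * (Vv^2 + X) := by rw [← mul_add, add_comm X]
  calc Pers n s F ≤ ∑' k : ℤ, ∫⁻ x in F,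
      ∫⁻ y in Fᶜ ∩ ((fun y : V (n-1) => y + cvec (k:ℝ)) '' slab (n-1)), ker n s (x - y) := step1
    _ ≤ ∑' k : ℤ, (P k + g k) := ENNReal.tsum_le_tsum step2
    _ = (∑' k : ℤ, P k) + ∑' k : ℤ, g k := ENNReal.tsum_add
    _ = PS n s F + ∑' k : ℤ, g k := by rw [step3]
    _ ≤ PS n s F + ENNReal.ofReal C * (Vv ^ 2 + PiS n s F) := add_le_add le_rfl step5
end
end

section
/- Cylinders have finite periodic nonlocal perimeter: for any R > 0, with C := {(x_1, x') : |x'| ≤ R}, one has P_S(C ∩ S) < +∞. -/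
open MeasureTheory Set
open scoped ENNReal Classical

noncomputable section

/-! ### Auxiliary lemmas -/

lemma exists_dyadic {t : ℝ} (ht : 1 ≤ t) : ∃ j : ℕ, 2 ^ j ≤ t ∧ t < 2 ^ (j + 1) := by
  obtain ⟨m, hm⟩ := pow_unbounded_of_one_lt t (by norm_num : (1:ℝ) < 2)
  have hP : ∃ j : ℕ, t < 2 ^ (j + 1) := ⟨m, hm.trans_le (by gcongr <;> norm_num)⟩
  refine ⟨Nat.find hP, ?_, Nat.find_spec hP⟩
  rcases Nat.eq_zero_or_pos (Nat.find hP) with h0 | h0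
  · simpa [h0] using ht
  · have := Nat.find_min hP (Nat.sub_lt h0 one_pos)
    push_neg at this
    have h1 : Nat.find hP - 1 + 1 = Nat.find hP := by omega
    rwa [h1] at this

lemma exists_int_interval (z1 : ℝ) : ∃ k : ℤ, -(1:ℝ)/2 - k ≤ z1 ∧ z1 < 1/2 - k := by
  refine ⟨-⌊z1 + 1/2⌋, ?_, ?_⟩
  · push_cast
    have := Int.floor_le (z1 + 1/2)
    linarith
  · push_cast
    have := Int.lt_floor_add_one (z1 + 1/2)
    linarith

lemma int_eq_of_close {k l : ℤ} (h1 : (-1:ℝ) < (k:ℝ) - l) (h2 : ((k:ℝ) - l) < 1) : k = l := by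
  have hc : ((k - l : ℤ) : ℝ) = (k:ℝ) - l := by push_cast; ring
  rw [← hc] at h1 h2
  have h1' : (-1:ℤ) < k - l := by exact_mod_cast h1
  have h2' : (k - l : ℤ) < 1 := by exact_mod_cast h2
  omega

lemma pow_term_eq {δ p D : ℝ} (hδ : 0 < δ) (j : ℕ) :
    ((2:ℝ) ^ j * δ) ^ (-p) * ((2:ℝ) ^ (j+1) * δ) ^ D
      = 2 ^ D * δ ^ (D - p) * ((2:ℝ) ^ (D - p)) ^ j := by
  have h2 : (0:ℝ) < 2 := two_pos
  rw [← Real.rpow_natCast (2:ℝ) j, ← Real.rpow_natCast (2:ℝ) (j+1),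
    ← Real.rpow_natCast ((2:ℝ) ^ (D - p)) j,
    Real.mul_rpow (Real.rpow_nonneg h2.le _) hδ.le,
    Real.mul_rpow (Real.rpow_nonneg h2.le _) hδ.le,
    ← Real.rpow_mul h2.le, ← Real.rpow_mul h2.le, ← Real.rpow_mul h2.le,
    Real.rpow_sub hδ]
  push_cast
  rw [show ((j:ℝ)+1) * D = D + j * D by ring, Real.rpow_add h2]
  ring_nf
  rw [Real.rpow_add h2 (-((j:ℝ) * p)) ((j:ℝ) * D), Real.rpow_neg hδ.le]
  ring

lemma pow_term_eq2 {R σ : ℝ} (hR : 0 < R) (D j : ℕ) :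
    R ^ D * (D:ℝ) * ((2:ℝ) ^ j)⁻¹ * (R * ((2:ℝ) ^ (j+1))⁻¹) ^ (-σ)
      = R ^ D * (D:ℝ) * R ^ (-σ) * 2 ^ σ * ((2:ℝ) ^ (σ - 1)) ^ j := by
  have h2 : (0:ℝ) < 2 := two_pos
  have e1 : ((2:ℝ) ^ j)⁻¹ = (2:ℝ) ^ (-(j:ℝ)) := by
    rw [← Real.rpow_natCast (2:ℝ) j, ← Real.rpow_neg h2.le]
  have e2 : ((2:ℝ) ^ (j+1))⁻¹ = (2:ℝ) ^ (-((j:ℝ)+1)) := by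
    rw [← Real.rpow_natCast (2:ℝ) (j+1), ← Real.rpow_neg h2.le]
    push_cast; ring_nf
  have e3 : ((2:ℝ) ^ (σ-1)) ^ j = (2:ℝ) ^ ((σ-1)*(j:ℝ)) := by
    rw [← Real.rpow_natCast ((2:ℝ)^(σ-1)) j, ← Real.rpow_mul h2.le]
  rw [e1, e2, e3, Real.mul_rpow hR.le (Real.rpow_nonneg h2.le _), ← Real.rpow_mul h2.le]
  rw [show R ^ D * (D:ℝ) * 2 ^ (-(j:ℝ)) * (R ^ (-σ) * 2 ^ (-((j:ℝ)+1) * -σ))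
      = R ^ D * (D:ℝ) * R ^ (-σ) * (2 ^ (-(j:ℝ)) * 2 ^ (-((j:ℝ)+1) * -σ)) from by ring,
    ← Real.rpow_add h2, mul_assoc (R ^ D * (D:ℝ) * R ^ (-σ)), ← Real.rpow_add h2]
  congr 1
  ring

section AuxE

variable {E : Type*} [NormedAddCommGroup E] [NormedSpace ℝ E] [MeasurableSpace E]
  [BorelSpace E] [FiniteDimensional ℝ E]

/-- Tail integral bound: `∫_{‖v‖ ≥ δ} ‖v‖^{-p} ≤ C δ^{D-p}`. -/
lemma tail_bound_s8 (μ : Measure E) [μ.IsAddHaarMeasure] {p : ℝ}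
    (hp : (Module.finrank ℝ E : ℝ) < p) :
    ∃ C : ℝ≥0∞, C ≠ ⊤ ∧ ∀ δ : ℝ, 0 < δ →
      ∫⁻ v in {v : E | δ ≤ ‖v‖}, (ENNReal.ofReal ‖v‖) ^ (-p) ∂μ
        ≤ C * ENNReal.ofReal (δ ^ ((Module.finrank ℝ E : ℝ) - p)) := by
  set D : ℝ := (Module.finrank ℝ E : ℝ) with hD
  have hD0 : 0 ≤ D := Nat.cast_nonneg _
  set a : ℝ := (2:ℝ) ^ (D - p) with ha
  have ha0 : 0 ≤ a := Real.rpow_nonneg two_pos.le _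
  have ha1 : ENNReal.ofReal a < 1 := by
    rw [← ENNReal.ofReal_one]
    exact ENNReal.ofReal_lt_ofReal_iff_of_nonneg ha0 |>.2
      (Real.rpow_lt_one_of_one_lt_of_neg one_lt_two (by linarith))
  have hB : μ (Metric.ball 0 1) ≠ ⊤ :=
    ((measure_mono Metric.ball_subset_closedBall).trans_lt measure_closedBall_lt_top).ne
  refine ⟨μ (Metric.ball 0 1) * ENNReal.ofReal (2 ^ D) * (1 - ENNReal.ofReal a)⁻¹, ?_, ?_⟩
  · refine ENNReal.mul_ne_top (ENNReal.mul_ne_top hB ENNReal.ofReal_ne_top) ?_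
    rw [Ne, ENNReal.inv_eq_top, tsub_eq_zero_iff_le]
    exact fun h => absurd (h.trans_lt ha1) (lt_irrefl _)
  intro δ hδ
  set A : ℕ → Set E := fun j => {v : E | 2 ^ j * δ ≤ ‖v‖ ∧ ‖v‖ ≤ 2 ^ (j+1) * δ} with hA
  have hcover : {v : E | δ ≤ ‖v‖} ⊆ ⋃ j, A j := by
    intro v hv
    have hv' : (1:ℝ) ≤ ‖v‖ / δ := (one_le_div hδ).2 hv
    obtain ⟨j, h1, h2⟩ := exists_dyadic hv'
    exact mem_iUnion.2 ⟨j, (le_div_iff₀ hδ).1 h1, ((div_le_iff₀ hδ).1 h2.le)⟩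
  calc ∫⁻ v in {v : E | δ ≤ ‖v‖}, (ENNReal.ofReal ‖v‖) ^ (-p) ∂μ
      ≤ ∫⁻ v in ⋃ j, A j, (ENNReal.ofReal ‖v‖) ^ (-p) ∂μ := lintegral_mono_set hcover
    _ ≤ ∑' j, ∫⁻ v in A j, (ENNReal.ofReal ‖v‖) ^ (-p) ∂μ := lintegral_iUnion_le _ _
    _ ≤ ∑' j, (μ (Metric.ball 0 1) * ENNReal.ofReal (2 ^ D * δ ^ (D - p)) *
          (ENNReal.ofReal a) ^ j) := by
        refine ENNReal.tsum_le_tsum fun j => ?_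
        have hbase : (0:ℝ) < 2 ^ j * δ := by positivity
        have step1 : ∫⁻ v in A j, (ENNReal.ofReal ‖v‖) ^ (-p) ∂μ
            ≤ ENNReal.ofReal (((2:ℝ) ^ j * δ) ^ (-p)) * μ (A j) := by
          rw [← setLIntegral_const]
          refine setLIntegral_mono measurable_const fun v hv => ?_
          have h1 : (0:ℝ) < ‖v‖ := hbase.trans_le hv.1
          rw [ENNReal.ofReal_rpow_of_pos h1]
          exact ENNReal.ofReal_le_ofReal (Real.rpow_le_rpow_of_nonpos hbase hv.1 (by
            have : (0:ℝ) ≤ p := le_of_lt (lt_of_le_of_lt hD0 hp); linarith))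
        have step2 : μ (A j) ≤ ENNReal.ofReal (((2:ℝ) ^ (j+1) * δ) ^ D) * μ (Metric.ball 0 1) := by
          have hsub : A j ⊆ Metric.closedBall 0 (2 ^ (j+1) * δ) := fun v hv => by
            simpa [Metric.mem_closedBall, dist_zero_right] using hv.2
          refine (measure_mono hsub).trans ?_
          rw [Measure.addHaar_closedBall μ 0 (by positivity)]
          rw [← Real.rpow_natCast (_ * δ) (Module.finrank ℝ E)]
        calc ∫⁻ v in A j, (ENNReal.ofReal ‖v‖) ^ (-p) ∂μ
            ≤ ENNReal.ofReal (((2:ℝ) ^ j * δ) ^ (-p)) *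
              (ENNReal.ofReal (((2:ℝ) ^ (j+1) * δ) ^ D) * μ (Metric.ball 0 1)) :=
              step1.trans (mul_le_mul_right step2 _)
          _ = μ (Metric.ball 0 1) * ENNReal.ofReal (2 ^ D * δ ^ (D - p)) *
              (ENNReal.ofReal a) ^ j := by
              have key : ENNReal.ofReal (((2:ℝ) ^ j * δ) ^ (-p)) *
                  ENNReal.ofReal (((2:ℝ) ^ (j+1) * δ) ^ D)
                  = ENNReal.ofReal (2 ^ D * δ ^ (D - p)) * (ENNReal.ofReal a) ^ j := by
                rw [← ENNReal.ofReal_mul (Real.rpow_nonneg hbase.le _), pow_term_eq hδ j,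
                  ← ENNReal.ofReal_pow ha0, ← ENNReal.ofReal_mul (by positivity)]
              rw [← mul_assoc, key]
              ring
    _ = μ (Metric.ball 0 1) * ENNReal.ofReal (2 ^ D * δ ^ (D - p)) *
          (1 - ENNReal.ofReal a)⁻¹ := by
        rw [ENNReal.tsum_mul_left, ENNReal.tsum_geometric]
    _ = μ (Metric.ball 0 1) * ENNReal.ofReal (2 ^ D) * (1 - ENNReal.ofReal a)⁻¹ *
          ENNReal.ofReal (δ ^ (D - p)) := by
        rw [ENNReal.ofReal_mul (by positivity)]
        ring

/-- Boundary layer bound: `∫_{B_R} (R-‖u‖)^{-σ} < ∞` for `σ < 1`. -/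
lemma ball_bound (μ : Measure E) [μ.IsAddHaarMeasure] [Nontrivial E] {σ : ℝ}
    (hσ0 : 0 < σ) (hσ : σ < 1) {R : ℝ} (hR : 0 < R) :
    ∫⁻ u in Metric.ball (0:E) R, (ENNReal.ofReal (R - ‖u‖)) ^ (-σ) ∂μ < ⊤ := by
  set D : ℕ := Module.finrank ℝ E with hD
  have hB : μ (Metric.ball 0 1) ≠ ⊤ :=
    ((measure_mono Metric.ball_subset_closedBall).trans_lt measure_closedBall_lt_top).ne
  set A : ℕ → Set E := fun j =>
    {u : E | R * ((2:ℝ) ^ (j+1))⁻¹ ≤ R - ‖u‖ ∧ R - ‖u‖ ≤ R * ((2:ℝ) ^ j)⁻¹} with hA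
  have hcover : Metric.ball (0:E) R ⊆ ⋃ j, A j := by
    intro u hu
    rw [Metric.mem_ball, dist_zero_right] at hu
    have hpos : 0 < R - ‖u‖ := by linarith
    have ht : (1:ℝ) ≤ R / (R - ‖u‖) := (one_le_div hpos).2 (by linarith [norm_nonneg u])
    obtain ⟨j, h1, h2⟩ := exists_dyadic ht
    have h2j : (0:ℝ) < (2:ℝ) ^ j := by positivity
    have h2j1 : (0:ℝ) < (2:ℝ) ^ (j+1) := by positivity
    refine mem_iUnion.2 ⟨j, ?_, ?_⟩
    · rw [mul_inv_le_iff₀ h2j1, mul_comm]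
      exact (div_le_iff₀ hpos).1 h2.le
    · have h1' : 2 ^ j * (R - ‖u‖) ≤ R := (le_div_iff₀ hpos).1 h1
      rw [mul_comm R, inv_mul_eq_div, le_div_iff₀ h2j]
      nlinarith
  have key : ∀ j : ℕ, ∫⁻ u in A j, (ENNReal.ofReal (R - ‖u‖)) ^ (-σ) ∂μ
      ≤ ENNReal.ofReal (R ^ D * (D:ℝ) * R ^ (-σ) * 2 ^ σ) *
        (ENNReal.ofReal ((2:ℝ) ^ (σ - 1))) ^ j * μ (Metric.ball 0 1) := by
    intro j
    have h2j : (0:ℝ) < (2:ℝ) ^ j := by positivity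
    have h2j1 : (0:ℝ) < (2:ℝ) ^ (j+1) := by positivity
    have hmono : (2:ℝ) ^ j ≤ 2 ^ (j+1) := by
      apply pow_le_pow_right₀ one_le_two; omega
    have hinv : ((2:ℝ) ^ (j+1))⁻¹ ≤ ((2:ℝ) ^ j)⁻¹ := by
      apply inv_anti₀ h2j hmono
    have hinv1 : ((2:ℝ) ^ j)⁻¹ ≤ 1 := by
      rw [inv_le_one_iff₀]; right; exact one_le_pow₀ one_le_two
    have hr1 : (0:ℝ) ≤ R * (1 - ((2:ℝ) ^ j)⁻¹) := by nlinarith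
    have hr2 : (0:ℝ) ≤ R * (1 - ((2:ℝ) ^ (j+1))⁻¹) := by nlinarith [hinv1.trans' hinv]
    have hub : ∫⁻ u in A j, (ENNReal.ofReal (R - ‖u‖)) ^ (-σ) ∂μ
        ≤ ENNReal.ofReal ((R * ((2:ℝ) ^ (j+1))⁻¹) ^ (-σ)) * μ (A j) := by
      rw [← setLIntegral_const]
      refine setLIntegral_mono measurable_const fun u hu => ?_
      have hb : (0:ℝ) < R * ((2:ℝ) ^ (j+1))⁻¹ := by positivity
      have h1 : (0:ℝ) < R - ‖u‖ := hb.trans_le hu.1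
      rw [ENNReal.ofReal_rpow_of_pos h1]
      exact ENNReal.ofReal_le_ofReal
        (Real.rpow_le_rpow_of_nonpos hb hu.1 (by linarith))
    have hmeas : μ (A j) ≤ ENNReal.ofReal (R ^ D * (D:ℝ) * ((2:ℝ) ^ j)⁻¹) *
        μ (Metric.ball 0 1) := by
      have hsub : A j ⊆ Metric.closedBall 0 (R * (1 - ((2:ℝ) ^ (j+1))⁻¹)) \
          Metric.ball 0 (R * (1 - ((2:ℝ) ^ j)⁻¹)) := by
        intro u hu
        constructor
        · rw [Metric.mem_closedBall, dist_zero_right]; nlinarith [hu.1]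
        · rw [Metric.mem_ball, dist_zero_right, not_lt]; nlinarith [hu.2]
      refine (measure_mono hsub).trans ?_
      rw [measure_diff (Metric.ball_subset_closedBall.trans
          (Metric.closedBall_subset_closedBall (by nlinarith)))
        measurableSet_ball.nullMeasurableSet
        (((measure_mono Metric.ball_subset_closedBall).trans_lt measure_closedBall_lt_top).ne),
        Measure.addHaar_closedBall μ 0 hr2, Measure.addHaar_ball μ 0 hr1]
      rw [tsub_le_iff_right, ← add_mul, ← ENNReal.ofReal_add (by positivity) (by positivity)]
      gcongr
      have hbern : 1 - (D:ℝ) * ((2:ℝ)^j)⁻¹ ≤ (1 - ((2:ℝ) ^ j)⁻¹) ^ D := by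
        have hber := one_add_mul_le_pow (a := -((2:ℝ)^j)⁻¹) (by nlinarith [inv_pos.2 h2j]) D
        calc 1 - (D:ℝ) * ((2:ℝ)^j)⁻¹ = 1 + D * (-((2:ℝ)^j)⁻¹) := by ring
          _ ≤ (1 + (-((2:ℝ)^j)⁻¹)) ^ D := hber
          _ = (1 - ((2:ℝ)^j)⁻¹) ^ D := by ring_nf
      have h1' : (R * (1 - ((2:ℝ) ^ (j+1))⁻¹)) ^ D ≤ R ^ D := by
        apply pow_le_pow_left₀ hr2
        nlinarith [inv_pos.2 h2j1]
      have expand : (R * (1 - ((2:ℝ) ^ j)⁻¹)) ^ D = R ^ D * (1 - ((2:ℝ)^j)⁻¹) ^ D :=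
        mul_pow _ _ _
      have scaled := mul_le_mul_of_nonneg_left hbern (pow_nonneg hR.le D)
      linarith
    calc ∫⁻ u in A j, (ENNReal.ofReal (R - ‖u‖)) ^ (-σ) ∂μ
        ≤ ENNReal.ofReal ((R * ((2:ℝ) ^ (j+1))⁻¹) ^ (-σ)) *
          (ENNReal.ofReal (R ^ D * (D:ℝ) * ((2:ℝ) ^ j)⁻¹) * μ (Metric.ball 0 1)) :=
          hub.trans (mul_le_mul_right hmeas _)
      _ = ENNReal.ofReal (R ^ D * (D:ℝ) * R ^ (-σ) * 2 ^ σ) *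
          (ENNReal.ofReal ((2:ℝ) ^ (σ - 1))) ^ j * μ (Metric.ball 0 1) := by
          rw [← mul_assoc, ← ENNReal.ofReal_mul (Real.rpow_nonneg (by positivity) _),
            mul_comm ((R * ((2:ℝ) ^ (j+1))⁻¹) ^ (-σ)), pow_term_eq2 hR,
            ← ENNReal.ofReal_pow (Real.rpow_nonneg two_pos.le _),
            ← ENNReal.ofReal_mul (by positivity)]
  calc ∫⁻ u in Metric.ball (0:E) R, (ENNReal.ofReal (R - ‖u‖)) ^ (-σ) ∂μ
      ≤ ∫⁻ u in ⋃ j, A j, (ENNReal.ofReal (R - ‖u‖)) ^ (-σ) ∂μ := lintegral_mono_set hcover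
    _ ≤ ∑' j, ∫⁻ u in A j, (ENNReal.ofReal (R - ‖u‖)) ^ (-σ) ∂μ := lintegral_iUnion_le _ _
    _ ≤ ∑' j, ENNReal.ofReal (R ^ D * (D:ℝ) * R ^ (-σ) * 2 ^ σ) *
          (ENNReal.ofReal ((2:ℝ) ^ (σ - 1))) ^ j * μ (Metric.ball 0 1) :=
        ENNReal.tsum_le_tsum key
    _ = ENNReal.ofReal (R ^ D * (D:ℝ) * R ^ (-σ) * 2 ^ σ) * μ (Metric.ball 0 1) *
          (1 - ENNReal.ofReal ((2:ℝ) ^ (σ - 1)))⁻¹ := by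
        simp_rw [mul_comm _ (μ (Metric.ball 0 1)), ← mul_assoc, ENNReal.tsum_mul_left,
          ENNReal.tsum_geometric]
    _ < ⊤ := by
        apply ENNReal.mul_lt_top
        · exact ENNReal.mul_lt_top ENNReal.ofReal_lt_top hB.lt_top
        · rw [ENNReal.inv_lt_top, tsub_pos_iff_lt, ← ENNReal.ofReal_one]
          exact ENNReal.ofReal_lt_ofReal_iff_of_nonneg (Real.rpow_nonneg two_pos.le _) |>.2
            (Real.rpow_lt_one_of_one_lt_of_neg one_lt_two (by linarith))

end AuxE

/-- Bound for the one-dimensional kernel integral. -/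
lemma Jbound {p : ℝ} (hp : 1 < p) : ∃ C : ℝ≥0∞, C ≠ ⊤ ∧ ∀ b : ℝ, 0 < b →
    ∫⁻ t : ℝ, (ENNReal.ofReal (Real.sqrt (t^2 + b^2))) ^ (-p)
      ≤ C * ENNReal.ofReal (b ^ (1 - p)) := by
  have hfr : ((Module.finrank ℝ ℝ : ℕ) : ℝ) = 1 := by simp
  obtain ⟨C₁, hC₁, h₁⟩ := tail_bound_s8 (volume : Measure ℝ) (p := p) (by rw [hfr]; exact hp)
  refine ⟨2 + C₁, by simp [hC₁], fun b hb => ?_⟩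
  have hsplit : (univ : Set ℝ) ⊆ Icc (-b) b ∪ {t : ℝ | b ≤ ‖t‖} := by
    intro t _
    rcases le_or_gt (|t|) b with h | h
    · exact Or.inl (abs_le.1 h)
    · exact Or.inr (le_of_lt (by simpa [Real.norm_eq_abs] using h))
  calc ∫⁻ t : ℝ, (ENNReal.ofReal (Real.sqrt (t^2 + b^2))) ^ (-p)
      = ∫⁻ t in (univ : Set ℝ), (ENNReal.ofReal (Real.sqrt (t^2 + b^2))) ^ (-p) := by
        rw [setLIntegral_univ]
    _ ≤ ∫⁻ t in Icc (-b) b ∪ {t : ℝ | b ≤ ‖t‖},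
          (ENNReal.ofReal (Real.sqrt (t^2 + b^2))) ^ (-p) := lintegral_mono_set hsplit
    _ ≤ (∫⁻ t in Icc (-b) b, (ENNReal.ofReal (Real.sqrt (t^2 + b^2))) ^ (-p))
        + ∫⁻ t in {t : ℝ | b ≤ ‖t‖}, (ENNReal.ofReal (Real.sqrt (t^2 + b^2))) ^ (-p) :=
        lintegral_union_le _ _ _
    _ ≤ ENNReal.ofReal (b ^ (-p)) * volume (Icc (-b) b)
        + ∫⁻ t in {t : ℝ | b ≤ ‖t‖}, (ENNReal.ofReal ‖t‖) ^ (-p) := by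
        refine add_le_add ?_ ?_
        · rw [← setLIntegral_const]
          refine setLIntegral_mono measurable_const fun t _ => ?_
          have h1 : 0 < Real.sqrt (t^2 + b^2) := Real.sqrt_pos.2 (by positivity)
          have h2 : b ≤ Real.sqrt (t^2 + b^2) := by
            rw [show b = Real.sqrt (b^2) from (Real.sqrt_sq hb.le).symm]
            exact Real.sqrt_le_sqrt (by nlinarith [Real.sq_sqrt (by positivity : (0:ℝ) ≤ b^2)])
          rw [ENNReal.ofReal_rpow_of_pos h1]
          exact ENNReal.ofReal_le_ofReal (Real.rpow_le_rpow_of_nonpos hb h2 (by linarith))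
        · refine setLIntegral_mono ((measurable_norm.ennreal_ofReal).pow_const _)
            fun t ht => ?_
          have ht' : (0:ℝ) < ‖t‖ := hb.trans_le ht
          have h1 : 0 < Real.sqrt (t^2 + b^2) := Real.sqrt_pos.2 (by positivity)
          have h2 : ‖t‖ ≤ Real.sqrt (t^2 + b^2) := by
            rw [Real.norm_eq_abs, show |t| = Real.sqrt (t^2) from (Real.sqrt_sq_eq_abs t).symm]
            exact Real.sqrt_le_sqrt (by nlinarith)
          rw [ENNReal.ofReal_rpow_of_pos h1, ENNReal.ofReal_rpow_of_pos ht']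
          exact ENNReal.ofReal_le_ofReal (Real.rpow_le_rpow_of_nonpos ht' h2 (by linarith))
    _ ≤ 2 * ENNReal.ofReal (b ^ (1 - p)) + C₁ * ENNReal.ofReal (b ^ (1 - p)) := by
        refine add_le_add (le_of_eq ?_) ?_
        · rw [Real.volume_Icc, show b - -b = 2 * b by ring,
            ← ENNReal.ofReal_mul (by positivity),
            show b ^ (-p) * (2*b) = 2 * (b ^ (-p) * b ^ (1:ℝ)) by rw [Real.rpow_one]; ring,
            ← Real.rpow_add hb, show -p + 1 = 1 - p by ring, ENNReal.ofReal_mul (by norm_num)]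
          simp
        · have := h₁ b hb
          rwa [hfr] at this
    _ = (2 + C₁) * ENNReal.ofReal (b ^ (1 - p)) := by ring

/-- Set lintegral of a translated function. -/
lemma setLIntegral_translate {G : Type*} [MeasurableSpace G] [AddCommGroup G] [MeasurableAdd G]
    (μ : Measure G) [μ.IsAddRightInvariant] (g : G → ℝ≥0∞) {A : Set G} (hA : MeasurableSet A)
    (c : G) : ∫⁻ y in A, g (y - c) ∂μ = ∫⁻ z in (fun z => z + c) ⁻¹' A, g z ∂μ := by
  rw [← lintegral_indicator hA, ← lintegral_indicator (hA.preimage (measurable_add_const c))]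
  have key : ∀ y : G, A.indicator (fun y => g (y - c)) y
      = ((fun z => z + c) ⁻¹' A).indicator g (y - c) := by
    intro y
    by_cases h : y ∈ A
    · rw [indicator_of_mem h, indicator_of_mem (by simpa [sub_add_cancel] using h)]
    · rw [indicator_of_notMem h, indicator_of_notMem (by simpa [sub_add_cancel] using h)]
  simp_rw [key, sub_eq_add_neg]
  exact lintegral_add_right_eq_self _ (-c)

lemma ker_measurable (n : ℕ) (s : ℝ) (d : ℕ) : Measurable (ker n s (d := d)) := by
  have hcont : Continuous fun x : V d => Real.sqrt (x.1 ^ 2 + ‖x.2‖ ^ 2) :=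
    ((continuous_fst.pow 2).add (continuous_snd.norm.pow 2)).sqrt
  exact (hcont.measurable.ennreal_ofReal).pow_const _

set_option maxHeartbeats 1000000 in
theorem cylinder_finite_energy (n : ℕ) (hn : 2 ≤ n) (s : ℝ) (hs : s ∈ Set.Ioo (0:ℝ) 1)
    (R : ℝ) (hR : 0 < R) :
    PS n s ({x : V (n-1) | ‖x.2‖ ≤ R} ∩ slab (n-1)) < ⊤ := by
  obtain ⟨hs0, hs1⟩ := hs
  set d : ℕ := n - 1 with hd
  have hd1 : 1 ≤ d := by omega
  have hdn : (d:ℝ) = (n:ℝ) - 1 := by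
    rw [hd, Nat.cast_sub (by omega : 1 ≤ n)]; norm_num
  have hn2 : (2:ℝ) ≤ (n:ℝ) := by exact_mod_cast hn
  have hp1 : (1:ℝ) < (n:ℝ) + s := by linarith
  haveI : Nonempty (Fin d) := ⟨⟨0, hd1⟩⟩
  haveI hRI : (volume : Measure (V d)).IsAddRightInvariant := by
    rw [Measure.volume_eq_prod]; infer_instance
  obtain ⟨Cj, hCj, hJ⟩ := Jbound hp1
  obtain ⟨Ct, hCt, hT⟩ := tail_bound_s8 (volume : Measure (EuclideanSpace ℝ (Fin d)))
    (p := (n:ℝ) + s - 1)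
    (by rw [finrank_euclideanSpace_fin, hdn]; linarith)
  rw [finrank_euclideanSpace_fin] at hT
  -- sets
  have hFS : ({x : V d | ‖x.2‖ ≤ R} ∩ slab d) ∩ slab d
      = (Icc (-(1:ℝ)/2) (1/2)) ×ˢ (Metric.closedBall (0 : EuclideanSpace ℝ (Fin d)) R) := by
    rw [inter_assoc, inter_self]
    ext ⟨a, w⟩
    simp [slab, Set.mem_prod, Metric.mem_closedBall, dist_zero_right, and_comm]
  have hY : slab d \ ({x : V d | ‖x.2‖ ≤ R} ∩ slab d)
      = (Icc (-(1:ℝ)/2) (1/2)) ×ˢ (Metric.closedBall (0 : EuclideanSpace ℝ (Fin d)) R)ᶜ := by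
    ext ⟨a, w⟩
    simp only [mem_diff, mem_inter_iff, mem_setOf_eq, Set.mem_prod, mem_compl_iff,
      Metric.mem_closedBall, dist_zero_right, slab]
    tauto
  have hmeasBc : MeasurableSet (Metric.closedBall (0 : EuclideanSpace ℝ (Fin d)) R)ᶜ :=
    measurableSet_closedBall.compl
  have hkerx : ∀ x : V d, Measurable fun z : V d => ker n s (x - z) := fun x =>
    (ker_measurable n s d).comp ((continuous_const.sub continuous_id).measurable)
  -- the key pointwise bound
  have key : ∀ x : V d, ‖x.2‖ < R →
      ∫⁻ y in (Icc (-(1:ℝ)/2) (1/2)) ×ˢ (Metric.closedBall (0:EuclideanSpace ℝ (Fin d)) R)ᶜ,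
        Kper n s (x - y)
      ≤ Cj * Ct * (ENNReal.ofReal (R - ‖x.2‖)) ^ (-s) := by
    intro x hx2
    have hδ : 0 < R - ‖x.2‖ := by linarith
    set Bc : Set (EuclideanSpace ℝ (Fin d)) := (Metric.closedBall 0 R)ᶜ with hBc
    -- replace Icc by Ico (a.e. equal)
    have hae : (Icc (-(1:ℝ)/2) (1/2)) ×ˢ Bc =ᵐ[volume] (Ico (-(1:ℝ)/2) (1/2)) ×ˢ Bc := by
      rw [ae_eq_set]
      constructor
      · refine measure_mono_null (fun z hz => ?_)
          (?_ : volume (({(1:ℝ)/2} : Set ℝ) ×ˢ (univ : Set (EuclideanSpace ℝ (Fin d)))) = 0)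
        · obtain ⟨⟨hz1, hz2⟩, hz3⟩ := hz
          refine ⟨?_, mem_univ _⟩
          rcases lt_or_eq_of_le hz1.2 with h | h
          · exact absurd ⟨⟨hz1.1, h⟩, hz2⟩ hz3
          · exact h
        · rw [Measure.volume_eq_prod, Measure.prod_prod]
          simp
      · rw [diff_eq_empty.mpr (prod_mono Ico_subset_Icc_self subset_rfl)]
        exact measure_empty
    rw [setLIntegral_congr hae]
    -- expand the periodic kernel
    have hKper : ∀ y : V d, Kper n s (x - y)
        = ∑' k : ℤ, ker n s ((x.1 - y.1) + (k:ℝ), x.2 - y.2) := fun y => rfl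
    have hc1 : ∀ k : ℤ, Continuous fun y : V d => ((x.1 - y.1) + (k:ℝ), x.2 - y.2) := fun k =>
      ((continuous_const.sub continuous_fst).add continuous_const).prodMk
        (continuous_const.sub continuous_snd)
    have e2 : ∫⁻ y in (Ico (-(1:ℝ)/2) (1/2)) ×ˢ Bc, Kper n s (x - y)
        = ∑' k : ℤ, ∫⁻ y in (Ico (-(1:ℝ)/2) (1/2)) ×ˢ Bc,
            ker n s ((x.1 - y.1) + (k:ℝ), x.2 - y.2) := by
      simp_rw [hKper]
      exact lintegral_tsum fun k =>
        ((ker_measurable n s d).comp (hc1 k).measurable).aemeasurable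
    -- translate each summand
    have e3 : ∀ k : ℤ, ∫⁻ y in (Ico (-(1:ℝ)/2) (1/2)) ×ˢ Bc,
          ker n s ((x.1 - y.1) + (k:ℝ), x.2 - y.2)
        = ∫⁻ z in (Ico (-(1:ℝ)/2 - (k:ℝ)) (1/2 - (k:ℝ))) ×ˢ Bc, ker n s (x - z) := by
      intro k
      have hptw : ∀ y : V d, ker n s ((x.1 - y.1) + (k:ℝ), x.2 - y.2)
          = ker n s (x - (y - ((k:ℝ), (0 : EuclideanSpace ℝ (Fin d))))) := by
        intro y
        congr 1
        refine Prod.ext ?_ ?_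
        · show x.1 - y.1 + (k:ℝ) = x.1 - (y.1 - (k:ℝ)); ring
        · show x.2 - y.2 = x.2 - (y.2 - 0); rw [sub_zero]
      simp_rw [hptw]
      rw [setLIntegral_translate volume (fun z => ker n s (x - z))
        (measurableSet_Ico.prod hmeasBc) ((k:ℝ), (0 : EuclideanSpace ℝ (Fin d)))]
      have hpre : (fun z : V d => z + ((k:ℝ), (0 : EuclideanSpace ℝ (Fin d)))) ⁻¹'
          ((Ico (-(1:ℝ)/2) (1/2)) ×ˢ Bc) = (Ico (-(1:ℝ)/2 - (k:ℝ)) (1/2 - (k:ℝ))) ×ˢ Bc := by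
        ext z
        simp only [mem_preimage, Set.mem_prod, Prod.fst_add, Prod.snd_add, mem_Ico, add_zero]
        constructor
        · rintro ⟨⟨h1, h2⟩, h3⟩; exact ⟨⟨by linarith, by linarith⟩, h3⟩
        · rintro ⟨⟨h1, h2⟩, h3⟩; exact ⟨⟨by linarith, by linarith⟩, h3⟩
      rw [hpre]
    -- sum the translates into one integral
    have hmk : ∀ k : ℤ, MeasurableSet ((Ico (-(1:ℝ)/2 - (k:ℝ)) (1/2 - (k:ℝ))) ×ˢ Bc) :=
      fun k => measurableSet_Ico.prod hmeasBc
    have hdisj : Pairwise (Function.onFun Disjoint fun k : ℤ =>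
        (Ico (-(1:ℝ)/2 - (k:ℝ)) (1/2 - (k:ℝ))) ×ˢ Bc) := by
      intro k l hkl
      rw [Function.onFun, Set.disjoint_left]
      rintro z ⟨hz1, _⟩ ⟨hw1, _⟩
      rw [mem_Ico] at hz1 hw1
      exact hkl (int_eq_of_close (by linarith [hz1.1, hz1.2, hw1.1, hw1.2])
        (by linarith [hz1.1, hz1.2, hw1.1, hw1.2]))
    have hunion : (⋃ k : ℤ, (Ico (-(1:ℝ)/2 - (k:ℝ)) (1/2 - (k:ℝ))) ×ˢ Bc)
        = (univ : Set ℝ) ×ˢ Bc := by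
      ext z
      simp only [mem_iUnion, Set.mem_prod, mem_Ico, mem_univ, true_and]
      constructor
      · rintro ⟨k, _, h2⟩; exact h2
      · intro h
        obtain ⟨k, hk1, hk2⟩ := exists_int_interval z.1
        exact ⟨k, ⟨hk1, hk2⟩, h⟩
    have e4 : ∑' k : ℤ, ∫⁻ z in (Ico (-(1:ℝ)/2 - (k:ℝ)) (1/2 - (k:ℝ))) ×ˢ Bc, ker n s (x - z)
        = ∫⁻ z in (univ : Set ℝ) ×ˢ Bc, ker n s (x - z) := by
      rw [← lintegral_iUnion hmk hdisj, hunion]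
    -- Fubini
    have e5 : ∫⁻ z in (univ : Set ℝ) ×ˢ Bc, ker n s (x - z)
        = ∫⁻ v in Bc, ∫⁻ t : ℝ, ker n s (x - (t, v)) := by
      rw [Measure.volume_eq_prod, ← Measure.prod_restrict,
        lintegral_prod_symm _ ((hkerx x).aemeasurable), Measure.restrict_univ]
    -- inner integral bound
    have e6 : ∀ v : EuclideanSpace ℝ (Fin d), v ∈ Bc →
        ∫⁻ t : ℝ, ker n s (x - (t, v))
          ≤ Cj * (ENNReal.ofReal ‖v - x.2‖) ^ (-((n:ℝ) + s - 1)) := by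
      intro v hv
      have hvR : R < ‖v‖ := by
        simpa [hBc, Metric.mem_closedBall, dist_zero_right, not_le] using hv
      have hb : 0 < ‖v - x.2‖ := by
        have := norm_sub_norm_le v x.2
        linarith
      have hker_eq : ∀ t : ℝ, ker n s (x - (t, v))
          = (fun a : ℝ =>
              (ENNReal.ofReal (Real.sqrt (a^2 + ‖v - x.2‖^2))) ^ (-((n:ℝ)+s))) (x.1 - t) := by
        intro t
        show (ENNReal.ofReal (Real.sqrt ((x.1 - t)^2 + ‖x.2 - v‖^2))) ^ (-((n:ℝ)+s)) = _
        rw [norm_sub_rev x.2 v]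
      have hfmeas : Measurable fun a : ℝ =>
          (ENNReal.ofReal (Real.sqrt (a^2 + ‖v - x.2‖^2))) ^ (-((n:ℝ)+s)) :=
        (((Real.continuous_sqrt.comp ((continuous_pow 2).add
          continuous_const)).measurable).ennreal_ofReal).pow_const _
      calc ∫⁻ t : ℝ, ker n s (x - (t, v))
          = ∫⁻ a : ℝ, (ENNReal.ofReal (Real.sqrt (a^2 + ‖v - x.2‖^2))) ^ (-((n:ℝ)+s)) := by
            simp_rw [hker_eq]
            exact (Measure.measurePreserving_sub_left volume x.1).lintegral_comp hfmeas
        _ ≤ Cj * ENNReal.ofReal (‖v - x.2‖ ^ (1 - ((n:ℝ)+s))) := hJ _ hb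
        _ = Cj * (ENNReal.ofReal ‖v - x.2‖) ^ (-((n:ℝ) + s - 1)) := by
            rw [show (1 - ((n:ℝ)+s)) = -((n:ℝ) + s - 1) by ring,
              ENNReal.ofReal_rpow_of_pos hb]
    -- outer integral bound
    have hsubtail : Bc ⊆ {v : EuclideanSpace ℝ (Fin d) | R - ‖x.2‖ ≤ ‖v - x.2‖} := by
      intro v hv
      have hvR : R < ‖v‖ := by
        simpa [hBc, Metric.mem_closedBall, dist_zero_right, not_le] using hv
      have := norm_sub_norm_le v x.2
      simp only [mem_setOf_eq]
      linarith
    have hgmeas : Measurable fun v : EuclideanSpace ℝ (Fin d) =>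
        (ENNReal.ofReal ‖v - x.2‖) ^ (-((n:ℝ) + s - 1)) :=
      (((continuous_id.sub continuous_const).norm.measurable).ennreal_ofReal).pow_const _
    have hAmeas : MeasurableSet {v : EuclideanSpace ℝ (Fin d) | R - ‖x.2‖ ≤ ‖v - x.2‖} := by
      have hc : Continuous fun v : EuclideanSpace ℝ (Fin d) => ‖v - x.2‖ :=
        (continuous_id.sub continuous_const).norm
      exact measurableSet_le measurable_const hc.measurable
    calc ∫⁻ y in (Ico (-(1:ℝ)/2) (1/2)) ×ˢ Bc, Kper n s (x - y)
        = ∫⁻ v in Bc, ∫⁻ t : ℝ, ker n s (x - (t, v)) := by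
          rw [e2]; simp_rw [e3]; rw [e4, e5]
      _ ≤ ∫⁻ v in Bc, Cj * (ENNReal.ofReal ‖v - x.2‖) ^ (-((n:ℝ) + s - 1)) :=
          setLIntegral_mono (hgmeas.const_mul Cj) e6
      _ = Cj * ∫⁻ v in Bc, (ENNReal.ofReal ‖v - x.2‖) ^ (-((n:ℝ) + s - 1)) :=
          lintegral_const_mul Cj hgmeas
      _ ≤ Cj * ∫⁻ v in {v : EuclideanSpace ℝ (Fin d) | R - ‖x.2‖ ≤ ‖v - x.2‖},
            (ENNReal.ofReal ‖v - x.2‖) ^ (-((n:ℝ) + s - 1)) :=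
          mul_le_mul_right (lintegral_mono_set hsubtail) _
      _ = Cj * ∫⁻ w in {w : EuclideanSpace ℝ (Fin d) | R - ‖x.2‖ ≤ ‖w‖},
            (ENNReal.ofReal ‖w‖) ^ (-((n:ℝ) + s - 1)) := by
          congr 1
          rw [setLIntegral_translate volume
            (fun w : EuclideanSpace ℝ (Fin d) => (ENNReal.ofReal ‖w‖) ^ (-((n:ℝ) + s - 1)))
            hAmeas x.2]
          have hpre2 : (fun z : EuclideanSpace ℝ (Fin d) => z + x.2) ⁻¹'
              {v : EuclideanSpace ℝ (Fin d) | R - ‖x.2‖ ≤ ‖v - x.2‖}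
              = {w : EuclideanSpace ℝ (Fin d) | R - ‖x.2‖ ≤ ‖w‖} := by
            ext z
            simp [add_sub_cancel_right]
          rw [hpre2]
      _ ≤ Cj * (Ct * ENNReal.ofReal ((R - ‖x.2‖) ^ ((d:ℝ) - ((n:ℝ) + s - 1)))) :=
          mul_le_mul_right (hT _ hδ) _
      _ = Cj * Ct * (ENNReal.ofReal (R - ‖x.2‖)) ^ (-s) := by
          rw [show (d:ℝ) - ((n:ℝ) + s - 1) = -s by rw [hdn]; ring,
            ENNReal.ofReal_rpow_of_pos hδ, mul_assoc]
  -- assemble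
  have haeF : (Icc (-(1:ℝ)/2) (1/2)) ×ˢ (Metric.closedBall (0:EuclideanSpace ℝ (Fin d)) R)
      =ᵐ[volume] (Icc (-(1:ℝ)/2) (1/2)) ×ˢ (Metric.ball (0:EuclideanSpace ℝ (Fin d)) R) := by
    rw [ae_eq_set]
    constructor
    · refine measure_mono_null (fun z hz => ?_)
        (?_ : volume ((univ : Set ℝ) ×ˢ
          (Metric.sphere (0:EuclideanSpace ℝ (Fin d)) R)) = 0)
      · obtain ⟨⟨hz1, hz2⟩, hz3⟩ := hz
        refine ⟨mem_univ _, ?_⟩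
        rw [Metric.mem_closedBall, dist_zero_right] at hz2
        rcases lt_or_eq_of_le hz2 with h | h
        · exact absurd ⟨hz1, by rwa [Metric.mem_ball, dist_zero_right]⟩ hz3
        · rw [Metric.mem_sphere, dist_zero_right]; exact h
      · rw [Measure.volume_eq_prod, Measure.prod_prod, Measure.addHaar_sphere]
        simp
    · rw [diff_eq_empty.mpr (prod_mono subset_rfl Metric.ball_subset_closedBall)]
      exact measure_empty
  have hbnd_meas : Measurable fun x : V d =>
      Cj * Ct * (ENNReal.ofReal (R - ‖x.2‖)) ^ (-s) :=
    ((((continuous_const.sub continuous_snd.norm).measurable).ennreal_ofReal).pow_const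
      _).const_mul _
  have hball : ∫⁻ u in Metric.ball (0:EuclideanSpace ℝ (Fin d)) R,
      (ENNReal.ofReal (R - ‖u‖)) ^ (-s) < ⊤ :=
    ball_bound volume hs0 hs1 hR
  have hfin : Cj * Ct * ∫⁻ u in Metric.ball (0:EuclideanSpace ℝ (Fin d)) R,
      (ENNReal.ofReal (R - ‖u‖)) ^ (-s) < ⊤ :=
    ENNReal.mul_lt_top (ENNReal.mul_lt_top hCj.lt_top hCt.lt_top) hball
  rw [PS, hFS, hY]
  calc ∫⁻ x in (Icc (-(1:ℝ)/2) (1/2)) ×ˢ (Metric.closedBall (0:EuclideanSpace ℝ (Fin d)) R),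
        ∫⁻ y in (Icc (-(1:ℝ)/2) (1/2)) ×ˢ (Metric.closedBall (0:EuclideanSpace ℝ (Fin d)) R)ᶜ,
          Kper n s (x - y)
      = ∫⁻ x in (Icc (-(1:ℝ)/2) (1/2)) ×ˢ (Metric.ball (0:EuclideanSpace ℝ (Fin d)) R),
        ∫⁻ y in (Icc (-(1:ℝ)/2) (1/2)) ×ˢ (Metric.closedBall (0:EuclideanSpace ℝ (Fin d)) R)ᶜ,
          Kper n s (x - y) := setLIntegral_congr haeF
    _ ≤ ∫⁻ x in (Icc (-(1:ℝ)/2) (1/2)) ×ˢ (Metric.ball (0:EuclideanSpace ℝ (Fin d)) R),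
          Cj * Ct * (ENNReal.ofReal (R - ‖x.2‖)) ^ (-s) := by
        refine setLIntegral_mono hbnd_meas fun x hx => ?_
        have hx2 : ‖x.2‖ < R := by
          have := hx.2
          rwa [Metric.mem_ball, dist_zero_right] at this
        exact key x hx2
    _ = Cj * Ct * ∫⁻ u in Metric.ball (0:EuclideanSpace ℝ (Fin d)) R,
          (ENNReal.ofReal (R - ‖u‖)) ^ (-s) := by
        rw [Measure.volume_eq_prod, ← Measure.prod_restrict, lintegral_prod
          (fun z : V d => Cj * Ct * (ENNReal.ofReal (R - ‖z.2‖)) ^ (-s))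
          (hbnd_meas.aemeasurable)]
        have inner_eq : ∫⁻ u in Metric.ball (0:EuclideanSpace ℝ (Fin d)) R,
            Cj * Ct * (ENNReal.ofReal (R - ‖u‖)) ^ (-s)
            = Cj * Ct * ∫⁻ u in Metric.ball (0:EuclideanSpace ℝ (Fin d)) R,
              (ENNReal.ofReal (R - ‖u‖)) ^ (-s) :=
          lintegral_const_mul _ ((((continuous_const.sub
            continuous_norm).measurable).ennreal_ofReal).pow_const _)
        simp_rw [inner_eq]
        rw [lintegral_const, Measure.restrict_apply MeasurableSet.univ, univ_inter,
          Real.volume_Icc]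
        norm_num
    _ < ⊤ := hfin
end
end

section
/- For the thin cylinder C := {(x_1, x') ∈ S : |x'| ≤ r} with r ∈ (0, 1/4), the cross term satisfies Π_S(C) ≤ C r^{n-s}, where Π_S(C) = ∫_{1/4}^{1/2} dx_1 ∫_{1/2}^{3/4} dy_1 ∫_{|x'|≤r} ∫_{|y'|≤r} |x-y|^{-(n+s)} dx' dy', for a constant C depending only on n, s. -/
open MeasureTheory Set
open scoped ENNReal Classical

noncomputable section

namespace ThinCylAux

open Metric


lemma rpow_neg_anti {a b : ℝ≥0∞} (h : a ≤ b) {q : ℝ} (hq : 0 ≤ q) : b ^ (-q) ≤ a ^ (-q) := by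
  rw [ENNReal.rpow_neg, ENNReal.rpow_neg]
  exact ENNReal.inv_le_inv.mpr (ENNReal.rpow_le_rpow h hq)

lemma lint_Ioi {q : ℝ} (hq : 1 < q) {c : ℝ} (hc : 0 < c) :
    ∫⁻ t in Ioi c, (ENNReal.ofReal t) ^ (-q) = ENNReal.ofReal (c ^ (1 - q) / (q - 1)) := by
  have h1 : ∀ᵐ t ∂(volume.restrict (Ioi c)), (ENNReal.ofReal t) ^ (-q) = ENNReal.ofReal (t ^ (-q)) := by
    filter_upwards [ae_restrict_mem measurableSet_Ioi] with t ht
    exact ENNReal.ofReal_rpow_of_pos (hc.trans ht)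
  rw [lintegral_congr_ae h1,
    ← ofReal_integral_eq_lintegral_ofReal (integrableOn_Ioi_rpow_of_lt (by linarith) hc)
      ((ae_restrict_iff' measurableSet_Ioi).mpr (.of_forall fun t ht =>
        Real.rpow_nonneg (hc.trans ht).le _)),
    integral_Ioi_rpow_of_lt (by linarith) hc]
  congr 1
  rw [show (-q + 1) = 1 - q by ring, show (1 - q) = -(q - 1) by ring]
  rw [div_neg, neg_div, neg_neg]


lemma Lmax {q : ℝ} (hq : 1 < q) {ρ b : ℝ} (hρ : 0 < ρ) (hb : 0 ≤ b) :
    ∫⁻ t in Ici b, (ENNReal.ofReal (max t ρ)) ^ (-q)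
      ≤ ENNReal.ofReal (q / (q - 1) * (max b ρ) ^ (1 - q)) := by
  set m := max b ρ with hm
  have hm0 : 0 < m := lt_max_of_lt_right hρ
  have hbm : b ≤ m := le_max_left _ _
  have hsub : Ici b ⊆ Icc b m ∪ Ioi m := by
    intro t ht
    rcases le_or_gt t m with h | h
    · exact Or.inl ⟨ht, h⟩
    · exact Or.inr h
  calc ∫⁻ t in Ici b, (ENNReal.ofReal (max t ρ)) ^ (-q)
      ≤ ∫⁻ t in Icc b m ∪ Ioi m, (ENNReal.ofReal (max t ρ)) ^ (-q) :=
        lintegral_mono_set hsub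
    _ ≤ (∫⁻ t in Icc b m, (ENNReal.ofReal (max t ρ)) ^ (-q))
        + ∫⁻ t in Ioi m, (ENNReal.ofReal (max t ρ)) ^ (-q) := lintegral_union_le _ _ _
    _ ≤ ENNReal.ofReal (m ^ (1 - q)) + ENNReal.ofReal (m ^ (1 - q) / (q - 1)) := by
        gcongr
        · calc ∫⁻ t in Icc b m, (ENNReal.ofReal (max t ρ)) ^ (-q)
              ≤ ∫⁻ _ in Icc b m, (ENNReal.ofReal ρ) ^ (-q) := by
                refine lintegral_mono fun t => ?_
                exact rpow_neg_anti (ENNReal.ofReal_le_ofReal (le_max_right _ _)) (by linarith)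
            _ = (ENNReal.ofReal ρ) ^ (-q) * volume (Icc b m) := setLIntegral_const _ _
            _ = ENNReal.ofReal (ρ ^ (-q)) * ENNReal.ofReal (m - b) := by
                rw [ENNReal.ofReal_rpow_of_pos hρ, Real.volume_Icc]
            _ = ENNReal.ofReal (ρ ^ (-q) * (m - b)) := by
                rw [ENNReal.ofReal_mul (Real.rpow_nonneg hρ.le _)]
            _ ≤ ENNReal.ofReal (m ^ (1 - q)) := by
                apply ENNReal.ofReal_le_ofReal
                rcases le_total b ρ with h | h
                · have hmr : m = ρ := max_eq_right h
                  rw [hmr]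
                  calc ρ ^ (-q) * (ρ - b) ≤ ρ ^ (-q) * ρ := by
                        apply mul_le_mul_of_nonneg_left (by linarith) (Real.rpow_nonneg hρ.le _)
                    _ = ρ ^ (1 - q) := by
                        nth_rewrite 2 [← Real.rpow_one ρ]
                        rw [← Real.rpow_add hρ]; ring_nf
                · have hmr : m = b := max_eq_left h
                  rw [hmr]
                  simp only [sub_self, mul_zero]
                  exact Real.rpow_nonneg (by linarith) _
        · calc ∫⁻ t in Ioi m, (ENNReal.ofReal (max t ρ)) ^ (-q)
              ≤ ∫⁻ t in Ioi m, (ENNReal.ofReal t) ^ (-q) := by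
                refine lintegral_mono fun t => ?_
                exact rpow_neg_anti (ENNReal.ofReal_le_ofReal (le_max_left _ _)) (by linarith)
            _ = ENNReal.ofReal (m ^ (1 - q) / (q - 1)) := lint_Ioi hq hm0
    _ = ENNReal.ofReal (q / (q - 1) * m ^ (1 - q)) := by
        rw [← ENNReal.ofReal_add (Real.rpow_nonneg hm0.le _)
          (div_nonneg (Real.rpow_nonneg hm0.le _) (by linarith))]
        congr 1
        have h1 : q - 1 ≠ 0 := by linarith
        field_simp
        ring


lemma measurePreserving_half_sub : MeasurePreserving (fun t : ℝ => 1/2 - t) volume volume := by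
  have h1 := measurePreserving_add_left (volume : Measure ℝ) (1/2)
  have h2 := Measure.measurePreserving_neg (volume : Measure ℝ)
  simpa [Function.comp_def, sub_eq_add_neg] using h1.comp h2

lemma oneD {p : ℝ} (hp : 2 < p) (ρ : ℝ) (hρ : 0 ≤ ρ) :
    ∫⁻ x1 in Icc (1/4 : ℝ) (1/2), ∫⁻ y1 in Icc (1/2 : ℝ) (3/4),
        (ENNReal.ofReal (max (y1 - x1) ρ)) ^ (-p)
      ≤ ENNReal.ofReal (p / (p - 1) * ((p - 1) / (p - 2))) * (ENNReal.ofReal ρ) ^ (2 - p) := by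
  have hp1 : (0:ℝ) < p - 1 := by linarith
  have hp2 : (0:ℝ) < p - 2 := by linarith
  have hc0 : 0 < p / (p - 1) * ((p - 1) / (p - 2)) :=
    mul_pos (div_pos (by linarith) hp1) (div_pos hp1 hp2)
  rcases eq_or_lt_of_le hρ with h0 | h0
  · rw [← h0]
    simp only [ENNReal.ofReal_zero, ENNReal.zero_rpow_of_neg (by linarith : 2 - p < 0)]
    have hne : ENNReal.ofReal (p / (p - 1) * ((p - 1) / (p - 2))) ≠ 0 := by
      simp only [ne_eq, ENNReal.ofReal_eq_zero, not_le]; exact hc0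
    rw [ENNReal.mul_top hne]
    exact le_top
  -- inner bound
  have inner_bd : ∀ x1 ∈ Icc (1/4 : ℝ) (1/2),
      ∫⁻ y1 in Icc (1/2 : ℝ) (3/4), (ENNReal.ofReal (max (y1 - x1) ρ)) ^ (-p)
        ≤ ENNReal.ofReal (p / (p - 1))
          * (ENNReal.ofReal (max (1/2 - x1) ρ)) ^ (-(p - 1)) := by
    intro x1 hx1
    have htr := (measurePreserving_add_right volume x1).setLIntegral_comp_preimage_emb
      (MeasurableEquiv.addRight x1).measurableEmbedding
      (fun y => (ENNReal.ofReal (max (y - x1) ρ)) ^ (-p)) (Icc (1/2) (3/4))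
    rw [← htr, preimage_add_const_Icc]
    have step : ∫⁻ t in Icc (1/2 - x1) (3/4 - x1),
        (ENNReal.ofReal (max (t + x1 - x1) ρ)) ^ (-p)
        ≤ ∫⁻ t in Ici (1/2 - x1), (ENNReal.ofReal (max t ρ)) ^ (-p) := by
      rw [setLIntegral_congr_fun measurableSet_Icc
        (fun t _ => by rw [add_sub_cancel_right])]
      exact lintegral_mono_set Icc_subset_Ici_self
    refine step.trans ((Lmax (by linarith) h0 (by linarith [hx1.2])).trans ?_)
    rw [ENNReal.ofReal_mul (le_of_lt (div_pos (by linarith) hp1)),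
      ← ENNReal.ofReal_rpow_of_pos (lt_max_of_lt_right h0), show (1 - p) = -(p-1) by ring]
  calc ∫⁻ x1 in Icc (1/4 : ℝ) (1/2), ∫⁻ y1 in Icc (1/2 : ℝ) (3/4),
        (ENNReal.ofReal (max (y1 - x1) ρ)) ^ (-p)
      ≤ ∫⁻ x1 in Icc (1/4 : ℝ) (1/2), ENNReal.ofReal (p / (p - 1))
          * (ENNReal.ofReal (max (1/2 - x1) ρ)) ^ (-(p - 1)) :=
        setLIntegral_mono' measurableSet_Icc inner_bd
    _ = ENNReal.ofReal (p / (p - 1)) * ∫⁻ x1 in Icc (1/4 : ℝ) (1/2),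
          (ENNReal.ofReal (max (1/2 - x1) ρ)) ^ (-(p - 1)) :=
        lintegral_const_mul' _ _ ENNReal.ofReal_ne_top
    _ ≤ ENNReal.ofReal (p / (p - 1)) * ENNReal.ofReal ((p-1) / (p - 2) * ρ ^ (2 - p)) := by
        gcongr
        have htr := measurePreserving_half_sub.setLIntegral_comp_preimage_emb
          (MeasurableEquiv.subLeft (1/2 : ℝ)).measurableEmbedding
          (fun u => (ENNReal.ofReal (max u ρ)) ^ (-(p - 1))) (Icc 0 (1/4))
        have hset : (fun x : ℝ => 1/2 - x) ⁻¹' Icc 0 (1/4) = Icc (1/4) (1/2) := by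
          ext x; simp only [mem_preimage, mem_Icc]; constructor <;> rintro ⟨h1, h2⟩ <;>
            constructor <;> linarith
        rw [hset] at htr
        rw [htr]
        have hL := Lmax (q := p - 1) (by linarith : 1 < p - 1) h0 (le_refl (0:ℝ))
        refine (le_trans (lintegral_mono_set Icc_subset_Ici_self) hL).trans ?_
        apply ENNReal.ofReal_le_ofReal
        rw [max_eq_right h0.le, show (1 - (p-1)) = 2 - p by ring, show p - 1 - 1 = p - 2 by ring]
    _ = ENNReal.ofReal (p / (p - 1) * ((p - 1) / (p - 2))) * (ENNReal.ofReal ρ) ^ (2 - p) := by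
        rw [ENNReal.ofReal_mul (le_of_lt (div_pos hp1 hp2)), ← ENNReal.ofReal_rpow_of_pos h0,
          ENNReal.ofReal_mul (le_of_lt (div_pos (by linarith) hp1)), mul_assoc]


lemma fubini_chain {d : ℕ} {p : ℝ} (hp : 2 < p) (r : ℝ) :
    ∫⁻ x in (Icc (1/4 : ℝ) (1/2)) ×ˢ closedBall (0 : EuclideanSpace ℝ (Fin d)) r,
      ∫⁻ y in (Icc (1/2 : ℝ) (3/4)) ×ˢ closedBall (0 : EuclideanSpace ℝ (Fin d)) r,
        (ENNReal.ofReal (max (y.1 - x.1) ‖x.2 - y.2‖)) ^ (-p)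
    ≤ ∫⁻ x2 in closedBall (0 : EuclideanSpace ℝ (Fin d)) r,
        ∫⁻ y2 in closedBall (0 : EuclideanSpace ℝ (Fin d)) r,
          ENNReal.ofReal (p / (p - 1) * ((p - 1) / (p - 2)))
            * (ENNReal.ofReal ‖x2 - y2‖) ^ (2 - p) := by
  set E := EuclideanSpace ℝ (Fin d)
  set Br := closedBall (0 : E) r
  set I1 := Icc (1/4 : ℝ) (1/2)
  set I2 := Icc (1/2 : ℝ) (3/4)
  -- basic measurable functions
  have meas0 : ∀ (x1 : ℝ) (x2 : E), Measurable (fun q : E × ℝ =>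
      (ENNReal.ofReal (max (q.2 - x1) ‖x2 - q.1‖)) ^ (-p)) := by
    intro x1 x2
    exact (((measurable_snd.sub measurable_const).max
      ((measurable_const.sub measurable_fst).norm)).ennreal_ofReal).pow_const _
  -- inner double integral over y as iterated integral, y2 outer
  have step1 : ∀ x : ℝ × E,
      ∫⁻ y in I2 ×ˢ Br, (ENNReal.ofReal (max (y.1 - x.1) ‖x.2 - y.2‖)) ^ (-p)
      = ∫⁻ y2 in Br, ∫⁻ y1 in I2, (ENNReal.ofReal (max (y1 - x.1) ‖x.2 - y2‖)) ^ (-p) := by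
    intro x
    rw [show (volume : Measure (ℝ × E)) = (volume : Measure ℝ).prod (volume : Measure E) from rfl,
      ← Measure.prod_restrict]
    exact lintegral_prod_symm _ ((((measurable_fst.sub measurable_const).max
      ((measurable_const.sub measurable_snd).norm)).ennreal_ofReal).pow_const _).aemeasurable
  have m3 : Measurable fun w : ((ℝ × E) × E) × ℝ =>
      (ENNReal.ofReal (max (w.2 - w.1.1.1) ‖w.1.1.2 - w.1.2‖)) ^ (-p) :=
    (((measurable_snd.sub measurable_fst.fst.fst).max
      ((measurable_fst.fst.snd.sub measurable_fst.snd).norm)).ennreal_ofReal).pow_const _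
  have m2 : Measurable fun q : (ℝ × E) × E =>
      ∫⁻ y1 in I2, (ENNReal.ofReal (max (y1 - q.1.1) ‖q.1.2 - q.2‖)) ^ (-p) :=
    m3.lintegral_prod_right'
  have measF : Measurable fun x : ℝ × E =>
      ∫⁻ y2 in Br, ∫⁻ y1 in I2, (ENNReal.ofReal (max (y1 - x.1) ‖x.2 - y2‖)) ^ (-p) :=
    m2.lintegral_prod_right'
  calc ∫⁻ x in I1 ×ˢ Br, ∫⁻ y in I2 ×ˢ Br,
        (ENNReal.ofReal (max (y.1 - x.1) ‖x.2 - y.2‖)) ^ (-p)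
      = ∫⁻ x in I1 ×ˢ Br, ∫⁻ y2 in Br, ∫⁻ y1 in I2,
          (ENNReal.ofReal (max (y1 - x.1) ‖x.2 - y2‖)) ^ (-p) :=
        lintegral_congr fun x => step1 x
    _ = ∫⁻ x2 in Br, ∫⁻ x1 in I1, ∫⁻ y2 in Br, ∫⁻ y1 in I2,
          (ENNReal.ofReal (max (y1 - x1) ‖x2 - y2‖)) ^ (-p) := by
        rw [show (volume : Measure (ℝ × E))
            = (volume : Measure ℝ).prod (volume : Measure E) from rfl,
          ← Measure.prod_restrict]
        exact lintegral_prod_symm _ measF.aemeasurable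
    _ = ∫⁻ x2 in Br, ∫⁻ y2 in Br, ∫⁻ x1 in I1, ∫⁻ y1 in I2,
          (ENNReal.ofReal (max (y1 - x1) ‖x2 - y2‖)) ^ (-p) := by
        refine lintegral_congr fun x2 => ?_
        have mS : Measurable fun w : ℝ × E =>
            ∫⁻ y1 in I2, (ENNReal.ofReal (max (y1 - w.1) ‖x2 - w.2‖)) ^ (-p) :=
          Measurable.lintegral_prod_right'
            ((((measurable_snd.sub measurable_fst.fst).max
              ((measurable_const.sub measurable_fst.snd).norm)).ennreal_ofReal).pow_const _)
        exact lintegral_lintegral_swap mS.aemeasurable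
    _ ≤ ∫⁻ x2 in Br, ∫⁻ y2 in Br,
          ENNReal.ofReal (p / (p - 1) * ((p - 1) / (p - 2)))
            * (ENNReal.ofReal ‖x2 - y2‖) ^ (2 - p) :=
        lintegral_mono fun x2 => lintegral_mono fun y2 => oneD hp _ (norm_nonneg _)


lemma ball_rpow_bound (d : ℕ) (hd : 0 < d) {α : ℝ} (h0 : 0 < α) (hα : α < d) :
    ∃ Cd : ℝ≥0∞, Cd ≠ ⊤ ∧ ∀ R : ℝ, 0 < R →
      ∫⁻ z in closedBall (0 : EuclideanSpace ℝ (Fin d)) R, (ENNReal.ofReal ‖z‖) ^ (-α)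
        ≤ Cd * ENNReal.ofReal (R ^ ((d : ℝ) - α)) := by
  set E := EuclideanSpace ℝ (Fin d)
  haveI : Nonempty (Fin d) := ⟨⟨0, hd⟩⟩
  haveI : Nontrivial E := inferInstance
  set c1 : ℝ≥0∞ := volume (closedBall (0 : E) 1) with hc1
  have hc1top : c1 ≠ ⊤ := (measure_closedBall_lt_top).ne
  set θ : ℝ := (2⁻¹ : ℝ) ^ ((d : ℝ) - α) with hθ
  have hθ0 : 0 < θ := Real.rpow_pos_of_pos (by norm_num) _
  have hθ1 : θ < 1 := by
    apply Real.rpow_lt_one (by norm_num) (by norm_num)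
    linarith
  refine ⟨c1 * ENNReal.ofReal (2 ^ α) * (1 - ENNReal.ofReal θ)⁻¹, ?_, ?_⟩
  · apply ENNReal.mul_ne_top (ENNReal.mul_ne_top hc1top ENNReal.ofReal_ne_top)
    rw [ENNReal.inv_ne_top]
    simp only [ne_eq, tsub_eq_zero_iff_le, not_le]
    exact ENNReal.ofReal_lt_one.mpr hθ1
  intro R hR
  -- annuli
  set A : ℕ → Set E := fun k =>
    closedBall 0 (R * (2⁻¹ : ℝ) ^ k) \ closedBall 0 (R * (2⁻¹ : ℝ) ^ (k + 1)) with hA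
  have hcover : closedBall (0 : E) R ⊆ {0} ∪ ⋃ k, A k := by
    intro z hz
    rcases eq_or_ne z 0 with rfl | hz0
    · exact Or.inl rfl
    right
    have hzn : 0 < ‖z‖ := norm_pos_iff.mpr hz0
    have hex : ∃ m, ¬ ‖z‖ ≤ R * (2⁻¹ : ℝ) ^ m := by
      have : Filter.Tendsto (fun m : ℕ => R * (2⁻¹ : ℝ) ^ m) Filter.atTop (nhds 0) := by
        simpa using (tendsto_pow_atTop_nhds_zero_of_lt_one
          (by norm_num : (0:ℝ) ≤ 2⁻¹) (by norm_num : (2⁻¹:ℝ) < 1)).const_mul R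
      rcases ((this.eventually (eventually_lt_nhds hzn)).exists) with ⟨m, hm⟩
      exact ⟨m, not_le.mpr hm⟩
    classical
    let j := Nat.find hex
    have hj : ¬ ‖z‖ ≤ R * (2⁻¹ : ℝ) ^ j := Nat.find_spec hex
    have hj0 : j ≠ 0 := by
      intro h
      apply hj
      rw [h]
      simpa using (mem_closedBall_zero_iff.mp hz)
    obtain ⟨k, hk⟩ := Nat.exists_eq_succ_of_ne_zero hj0
    have hQk : ‖z‖ ≤ R * (2⁻¹ : ℝ) ^ k := by
      by_contra h
      exact (Nat.find_min hex (by omega : k < j)) h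
    refine mem_iUnion.mpr ⟨k, ?_, ?_⟩
    · exact mem_closedBall_zero_iff.mpr hQk
    · intro hmem
      apply hj
      rw [hk]
      simpa using mem_closedBall_zero_iff.mp hmem
  -- measure of singleton is zero
  haveI : NullSingletonClass (volume : Measure E) := by infer_instance
  -- pointwise bound on each annulus and volume bound
  have hterm : ∀ k : ℕ, ∫⁻ z in A k, (ENNReal.ofReal ‖z‖) ^ (-α)
      ≤ ENNReal.ofReal (R ^ ((d : ℝ) - α) * 2 ^ α * θ ^ k) * c1 := by
    intro k
    have hrk1 : (0:ℝ) < R * (2⁻¹:ℝ) ^ (k+1) := by positivity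
    have hbd : ∀ z ∈ A k, (ENNReal.ofReal ‖z‖) ^ (-α)
        ≤ ENNReal.ofReal ((R * (2⁻¹:ℝ) ^ (k+1)) ^ (-α)) := by
      intro z hz
      have h1 : R * (2⁻¹:ℝ) ^ (k+1) ≤ ‖z‖ := by
        by_contra h
        exact hz.2 (mem_closedBall_zero_iff.mpr (le_of_lt (not_le.mp h)))
      rw [← ENNReal.ofReal_rpow_of_pos hrk1]
      exact rpow_neg_anti (ENNReal.ofReal_le_ofReal h1) h0.le
    have hAmeas : MeasurableSet (A k) :=
      measurableSet_closedBall.diff measurableSet_closedBall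
    calc ∫⁻ z in A k, (ENNReal.ofReal ‖z‖) ^ (-α)
        ≤ ∫⁻ _ in A k, ENNReal.ofReal ((R * (2⁻¹:ℝ) ^ (k+1)) ^ (-α)) :=
          setLIntegral_mono' hAmeas hbd
      _ = ENNReal.ofReal ((R * (2⁻¹:ℝ) ^ (k+1)) ^ (-α)) * volume (A k) :=
          setLIntegral_const _ _
      _ ≤ ENNReal.ofReal ((R * (2⁻¹:ℝ) ^ (k+1)) ^ (-α))
          * (ENNReal.ofReal ((R * (2⁻¹:ℝ) ^ k) ^ (d : ℕ)) * c1) := by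
          gcongr
          calc volume (A k) ≤ volume (closedBall (0:E) (R * (2⁻¹:ℝ) ^ k)) :=
                measure_mono diff_subset
            _ = ENNReal.ofReal ((R * (2⁻¹:ℝ) ^ k) ^ Module.finrank ℝ E) * volume (closedBall (0:E) 1) :=
                Measure.addHaar_closedBall' _ _ (by positivity)
            _ = ENNReal.ofReal ((R * (2⁻¹:ℝ) ^ k) ^ (d : ℕ)) * c1 := by
                rw [finrank_euclideanSpace_fin]
      _ = ENNReal.ofReal (R ^ ((d : ℝ) - α) * 2 ^ α * θ ^ k) * c1 := by
          rw [← mul_assoc, ← ENNReal.ofReal_mul (Real.rpow_nonneg hrk1.le _)]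
          congr 2
          -- real computation
          have h2 : (0:ℝ) < 2 := by norm_num
          have base : ∀ m : ℕ, ((2:ℝ)⁻¹) ^ m = (2:ℝ) ^ (-(m:ℝ)) := by
            intro m
            rw [← Real.rpow_natCast (2⁻¹:ℝ) m, Real.inv_rpow (by norm_num),
              ← Real.rpow_neg (by norm_num)]
          have hθ2 : θ = (2:ℝ) ^ (-((d:ℝ) - α)) := by
            rw [hθ, Real.inv_rpow (by norm_num), ← Real.rpow_neg (by norm_num)]
          have hrhs : R ^ ((d:ℝ) - α) * 2 ^ α * θ ^ k
              = R ^ ((d:ℝ) - α) * (2:ℝ) ^ (α + -((d:ℝ) - α) * (k:ℝ)) := by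
            rw [hθ2, ← Real.rpow_natCast ((2:ℝ) ^ (-((d:ℝ) - α))) k,
              ← Real.rpow_mul h2.le, mul_assoc, ← Real.rpow_add h2]
          rw [hrhs, base (k+1), base k,
            Real.mul_rpow hR.le (Real.rpow_nonneg h2.le _),
            mul_pow, ← Real.rpow_natCast R d, ← Real.rpow_natCast ((2:ℝ) ^ (-(k:ℝ))) d,
            ← Real.rpow_mul h2.le, ← Real.rpow_mul h2.le,
            mul_mul_mul_comm, ← Real.rpow_add hR, ← Real.rpow_add h2]
          congr 1
          · congr 1; push_cast; ring
          · congr 1; push_cast; ring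
  calc ∫⁻ z in closedBall (0 : E) R, (ENNReal.ofReal ‖z‖) ^ (-α)
      ≤ ∫⁻ z in {(0:E)} ∪ ⋃ k, A k, (ENNReal.ofReal ‖z‖) ^ (-α) := lintegral_mono_set hcover
    _ ≤ (∫⁻ z in {(0:E)}, (ENNReal.ofReal ‖z‖) ^ (-α))
        + ∫⁻ z in ⋃ k, A k, (ENNReal.ofReal ‖z‖) ^ (-α) := lintegral_union_le _ _ _
    _ ≤ 0 + ∑' k, ∫⁻ z in A k, (ENNReal.ofReal ‖z‖) ^ (-α) := by
        gcongr
        · rw [setLIntegral_measure_zero _ _ (measure_singleton (0:E))]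
        · exact lintegral_iUnion_le _ _
    _ ≤ ∑' k, ENNReal.ofReal (R ^ ((d : ℝ) - α) * 2 ^ α * θ ^ k) * c1 := by
        rw [zero_add]
        exact ENNReal.tsum_le_tsum hterm
    _ ≤ c1 * ENNReal.ofReal (2 ^ α) * (1 - ENNReal.ofReal θ)⁻¹
        * ENNReal.ofReal (R ^ ((d : ℝ) - α)) := by
        have : ∀ k : ℕ, ENNReal.ofReal (R ^ ((d : ℝ) - α) * 2 ^ α * θ ^ k) * c1
            = (ENNReal.ofReal (R ^ ((d : ℝ) - α)) * ENNReal.ofReal (2 ^ α) * c1)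
              * (ENNReal.ofReal θ) ^ k := by
          intro k
          rw [ENNReal.ofReal_mul (by positivity), ENNReal.ofReal_mul (by positivity),
            ENNReal.ofReal_pow hθ0.le]
          ring
        rw [tsum_congr this, ENNReal.tsum_mul_left, ENNReal.tsum_geometric]
        apply le_of_eq
        ring
  done

end ThinCylAux

open ThinCylAux Metric

theorem thin_cylinder_cross_term (n : ℕ) (hn : 2 ≤ n) (s : ℝ) (hs : s ∈ Set.Ioo (0:ℝ) 1) :
    ∃ C > (0:ℝ), ∀ r : ℝ, r ∈ Set.Ioo (0:ℝ) (1/4) →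
      PiS n s {x : V (n-1) | x.1 ∈ Icc (-(1:ℝ)/2) (1/2) ∧ ‖x.2‖ ≤ r}
        ≤ ENNReal.ofReal (C * r ^ ((n:ℝ) - s)) := by
  -- setup
  set d := n - 1 with hdd
  have hd : 0 < d := by omega
  have hdcast : (d : ℝ) = (n : ℝ) - 1 := by
    rw [hdd, Nat.cast_sub (by omega)]; norm_num
  set E := EuclideanSpace ℝ (Fin d) with hE
  set p : ℝ := (n : ℝ) + s with hpdef
  have hn2 : (2:ℝ) ≤ (n:ℝ) := by exact_mod_cast hn
  have hp : 2 < p := by simp only [hpdef]; linarith [hs.1]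
  have hα0 : (0:ℝ) < p - 2 := by linarith
  have hαd : p - 2 < (d:ℝ) := by rw [hdcast]; simp only [hpdef]; linarith [hs.2]
  obtain ⟨Cd, hCdtop, hCd⟩ := ball_rpow_bound d hd hα0 hαd
  set Cpe : ℝ≥0∞ := ENNReal.ofReal (p / (p - 1) * ((p - 1) / (p - 2))) with hCpe
  set c1 : ℝ≥0∞ := volume (Metric.closedBall (0 : E) 1) with hc1
  have hc1top : c1 ≠ ⊤ := measure_closedBall_lt_top.ne
  set K : ℝ≥0∞ := Cpe * Cd * c1 * ENNReal.ofReal (2 ^ (1 - s)) with hK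
  have hKtop : K ≠ ⊤ :=
    ENNReal.mul_ne_top (ENNReal.mul_ne_top (ENNReal.mul_ne_top ENNReal.ofReal_ne_top hCdtop)
      hc1top) ENNReal.ofReal_ne_top
  refine ⟨K.toReal + 1, by positivity, ?_⟩
  intro r hr
  obtain ⟨hr0, hr4⟩ := hr
  -- set identities
  have hA : {x : V d | x.1 ∈ Icc (-(1:ℝ)/2) (1/2) ∧ ‖x.2‖ ≤ r}
      ∩ {x : V d | x.1 ∈ Icc (1/4 : ℝ) (1/2)}
      = (Icc (1/4 : ℝ) (1/2)) ×ˢ Metric.closedBall (0 : E) r := by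
    ext ⟨x1, x2⟩
    simp only [mem_inter_iff, mem_setOf_eq, mem_Icc, mem_prod, Metric.mem_closedBall,
      dist_zero_right]
    constructor
    · rintro ⟨⟨_, h2⟩, h3⟩; exact ⟨h3, h2⟩
    · rintro ⟨⟨h1, h2⟩, h3⟩
      refine ⟨⟨⟨by linarith, h2⟩, h3⟩, h1, h2⟩
  have hB : htrans (1:ℝ) {x : V d | x.1 ∈ Icc (-(1:ℝ)/2) (1/2) ∧ ‖x.2‖ ≤ r}
      ∩ {y : V d | y.1 ∈ Icc (1/2 : ℝ) (3/4)}
      = (Icc (1/2 : ℝ) (3/4)) ×ˢ Metric.closedBall (0 : E) r := by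
    ext ⟨y1, y2⟩
    simp only [htrans, mem_inter_iff, mem_image, mem_setOf_eq, mem_Icc, mem_prod,
      Metric.mem_closedBall, dist_zero_right, Prod.exists, Prod.mk.injEq]
    constructor
    · rintro ⟨⟨a, b, ⟨⟨ha1, ha2⟩, hb⟩, heq1, heq2⟩, hy1, hy2⟩
      subst heq2
      exact ⟨⟨hy1, hy2⟩, hb⟩
    · rintro ⟨⟨h1, h2⟩, h3⟩
      exact ⟨⟨y1 - 1, y2, ⟨⟨⟨by linarith, by linarith⟩, h3⟩, by ring, rfl⟩⟩, ⟨h1, h2⟩⟩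
  -- kernel pointwise bound
  have hker : ∀ x y : V d, ker n s (x - y)
      ≤ (ENNReal.ofReal (max (y.1 - x.1) ‖x.2 - y.2‖)) ^ (-p) := by
    intro x y
    have hle : max (y.1 - x.1) ‖x.2 - y.2‖ ≤ eNorm (x - y) := by
      simp only [eNorm, Prod.fst_sub, Prod.snd_sub]
      apply max_le
      · calc y.1 - x.1 ≤ |x.1 - y.1| := by rw [abs_sub_comm]; exact le_abs_self _
          _ = Real.sqrt ((x.1 - y.1) ^ 2) := (Real.sqrt_sq_eq_abs _).symm
          _ ≤ Real.sqrt ((x.1 - y.1) ^ 2 + ‖x.2 - y.2‖ ^ 2) :=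
            Real.sqrt_le_sqrt (le_add_of_nonneg_right (sq_nonneg _))
      · calc ‖x.2 - y.2‖ = Real.sqrt (‖x.2 - y.2‖ ^ 2) :=
            (Real.sqrt_sq (norm_nonneg _)).symm
          _ ≤ Real.sqrt ((x.1 - y.1) ^ 2 + ‖x.2 - y.2‖ ^ 2) :=
            Real.sqrt_le_sqrt (le_add_of_nonneg_left (sq_nonneg _))
    show (ENNReal.ofReal (eNorm (x - y))) ^ (-((n:ℝ) + s)) ≤ _
    rw [show ((n:ℝ) + s) = p from rfl]
    exact rpow_neg_anti (ENNReal.ofReal_le_ofReal hle) (by linarith)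
  -- main computation
  have main : PiS n s {x : V d | x.1 ∈ Icc (-(1:ℝ)/2) (1/2) ∧ ‖x.2‖ ≤ r}
      ≤ K * ENNReal.ofReal (r ^ ((n:ℝ) - s)) := by
    unfold PiS
    rw [hA, hB]
    set Br := Metric.closedBall (0 : E) r with hBr
    have hβ : (d:ℝ) - (p - 2) = 1 - s := by rw [hdcast]; simp only [hpdef]; ring
    calc ∫⁻ x in (Icc (1/4 : ℝ) (1/2)) ×ˢ Br, ∫⁻ y in (Icc (1/2 : ℝ) (3/4)) ×ˢ Br,
          ker n s (x - y)
        ≤ ∫⁻ x in (Icc (1/4 : ℝ) (1/2)) ×ˢ Br, ∫⁻ y in (Icc (1/2 : ℝ) (3/4)) ×ˢ Br,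
            (ENNReal.ofReal (max (y.1 - x.1) ‖x.2 - y.2‖)) ^ (-p) :=
          lintegral_mono fun x => lintegral_mono fun y => hker x y
      _ ≤ ∫⁻ x2 in Br, ∫⁻ y2 in Br, Cpe * (ENNReal.ofReal ‖x2 - y2‖) ^ (2 - p) :=
          fubini_chain hp r
      _ ≤ ∫⁻ _ in Br, Cpe * (Cd * ENNReal.ofReal ((2*r) ^ ((d:ℝ) - (p - 2)))) := by
          apply setLIntegral_mono' measurableSet_closedBall
          intro x2 hx2
          rw [lintegral_const_mul' _ _ ENNReal.ofReal_ne_top]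
          gcongr
          have hmp : MeasurePreserving (fun y : E => x2 - y) volume volume := by
            have h1 := measurePreserving_add_left (volume : Measure E) x2
            have h2 := Measure.measurePreserving_neg (volume : Measure E)
            simpa [Function.comp_def, sub_eq_add_neg] using h1.comp h2
          have htr : ∫⁻ y2 in Br, (ENNReal.ofReal ‖x2 - y2‖) ^ (2 - p)
              = ∫⁻ z in (fun y : E => x2 - y) '' Br, (ENNReal.ofReal ‖z‖) ^ (2 - p) := by
            have h := hmp.setLIntegral_comp_emb
              (MeasurableEquiv.subLeft x2).measurableEmbedding
              (fun z => (ENNReal.ofReal ‖z‖) ^ (2 - p)) Br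
            simpa [MeasurableEquiv.subLeft, Equiv.subLeft] using h
          rw [htr]
          have himg : (fun y : E => x2 - y) '' Br ⊆ Metric.closedBall 0 (2*r) := by
            rintro z ⟨y, hy, rfl⟩
            simp only [hBr, Metric.mem_closedBall, dist_zero_right] at *
            have hx2' : ‖x2‖ ≤ r := (dist_zero_right x2).symm.trans_le hx2
            have hy' : ‖y‖ ≤ r := (dist_zero_right y).symm.trans_le hy
            refine (dist_zero_right (x2 - y)).trans_le ?_
            calc ‖x2 - y‖ ≤ ‖x2‖ + ‖y‖ := norm_sub_le x2 y
              _ ≤ r + r := add_le_add hx2' hy'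
              _ = 2*r := by ring
          refine (lintegral_mono_set himg).trans ?_
          rw [show (2 - p) = -(p - 2) by ring]
          exact hCd (2*r) (by linarith)
      _ = Cpe * (Cd * ENNReal.ofReal ((2*r) ^ ((d:ℝ) - (p - 2)))) * volume Br :=
          setLIntegral_const _ _
      _ ≤ K * ENNReal.ofReal (r ^ ((n:ℝ) - s)) := by
          rw [hβ]
          have hvol : volume Br = ENNReal.ofReal (r ^ (d : ℕ)) * c1 := by
            rw [hBr, Measure.addHaar_closedBall' _ _ hr0.le, finrank_euclideanSpace_fin]
          rw [hvol]
          refine le_of_eq ?_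
          have hexp : (2*r) ^ (1 - s) * r ^ (d : ℕ) = 2 ^ (1 - s) * r ^ ((n:ℝ) - s) := by
            rw [Real.mul_rpow (by norm_num) hr0.le, ← Real.rpow_natCast r d, mul_assoc,
              ← Real.rpow_add hr0, hdcast]
            congr 2
            ring
          calc Cpe * (Cd * ENNReal.ofReal ((2*r) ^ (1 - s)))
                * (ENNReal.ofReal (r ^ (d : ℕ)) * c1)
              = (Cpe * Cd * c1) * (ENNReal.ofReal ((2*r) ^ (1 - s))
                * ENNReal.ofReal (r ^ (d : ℕ))) := by ring
            _ = (Cpe * Cd * c1) * ENNReal.ofReal ((2*r) ^ (1 - s) * r ^ (d : ℕ)) := by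
                rw [← ENNReal.ofReal_mul (Real.rpow_nonneg (by linarith) _)]
            _ = (Cpe * Cd * c1) * (ENNReal.ofReal (2 ^ (1 - s))
                * ENNReal.ofReal (r ^ ((n:ℝ) - s))) := by
                rw [hexp, ENNReal.ofReal_mul (Real.rpow_nonneg (by norm_num) _)]
            _ = K * ENNReal.ofReal (r ^ ((n:ℝ) - s)) := by rw [hK]; ring
  refine main.trans ?_
  have h1 : K ≤ ENNReal.ofReal (K.toReal + 1) := by
    conv_lhs => rw [← ENNReal.ofReal_toReal hKtop]
    exact ENNReal.ofReal_le_ofReal (by linarith)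
  calc K * ENNReal.ofReal (r ^ ((n:ℝ) - s))
      ≤ ENNReal.ofReal (K.toReal + 1) * ENNReal.ofReal (r ^ ((n:ℝ) - s)) := by gcongr
    _ = ENNReal.ofReal ((K.toReal + 1) * r ^ ((n:ℝ) - s)) := by
        rw [ENNReal.ofReal_mul (by positivity)]
end
end

section
/- For X, Y > 0 and n ≥ 3, the integral ∫_0^{√19/10} R^{n-3} (X^2 + Y^2 R^2)^{-(n+s)/2} dR is bounded below by c X^{-(n+s)} min{(X/Y)^{n-2}, 1} for some constant c > 0 depending only on n and s. -/
open MeasureTheory Set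
open scoped ENNReal Classical

noncomputable section

theorem radial_integral_lower_bound (n : ℕ) (hn : 3 ≤ n) (s : ℝ) (hs : s ∈ Set.Ioo (0:ℝ) 1) :
    ∃ c > (0:ℝ), ∀ X Y : ℝ, 0 < X → 0 < Y →
      c * X ^ (-((n:ℝ) + s)) * min ((X / Y) ^ ((n:ℝ) - 2)) 1
        ≤ ∫ R in (0:ℝ)..(Real.sqrt 19 / 10),
            R ^ ((n:ℝ) - 3) * (X ^ 2 + Y ^ 2 * R ^ 2) ^ (-((n:ℝ) + s) / 2) := by
  set a : ℝ := Real.sqrt 19 / 10 with ha_def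
  have ha0 : 0 < a := by positivity
  have ha1 : a ≤ 1 := by
    rw [ha_def, div_le_one (by norm_num)]
    calc Real.sqrt 19 ≤ Real.sqrt 100 := Real.sqrt_le_sqrt (by norm_num)
    _ = 10 := by rw [show (100:ℝ) = 10 ^ 2 by norm_num, Real.sqrt_sq (by norm_num)]
  set m : ℕ := n - 3 with hm_def
  have hmcast : ((n:ℝ) - 3) = (m : ℝ) := by
    rw [hm_def]; push_cast [Nat.cast_sub hn]; ring
  have hkcast : ((n:ℝ) - 2) = ((m + 1 : ℕ) : ℝ) := by
    rw [hm_def]; push_cast [Nat.cast_sub hn]; ring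
  set p : ℝ := (n : ℝ) + s with hp_def
  have hp0 : 0 < p := by
    have : (0:ℝ) < n := by positivity
    linarith [hs.1]
  refine ⟨(2 : ℝ) ^ (-p / 2) * a ^ (m + 1) / (m + 1), by positivity, ?_⟩
  intro X Y hX hY
  set t : ℝ := X / Y with ht_def
  have ht0 : 0 < t := by positivity
  set b : ℝ := min a t with hb_def
  have hb0 : 0 < b := lt_min ha0 ht0
  have hba : b ≤ a := min_le_left _ _
  have hbt : b ≤ t := min_le_right _ _
  -- rewrite min of rpow as pow of min
  have hmin : min (t ^ ((n:ℝ) - 2)) 1 = (min t 1) ^ (m + 1) := by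
    rw [hkcast, Real.rpow_natCast]
    rcases le_total t 1 with h | h
    · rw [min_eq_left (pow_le_one₀ ht0.le h), min_eq_left h]
    · rw [min_eq_right (one_le_pow₀ h), min_eq_right h, one_pow]
  have hb_lower : a * min t 1 ≤ b := by
    rcases le_total t 1 with h | h
    · rw [min_eq_left h]
      rcases le_total a t with h2 | h2
      · rw [hb_def, min_eq_left h2]; nlinarith
      · rw [hb_def, min_eq_right h2]; nlinarith
    · rw [min_eq_right h, mul_one, hb_def, min_eq_left (ha1.trans h)]
  -- the key constant
  have hc'pos : (0:ℝ) < (2:ℝ) ^ (-p / 2) * X ^ (-p) := by positivity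
  -- pointwise bound on [0, b]
  have hpt : ∀ R ∈ Set.Icc (0:ℝ) b,
      (2:ℝ) ^ (-p / 2) * X ^ (-p) * R ^ m
        ≤ R ^ m * (X ^ 2 + Y ^ 2 * R ^ 2) ^ (-p / 2) := by
    intro R hR
    rw [mul_comm ((2:ℝ) ^ (-p / 2) * X ^ (-p)) (R ^ m)]
    refine mul_le_mul_of_nonneg_left ?_ (pow_nonneg hR.1 m)
    have hYR : Y * R ≤ X := by
      have : R ≤ t := hR.2.trans hbt
      rw [ht_def, le_div_iff₀ hY] at this
      linarith
    have hsq : (Y * R) ^ 2 ≤ X ^ 2 := pow_le_pow_left₀ (mul_nonneg hY.le hR.1) hYR 2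
    have hbase : X ^ 2 + Y ^ 2 * R ^ 2 ≤ 2 * X ^ 2 := by nlinarith [hsq]
    have h1 : (2 * X ^ 2 : ℝ) ^ (-p / 2) ≤ (X ^ 2 + Y ^ 2 * R ^ 2) ^ (-p / 2) :=
      Real.rpow_le_rpow_of_nonpos (by positivity) hbase (by linarith)
    refine le_trans (le_of_eq ?_) h1
    rw [Real.mul_rpow (by norm_num) (by positivity)]
    congr 1
    rw [← Real.rpow_natCast X 2, ← Real.rpow_mul hX.le]
    congr 1
    push_cast
    ring
  -- integrand is continuous
  have hcont : Continuous (fun R : ℝ => R ^ m * (X ^ 2 + Y ^ 2 * R ^ 2) ^ (-p / 2)) := by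
    refine (continuous_pow m).mul ?_
    refine Continuous.rpow_const (continuous_const.add (continuous_const.mul (continuous_pow 2))) fun R => Or.inl ?_
    positivity
  -- rewrite the integrand using nat pow
  have hinteq : (∫ R in (0:ℝ)..a, R ^ ((n:ℝ) - 3) * (X ^ 2 + Y ^ 2 * R ^ 2) ^ (-p / 2))
      = ∫ R in (0:ℝ)..a, R ^ m * (X ^ 2 + Y ^ 2 * R ^ 2) ^ (-p / 2) := by
    congr 1; funext R; rw [hmcast, Real.rpow_natCast]
  rw [hinteq]
  have hint1 : (∫ R in (0:ℝ)..b, R ^ m * (X ^ 2 + Y ^ 2 * R ^ 2) ^ (-p / 2))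
      ≤ ∫ R in (0:ℝ)..a, R ^ m * (X ^ 2 + Y ^ 2 * R ^ 2) ^ (-p / 2) := by
    refine intervalIntegral.integral_mono_interval le_rfl hb0.le hba ?_
      (hcont.intervalIntegrable 0 a)
    filter_upwards [ae_restrict_mem measurableSet_Ioc] with R hR
    have hR0 : 0 ≤ R := hR.1.le
    positivity
  refine le_trans ?_ hint1
  have hint2 : (∫ R in (0:ℝ)..b, (2:ℝ) ^ (-p / 2) * X ^ (-p) * R ^ m)
      ≤ ∫ R in (0:ℝ)..b, R ^ m * (X ^ 2 + Y ^ 2 * R ^ 2) ^ (-p / 2) := by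
    refine intervalIntegral.integral_mono_on hb0.le ?_ (hcont.intervalIntegrable 0 b) hpt
    exact (continuous_const.mul (continuous_pow m)).intervalIntegrable 0 b
  refine le_trans ?_ hint2
  have hval : (∫ R in (0:ℝ)..b, (2:ℝ) ^ (-p / 2) * X ^ (-p) * R ^ m)
      = (2:ℝ) ^ (-p / 2) * X ^ (-p) * (b ^ (m + 1) / (m + 1)) := by
    rw [intervalIntegral.integral_const_mul, integral_pow]
    norm_num
  rw [hval, hmin]
  have hpow : a ^ (m + 1) * (min t 1) ^ (m + 1) ≤ b ^ (m + 1) := by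
    rw [← mul_pow]
    exact pow_le_pow_left₀ (by positivity) hb_lower (m + 1)
  have hm1 : (0:ℝ) < (m : ℝ) + 1 := by positivity
  calc (2:ℝ) ^ (-p / 2) * a ^ (m + 1) / (↑m + 1) * X ^ (-p) * (t ⊓ 1) ^ (m + 1)
      = (2:ℝ) ^ (-p / 2) * X ^ (-p) * (a ^ (m + 1) * (t ⊓ 1) ^ (m + 1)) / (↑m + 1) := by ring
    _ ≤ (2:ℝ) ^ (-p / 2) * X ^ (-p) * b ^ (m + 1) / (↑m + 1) := by gcongr
    _ = (2:ℝ) ^ (-p / 2) * X ^ (-p) * (b ^ (m + 1) / (↑m + 1)) := by ring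
end
end

section
/- Uniform L^∞ energy bound implies L^1 convergence of f_k^{n-1}: Suppose f_k : [0,1/2] → [0,+∞] are decreasing, ∫_0^{1/2} f_k^{n-1} = C_2 for all k, and there exist C_⋆ > 1 such that for all M ≥ C_⋆ and all k, ∫_0^{ε_k(M)} f_k^{n-1}(x_1) dx_1 ≤ C_⋆ M^{-s(n-1)}, where ε_k(M) := inf{r : f_k(r) < M}. If moreover f_k → f almost everywhere on (0,1/2), then f_k^{n-1} → f^{n-1} in L^1(0,1/2), and in particular ∫_0^{1/2} f^{n-1} = C_2. -/
open MeasureTheory Set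
open scoped ENNReal Classical

noncomputable section

private lemma key_dist (a b L : ℝ≥0∞) :
    (a - b) + (b - a) ≤ ((a ⊓ L - b ⊓ L) + (b ⊓ L - a ⊓ L)) + ((a - L) + (b - L)) := by
  have hmin : ∀ x : ℝ≥0∞, x - x ⊓ L = x - L := by
    intro x
    rcases le_total x L with h | h
    · simp [inf_eq_left.2 h, tsub_eq_zero_of_le h]
    · simp [inf_eq_right.2 h]
  have h1 : a - b ≤ (a ⊓ L - b ⊓ L) + (a - L) := by
    calc a - b ≤ (a - a ⊓ L) + (a ⊓ L - b) := tsub_le_tsub_add_tsub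
      _ ≤ (a - L) + (a ⊓ L - b ⊓ L) := by
          rw [hmin a]
          exact add_le_add_right (tsub_le_tsub_left inf_le_left _) _
      _ = (a ⊓ L - b ⊓ L) + (a - L) := add_comm _ _
  have h2 : b - a ≤ (b ⊓ L - a ⊓ L) + (b - L) := by
    calc b - a ≤ (b - b ⊓ L) + (b ⊓ L - a) := tsub_le_tsub_add_tsub
      _ ≤ (b - L) + (b ⊓ L - a ⊓ L) := by
          rw [hmin b]
          exact add_le_add_right (tsub_le_tsub_left inf_le_left _) _
      _ = (b ⊓ L - a ⊓ L) + (b - L) := add_comm _ _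
  calc (a - b) + (b - a) ≤ ((a ⊓ L - b ⊓ L) + (a - L)) + ((b ⊓ L - a ⊓ L) + (b - L)) :=
        add_le_add h1 h2
    _ = ((a ⊓ L - b ⊓ L) + (b ⊓ L - a ⊓ L)) + ((a - L) + (b - L)) := by ring
theorem L1_convergence (n : ℕ) (hn : 2 ≤ n) (s : ℝ) (hs : s ∈ Set.Ioo (0:ℝ) 1)
    (C₂ Cstar : ℝ) (hC₂ : 0 < C₂) (hCstar : 1 < Cstar)
    (f : ℕ → ℝ → ℝ≥0∞) (flim : ℝ → ℝ≥0∞)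
    (hmono : ∀ k, AntitoneOn (f k) (Icc 0 (1/2)))
    (hvol : ∀ k, ∫⁻ x in Ioc (0:ℝ) (1/2), (f k x) ^ ((n:ℝ) - 1) = ENNReal.ofReal C₂)
    (hbound : ∀ M : ℝ, Cstar ≤ M → ∀ k,
      ∫⁻ x in Ioc (0:ℝ) (sInf {r : ℝ | r ∈ Icc 0 (1/2) ∧ f k r < ENNReal.ofReal M}),
          (f k x) ^ ((n:ℝ) - 1)
        ≤ ENNReal.ofReal (Cstar * M ^ (-(s * ((n:ℝ) - 1)))))
    (hae : ∀ᵐ x ∂(volume.restrict (Ioc (0:ℝ) (1/2))),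
      Filter.Tendsto (fun k => f k x) Filter.atTop (nhds (flim x))) :
    Filter.Tendsto
        (fun k => ∫⁻ x in Ioc (0:ℝ) (1/2),
          ((f k x) ^ ((n:ℝ) - 1) - (flim x) ^ ((n:ℝ) - 1)) +
            ((flim x) ^ ((n:ℝ) - 1) - (f k x) ^ ((n:ℝ) - 1)))
        Filter.atTop (nhds 0) ∧
      ∫⁻ x in Ioc (0:ℝ) (1/2), (flim x) ^ ((n:ℝ) - 1) = ENNReal.ofReal C₂ := by
  have hn2 : (2:ℝ) ≤ (n:ℝ) := by exact_mod_cast hn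
  set a : ℝ := (n:ℝ) - 1 with hadef
  have ha1 : (1:ℝ) ≤ a := by simp only [hadef]; linarith
  have ha0 : (0:ℝ) ≤ a := by linarith
  -- measurability
  have fmeas : ∀ k, AEMeasurable (f k) (volume.restrict (Ioc (0:ℝ) (1/2))) := fun k =>
    aemeasurable_restrict_of_antitoneOn measurableSet_Ioc ((hmono k).mono Ioc_subset_Icc_self)
  have gmeas : ∀ k, AEMeasurable (fun x => (f k x) ^ a) (volume.restrict (Ioc (0:ℝ) (1/2))) :=
    fun k => ENNReal.continuous_rpow_const.measurable.comp_aemeasurable (fmeas k)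
  have flimmeas : AEMeasurable flim (volume.restrict (Ioc (0:ℝ) (1/2))) :=
    aemeasurable_of_tendsto_metrizable_ae Filter.atTop fmeas hae
  have Gmeas : AEMeasurable (fun x => (flim x) ^ a) (volume.restrict (Ioc (0:ℝ) (1/2))) :=
    ENNReal.continuous_rpow_const.measurable.comp_aemeasurable flimmeas
  have htendsto : ∀ᵐ x ∂(volume.restrict (Ioc (0:ℝ) (1/2))),
      Filter.Tendsto (fun k => (f k x) ^ a) Filter.atTop (nhds ((flim x) ^ a)) :=
    hae.mono fun x hx => (ENNReal.continuous_rpow_const.tendsto _).comp hx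
  set M₀ : ℝ := max Cstar (2*C₂ + 1) with hM₀def
  -- the uniform tail bound
  have htail : ∀ M : ℝ, M₀ ≤ M → ∀ k,
      ∫⁻ x in Ioc (0:ℝ) (1/2), ((f k x) ^ a - (ENNReal.ofReal M) ^ a)
        ≤ ENNReal.ofReal (Cstar * M ^ (-(s * a))) := by
    intro M hM k
    have hMC : Cstar ≤ M := le_trans (le_max_left _ _) hM
    have hM1 : (1:ℝ) ≤ M := le_trans hCstar.le hMC
    have hM2 : 2*C₂ + 1 ≤ M := le_trans (le_max_right _ _) hM
    set E : Set ℝ := {r : ℝ | r ∈ Icc (0:ℝ) (1/2) ∧ f k r < ENNReal.ofReal M} with hEdef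
    have hbdd : BddBelow E := ⟨0, fun r hr => hr.1.1⟩
    have hEne : E.Nonempty := by
      by_contra hne
      have hge : ∀ r ∈ Icc (0:ℝ) (1/2), ENNReal.ofReal M ≤ f k r := by
        intro r hr
        by_contra hlt
        exact hne ⟨r, hr, lt_of_not_ge hlt⟩
      have h1 : ∫⁻ _x in Ioc (0:ℝ) (1/2), (ENNReal.ofReal M) ^ a
          ≤ ∫⁻ x in Ioc (0:ℝ) (1/2), (f k x) ^ a := by
        refine lintegral_mono_ae ((ae_restrict_iff' measurableSet_Ioc).2
          (Filter.Eventually.of_forall fun x hx => ?_))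
        exact ENNReal.rpow_le_rpow (hge x ⟨hx.1.le, hx.2⟩) ha0
      have h2 : ∫⁻ _x in Ioc (0:ℝ) (1/2), (ENNReal.ofReal M) ^ a
          = (ENNReal.ofReal M) ^ a * ENNReal.ofReal (1/2) := by
        rw [setLIntegral_const, Real.volume_Ioc]
        norm_num
      have h3 : ENNReal.ofReal (M/2) ≤ ENNReal.ofReal C₂ := by
        calc ENNReal.ofReal (M/2) = ENNReal.ofReal M * ENNReal.ofReal (1/2) := by
              rw [← ENNReal.ofReal_mul (by linarith : (0:ℝ) ≤ M), mul_one_div]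
          _ ≤ (ENNReal.ofReal M) ^ a * ENNReal.ofReal (1/2) := by
              exact mul_le_mul_left (ENNReal.le_rpow_self_of_one_le
                (by simpa using ENNReal.ofReal_le_ofReal hM1) ha1) _
          _ ≤ ∫⁻ x in Ioc (0:ℝ) (1/2), (f k x) ^ a := h2 ▸ h1
          _ = ENNReal.ofReal C₂ := hvol k
      have : C₂ < M/2 := by linarith
      exact absurd h3 (not_le.2 ((ENNReal.ofReal_lt_ofReal_iff (by linarith)).2 this))
    have hε0 : 0 ≤ sInf E := le_csInf hEne fun r hr => hr.1.1
    have hsmall : ∀ x ∈ Ioc (sInf E) (1/2), f k x ≤ ENNReal.ofReal M := by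
      intro x hx
      obtain ⟨r, hrE, hrx⟩ := exists_lt_of_csInf_lt hEne hx.1
      exact le_trans (hmono k hrE.1 ⟨le_trans hε0 hx.1.le, hx.2⟩ hrx.le) hrE.2.le
    calc ∫⁻ x in Ioc (0:ℝ) (1/2), ((f k x) ^ a - (ENNReal.ofReal M) ^ a)
        ≤ ∫⁻ x in Ioc (0:ℝ) (sInf E) ∪ Ioc (sInf E) (1/2),
            ((f k x) ^ a - (ENNReal.ofReal M) ^ a) := by
          refine lintegral_mono_set fun x hx => ?_
          rcases le_or_gt x (sInf E) with h | h
          · exact Or.inl ⟨hx.1, h⟩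
          · exact Or.inr ⟨h, hx.2⟩
      _ ≤ (∫⁻ x in Ioc (0:ℝ) (sInf E), ((f k x) ^ a - (ENNReal.ofReal M) ^ a))
            + ∫⁻ x in Ioc (sInf E) (1/2), ((f k x) ^ a - (ENNReal.ofReal M) ^ a) :=
          lintegral_union_le _ _ _
      _ ≤ (∫⁻ x in Ioc (0:ℝ) (sInf E), (f k x) ^ a) + 0 := by
          refine add_le_add (lintegral_mono fun x => tsub_le_self) ?_
          have h0 : ∫⁻ x in Ioc (sInf E) (1/2), ((f k x) ^ a - (ENNReal.ofReal M) ^ a)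
              ≤ ∫⁻ _x in Ioc (sInf E) (1/2), (0:ℝ≥0∞) := by
            refine lintegral_mono_ae ((ae_restrict_iff' measurableSet_Ioc).2
              (Filter.Eventually.of_forall fun x hx => ?_))
            simp [tsub_eq_zero_of_le (ENNReal.rpow_le_rpow (hsmall x hx) ha0)]
          simpa using h0
      _ ≤ ENNReal.ofReal (Cstar * M ^ (-(s * a))) := by
          rw [hEdef, add_zero]; exact hbound M hMC k
  -- Fatou tail bound for the limit function
  have hGtail : ∀ M : ℝ, M₀ ≤ M →
      ∫⁻ x in Ioc (0:ℝ) (1/2), ((flim x) ^ a - (ENNReal.ofReal M) ^ a)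
        ≤ ENNReal.ofReal (Cstar * M ^ (-(s * a))) := by
    intro M hM
    have hLne : (ENNReal.ofReal M) ^ a ≠ ∞ :=
      ENNReal.rpow_ne_top_of_nonneg ha0 ENNReal.ofReal_ne_top
    have hcongr : ∀ᵐ x ∂(volume.restrict (Ioc (0:ℝ) (1/2))),
        (flim x) ^ a - (ENNReal.ofReal M) ^ a
          = Filter.liminf (fun k => (f k x) ^ a - (ENNReal.ofReal M) ^ a) Filter.atTop :=
      htendsto.mono fun x hx =>
        ((ENNReal.Tendsto.sub hx tendsto_const_nhds (Or.inr hLne)).liminf_eq).symm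
    calc ∫⁻ x in Ioc (0:ℝ) (1/2), ((flim x) ^ a - (ENNReal.ofReal M) ^ a)
        = ∫⁻ x in Ioc (0:ℝ) (1/2),
            Filter.liminf (fun k => (f k x) ^ a - (ENNReal.ofReal M) ^ a) Filter.atTop :=
          lintegral_congr_ae hcongr
      _ ≤ Filter.liminf
            (fun k => ∫⁻ x in Ioc (0:ℝ) (1/2), ((f k x) ^ a - (ENNReal.ofReal M) ^ a))
            Filter.atTop :=
          lintegral_liminf_le' fun k => (gmeas k).sub aemeasurable_const
      _ ≤ Filter.liminf (fun _ => ENNReal.ofReal (Cstar * M ^ (-(s * a)))) Filter.atTop :=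
          Filter.liminf_le_liminf (Filter.Eventually.of_forall fun k => htail M hM k)
      _ = ENNReal.ofReal (Cstar * M ^ (-(s * a))) := Filter.liminf_const _
  -- dominated convergence at every finite truncation level
  have hDom : ∀ L : ℝ≥0∞, L ≠ ∞ → Filter.Tendsto
      (fun k => ∫⁻ x in Ioc (0:ℝ) (1/2),
        (((f k x) ^ a ⊓ L - (flim x) ^ a ⊓ L) + ((flim x) ^ a ⊓ L - (f k x) ^ a ⊓ L)))
      Filter.atTop (nhds 0) := by
    intro L hLne
    have key := tendsto_lintegral_of_dominated_convergence'
      (μ := volume.restrict (Ioc (0:ℝ) (1/2)))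
      (F := fun k x => ((f k x) ^ a ⊓ L - (flim x) ^ a ⊓ L)
        + ((flim x) ^ a ⊓ L - (f k x) ^ a ⊓ L))
      (f := fun _ => (0:ℝ≥0∞)) (bound := fun _ => L + L)
      (fun k => (((gmeas k).min aemeasurable_const).sub (Gmeas.min aemeasurable_const)).add
        ((Gmeas.min aemeasurable_const).sub ((gmeas k).min aemeasurable_const)))
      (fun k => Filter.Eventually.of_forall fun x =>
        add_le_add (tsub_le_self.trans inf_le_right) (tsub_le_self.trans inf_le_right))
      (by
        rw [lintegral_const]
        exact ENNReal.mul_ne_top (ENNReal.add_ne_top.2 ⟨hLne, hLne⟩)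
          (by simp [Real.volume_Ioc]))
      (htendsto.mono fun x hx => by
        have hBne : (flim x) ^ a ⊓ L ≠ ∞ := ne_top_of_le_ne_top hLne inf_le_right
        have hA : Filter.Tendsto (fun k => (f k x) ^ a ⊓ L) Filter.atTop
            (nhds ((flim x) ^ a ⊓ L)) := hx.min tendsto_const_nhds
        have h1 : Filter.Tendsto
            (fun k => (f k x) ^ a ⊓ L - (flim x) ^ a ⊓ L) Filter.atTop (nhds 0) := by
          simpa using ENNReal.Tendsto.sub hA tendsto_const_nhds (Or.inr hBne)
        have h2 : Filter.Tendsto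
            (fun k => (flim x) ^ a ⊓ L - (f k x) ^ a ⊓ L) Filter.atTop (nhds 0) := by
          simpa using ENNReal.Tendsto.sub (tendsto_const_nhds (x := (flim x) ^ a ⊓ L)) hA
            (Or.inr hBne)
        simpa using h1.add h2)
    simpa using key
  -- main convergence statement
  have hmain : Filter.Tendsto
      (fun k => ∫⁻ x in Ioc (0:ℝ) (1/2),
        (((f k x) ^ a - (flim x) ^ a) + ((flim x) ^ a - (f k x) ^ a)))
      Filter.atTop (nhds 0) := by
    rw [ENNReal.tendsto_nhds_zero]
    intro ε hε
    have hq : (0:ℝ≥0∞) < ε/2/2 := ENNReal.half_pos (ENNReal.half_pos hε.ne').ne'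
    have hmlt : min (ε/2/2) 1 ≠ ∞ := ne_top_of_le_ne_top ENNReal.one_ne_top (min_le_right _ _)
    set c : ℝ := (min (ε/2/2) 1).toReal with hcdef
    have hcpos : 0 < c := ENNReal.toReal_pos (lt_min hq zero_lt_one).ne' hmlt
    have hcle : ENNReal.ofReal c ≤ ε/2/2 := by
      rw [hcdef, ENNReal.ofReal_toReal hmlt]; exact min_le_left _ _
    have hsa : 0 < s * a := mul_pos hs.1 (by linarith)
    have htend : Filter.Tendsto (fun M : ℝ => Cstar * M ^ (-(s*a))) Filter.atTop (nhds 0) := by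
      simpa using (tendsto_rpow_neg_atTop hsa).const_mul Cstar
    obtain ⟨M, hMc, hMM₀⟩ : ∃ M : ℝ, Cstar * M ^ (-(s*a)) ≤ c ∧ M₀ ≤ M :=
      (((htend.eventually_lt_const hcpos).mono fun _ h => h.le).and
        (Filter.eventually_ge_atTop M₀)).exists
    have hδ : ENNReal.ofReal (Cstar * M ^ (-(s*a))) ≤ ε/2/2 :=
      le_trans (ENNReal.ofReal_le_ofReal hMc) hcle
    have hLne : (ENNReal.ofReal M) ^ a ≠ ∞ :=
      ENNReal.rpow_ne_top_of_nonneg ha0 ENNReal.ofReal_ne_top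
    have hDk := (ENNReal.tendsto_nhds_zero.mp (hDom _ hLne)) (ε/2)
      (ENNReal.half_pos hε.ne')
    filter_upwards [hDk] with k hk
    have measD : AEMeasurable (fun x =>
        ((f k x) ^ a ⊓ (ENNReal.ofReal M) ^ a - (flim x) ^ a ⊓ (ENNReal.ofReal M) ^ a)
          + ((flim x) ^ a ⊓ (ENNReal.ofReal M) ^ a - (f k x) ^ a ⊓ (ENNReal.ofReal M) ^ a))
        (volume.restrict (Ioc (0:ℝ) (1/2))) :=
      (((gmeas k).min aemeasurable_const).sub (Gmeas.min aemeasurable_const)).add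
        ((Gmeas.min aemeasurable_const).sub ((gmeas k).min aemeasurable_const))
    have measT : AEMeasurable (fun x => (f k x) ^ a - (ENNReal.ofReal M) ^ a)
        (volume.restrict (Ioc (0:ℝ) (1/2))) := (gmeas k).sub aemeasurable_const
    calc ∫⁻ x in Ioc (0:ℝ) (1/2),
          (((f k x) ^ a - (flim x) ^ a) + ((flim x) ^ a - (f k x) ^ a))
        ≤ ∫⁻ x in Ioc (0:ℝ) (1/2),
            ((((f k x) ^ a ⊓ (ENNReal.ofReal M) ^ a - (flim x) ^ a ⊓ (ENNReal.ofReal M) ^ a)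
              + ((flim x) ^ a ⊓ (ENNReal.ofReal M) ^ a - (f k x) ^ a ⊓ (ENNReal.ofReal M) ^ a))
            + (((f k x) ^ a - (ENNReal.ofReal M) ^ a)
              + ((flim x) ^ a - (ENNReal.ofReal M) ^ a))) :=
          lintegral_mono fun x => key_dist _ _ _
      _ = (∫⁻ x in Ioc (0:ℝ) (1/2),
            (((f k x) ^ a ⊓ (ENNReal.ofReal M) ^ a - (flim x) ^ a ⊓ (ENNReal.ofReal M) ^ a)
              + ((flim x) ^ a ⊓ (ENNReal.ofReal M) ^ a - (f k x) ^ a ⊓ (ENNReal.ofReal M) ^ a)))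
          + ∫⁻ x in Ioc (0:ℝ) (1/2),
            (((f k x) ^ a - (ENNReal.ofReal M) ^ a)
              + ((flim x) ^ a - (ENNReal.ofReal M) ^ a)) :=
          lintegral_add_left' measD _
      _ = (∫⁻ x in Ioc (0:ℝ) (1/2),
            (((f k x) ^ a ⊓ (ENNReal.ofReal M) ^ a - (flim x) ^ a ⊓ (ENNReal.ofReal M) ^ a)
              + ((flim x) ^ a ⊓ (ENNReal.ofReal M) ^ a - (f k x) ^ a ⊓ (ENNReal.ofReal M) ^ a)))
          + ((∫⁻ x in Ioc (0:ℝ) (1/2), ((f k x) ^ a - (ENNReal.ofReal M) ^ a))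
            + ∫⁻ x in Ioc (0:ℝ) (1/2), ((flim x) ^ a - (ENNReal.ofReal M) ^ a)) := by
          rw [lintegral_add_left' measT]
      _ ≤ ε/2 + (ε/2/2 + ε/2/2) :=
          add_le_add hk (add_le_add ((htail M hMM₀ k).trans hδ) ((hGtail M hMM₀).trans hδ))
      _ = ε := by rw [ENNReal.add_halves, ENNReal.add_halves]
  refine ⟨hmain, le_antisymm ?_ ?_⟩
  · -- Fatou gives ≤
    have hcongr : ∀ᵐ x ∂(volume.restrict (Ioc (0:ℝ) (1/2))),
        (flim x) ^ a = Filter.liminf (fun k => (f k x) ^ a) Filter.atTop :=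
      htendsto.mono fun x hx => hx.liminf_eq.symm
    calc ∫⁻ x in Ioc (0:ℝ) (1/2), (flim x) ^ a
        = ∫⁻ x in Ioc (0:ℝ) (1/2), Filter.liminf (fun k => (f k x) ^ a) Filter.atTop :=
          lintegral_congr_ae hcongr
      _ ≤ Filter.liminf (fun k => ∫⁻ x in Ioc (0:ℝ) (1/2), (f k x) ^ a) Filter.atTop :=
          lintegral_liminf_le' gmeas
      _ = ENNReal.ofReal C₂ := by
          simp only [hvol, Filter.liminf_const]
  · -- reverse inequality
    have hIk : ∀ k, ENNReal.ofReal C₂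
        ≤ (∫⁻ x in Ioc (0:ℝ) (1/2), (flim x) ^ a)
          + ∫⁻ x in Ioc (0:ℝ) (1/2),
              (((f k x) ^ a - (flim x) ^ a) + ((flim x) ^ a - (f k x) ^ a)) := by
      intro k
      calc ENNReal.ofReal C₂ = ∫⁻ x in Ioc (0:ℝ) (1/2), (f k x) ^ a := (hvol k).symm
        _ ≤ ∫⁻ x in Ioc (0:ℝ) (1/2), ((flim x) ^ a
              + (((f k x) ^ a - (flim x) ^ a) + ((flim x) ^ a - (f k x) ^ a))) := by
            refine lintegral_mono fun x => ?_
            calc (f k x) ^ a ≤ (flim x) ^ a + ((f k x) ^ a - (flim x) ^ a) := le_add_tsub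
              _ ≤ (flim x) ^ a
                  + (((f k x) ^ a - (flim x) ^ a) + ((flim x) ^ a - (f k x) ^ a)) :=
                add_le_add_right le_self_add _
        _ = (∫⁻ x in Ioc (0:ℝ) (1/2), (flim x) ^ a)
              + ∫⁻ x in Ioc (0:ℝ) (1/2),
                  (((f k x) ^ a - (flim x) ^ a) + ((flim x) ^ a - (f k x) ^ a)) :=
            lintegral_add_left' Gmeas _
    have hT : Filter.Tendsto (fun k => (∫⁻ x in Ioc (0:ℝ) (1/2), (flim x) ^ a)
        + ∫⁻ x in Ioc (0:ℝ) (1/2),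
            (((f k x) ^ a - (flim x) ^ a) + ((flim x) ^ a - (f k x) ^ a)))
        Filter.atTop (nhds (∫⁻ x in Ioc (0:ℝ) (1/2), (flim x) ^ a)) := by
      have := Filter.Tendsto.const_add (∫⁻ x in Ioc (0:ℝ) (1/2), (flim x) ^ a) hmain
      simpa using this
    exact ge_of_tendsto' hT hIk
end
end
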